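/- arXiv:2410.00530 — 13 statements merged into one kernel-verified Lean document; each statement's English description precedes it below -/
import Mathlib

section
/- Let X be a metric space and u : X → ℝ be lower semicontinuous. Then the global slope G[u] : X → [0, +∞] is lower semicontinuous. -/
open Filter Topology ENNReal

/-- The global slope of a real-valued function `u` on a metric space:
`G[u](x) = sup_{y ≠ x} (u x - u y)⁺ / d(x,y)`, with values in `[0, ∞]`. -/
noncomputable def gslope {X : Type*} [MetricSpace X] (u : X → ℝ) (x : X) : ℝ≥0∞ :=
  ⨆ (y : X) (_ : y ≠ x), ENNReal.ofReal ((u x - u y) / dist x y)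

/-- The global slope of a lower semicontinuous real-valued function is lower semicontinuous
as a function with values in `[0, ∞]`. -/
theorem lowerSemicontinuous_gslope {X : Type*} [MetricSpace X]
    (u : X → ℝ) (hu : LowerSemicontinuous u) :
    LowerSemicontinuous (gslope u) := by
  intro x c hc
  rw [gslope, gt_iff_lt, lt_iSup_iff] at hc
  obtain ⟨y, hy⟩ := hc
  rw [lt_iSup_iff] at hy
  obtain ⟨hyx, hc⟩ := hy
  have hd : 0 < dist x y := dist_pos.2 (Ne.symm hyx)
  have hcT : c ≠ ⊤ := ne_top_of_lt hc
  set r : ℝ := (u x - u y) / dist x y with hr_def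
  have hr : c.toReal < r := (ENNReal.lt_ofReal_iff_toReal_lt hcT).1 hc
  obtain ⟨t, ht1, ht2⟩ := exists_between hr
  have hδ : 0 < (r - t) * dist x y := mul_pos (by linarith) hd
  set δ : ℝ := (r - t) * dist x y with hδ_def
  have hrd : r * dist x y = u x - u y := div_mul_cancel₀ _ hd.ne'
  have hA : ∀ᶠ z in 𝓝 x, u x - δ / 2 < u z := hu x (u x - δ / 2) (by linarith)
  have hdist : Filter.Tendsto (fun z => dist z y) (𝓝 x) (𝓝 (dist x y)) :=
    (Continuous.dist continuous_id continuous_const).tendsto x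
  have hB : ∀ᶠ z in 𝓝 x, t * dist z y < t * dist x y + δ / 2 :=
    (hdist.const_mul t).eventually_lt_const (by linarith)
  have hC : ∀ᶠ z in 𝓝 x, 0 < dist z y := hdist.eventually_const_lt hd
  filter_upwards [hA, hB, hC] with z hAz hBz hCz
  have hzy : y ≠ z := (dist_pos.1 hCz).symm
  have hnum : t * dist z y < u z - u y := by nlinarith [hδ_def, hrd]
  have ht' : t < (u z - u y) / dist z y := (lt_div_iff₀ hCz).2 hnum
  have : c < ENNReal.ofReal ((u z - u y) / dist z y) :=
    (ENNReal.lt_ofReal_iff_toReal_lt hcT).2 (ht1.trans ht')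
  exact this.trans_le (le_iSup₂ (f := fun y (_ : y ≠ z) =>
    ENNReal.ofReal ((u z - u y) / dist z y)) y hzy)
end

section
/- Let X be a complete metric space and u : X → ℝ be a lower semicontinuous function bounded from below. Then inf_{x ∈ X} G[u](x) = 0. -/
open Filter Topology ENNReal

lemma ekeland_aux {X : Type*} [MetricSpace X] [CompleteSpace X] [Nonempty X]
    (u : X → ℝ) (hu : LowerSemicontinuous u) (hb : BddBelow (Set.range u))
    {ε : ℝ} (hε : 0 < ε) : ∃ x, ∀ y, u x - u y ≤ ε * dist x y := by
  by_contra hcon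
  push_neg at hcon
  -- hcon : ∀ x, ∃ y, ε * dist x y < u x - u y
  obtain ⟨m, hm⟩ := hb
  have hmb : ∀ z, m ≤ u z := fun z => hm ⟨z, rfl⟩
  set S : X → Set X := fun x => {y | u y + ε * dist x y < u x} with hS
  have hSne : ∀ x, (S x).Nonempty := by
    intro x
    obtain ⟨y, hy⟩ := hcon x
    exact ⟨y, by simp only [hS, Set.mem_setOf_eq]; linarith⟩
  have hSbdd : ∀ x, BddBelow (u '' S x) := fun x =>
    ⟨m, fun z ⟨y, _, hy⟩ => hy ▸ hmb y⟩
  have key : ∀ (n : ℕ) (x : X), ∃ y, (u y + ε * dist x y < u x) ∧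
      u y < sInf (u '' S x) + (1/2 : ℝ)^n := by
    intro n x
    have hpos : (0:ℝ) < (1/2:ℝ)^n := by positivity
    have : sInf (u '' S x) < sInf (u '' S x) + (1/2:ℝ)^n := by linarith
    obtain ⟨z, ⟨y, hyS, rfl⟩, hz⟩ :=
      (csInf_lt_iff (hSbdd x) ((hSne x).image u)).1 this
    exact ⟨y, hyS, hz⟩
  choose f hf1 hf2 using key
  set x : ℕ → X := fun n => Nat.rec (Classical.arbitrary X) (fun n xn => f n xn) n with hx
  have hxsucc : ∀ n, x (n+1) = f n (x n) := fun n => rfl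
  have A : ∀ n, u (x (n+1)) + ε * dist (x n) (x (n+1)) < u (x n) := by
    intro n; rw [hxsucc]; exact hf1 n (x n)
  have B : ∀ n, u (x (n+1)) < sInf (u '' S (x n)) + (1/2:ℝ)^n := by
    intro n; rw [hxsucc]; exact hf2 n (x n)
  have hanti : ∀ n, u (x (n+1)) ≤ u (x n) := by
    intro n
    have := A n
    have := dist_nonneg (x := x n) (y := x (n+1))
    nlinarith
  have hanti' : Antitone fun n => u (x n) :=
    antitone_nat_of_succ_le hanti
  -- partial sums of dist bounded
  have hsum : ∀ n, ∑ i ∈ Finset.range n, dist (x i) (x (i+1)) ≤ (u (x 0) - m) / ε := by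
    intro n
    rw [le_div_iff₀ hε]
    have : ε * ∑ i ∈ Finset.range n, dist (x i) (x (i+1)) ≤ u (x 0) - u (x n) := by
      induction n with
      | zero => simp
      | succ k ih =>
        rw [Finset.sum_range_succ, mul_add]
        have := A k
        linarith
    have := hmb (x n)
    linarith [this]
  have hsummable : Summable (fun i => dist (x i) (x (i+1))) :=
    summable_of_sum_range_le (fun i => dist_nonneg) hsum
  have hcauchy : CauchySeq x := cauchySeq_of_summable_dist hsummable
  obtain ⟨xs, hxs⟩ := cauchySeq_tendsto_of_complete hcauchy
  set L : ℝ := ⨅ n, u (x n) with hL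
  have hbdd : BddBelow (Set.range fun n => u (x n)) :=
    ⟨m, fun z ⟨n, hn⟩ => hn ▸ hmb (x n)⟩
  have hLtend : Tendsto (fun n => u (x n)) atTop (𝓝 L) :=
    tendsto_atTop_ciInf hanti' hbdd
  have hLle : ∀ n, L ≤ u (x n) := fun n => ciInf_le hbdd n
  -- lsc : u xs ≤ L
  have hlsc : u xs ≤ L := by
    by_contra hlt
    push_neg at hlt
    obtain ⟨c, hc1, hc2⟩ := exists_between hlt
    have hev : ∀ᶠ y in 𝓝 xs, c < u y := hu xs c hc2
    have hev2 : ∀ᶠ n in atTop, c < u (x n) := hxs.eventually hev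
    have hev3 : ∀ᶠ n in atTop, u (x n) < c :=
      hLtend.eventually_lt_const hc1 |>.mono (fun n h => h)
    obtain ⟨n, h1, h2⟩ := (hev2.and hev3).exists
    linarith
  -- C : u xs + ε * dist (x n) xs ≤ u (x n)
  have tele : ∀ n k, u (x (n+k)) + ε * dist (x n) (x (n+k)) ≤ u (x n) := by
    intro n k
    induction k with
    | zero => simp
    | succ j ih =>
      have hA := A (n+j)
      have htri : dist (x n) (x (n+j+1)) ≤ dist (x n) (x (n+j)) + dist (x (n+j)) (x (n+j+1)) :=
        dist_triangle _ _ _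
    -- combine
      have : ε * dist (x n) (x (n+j+1)) ≤ ε * dist (x n) (x (n+j)) + ε * dist (x (n+j)) (x (n+j+1)) := by
        rw [← mul_add]; exact mul_le_mul_of_nonneg_left htri hε.le
      calc u (x (n+(j+1))) + ε * dist (x n) (x (n+(j+1)))
          ≤ u (x (n+j+1)) + (ε * dist (x n) (x (n+j)) + ε * dist (x (n+j)) (x (n+j+1))) := by
            have : n + (j+1) = n + j + 1 := by ring
            rw [this]; linarith
        _ ≤ u (x (n+j)) + ε * dist (x n) (x (n+j)) := by linarith
        _ ≤ u (x n) := ih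
  have C : ∀ n, u xs + ε * dist (x n) xs ≤ u (x n) := by
    intro n
    have hshiftN : Tendsto (fun k => n + k) atTop atTop := by
      simpa [Nat.add_comm] using tendsto_add_atTop_nat n
    have hshift : Tendsto (fun k => x (n + k)) atTop (𝓝 xs) := hxs.comp hshiftN
    have hdt : Tendsto (fun k => dist (x n) (x (n+k))) atTop (𝓝 (dist (x n) xs)) :=
      ((continuous_const.dist continuous_id).tendsto xs).comp hshift
    have htend : Tendsto (fun k => u (x (n+k)) + ε * dist (x n) (x (n+k))) atTop
        (𝓝 (L + ε * dist (x n) xs)) :=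
      (hLtend.comp hshiftN).add (hdt.const_mul ε)
    have hle : L + ε * dist (x n) xs ≤ u (x n) :=
      le_of_tendsto htend (Filter.Eventually.of_forall (tele n))
    nlinarith [dist_nonneg (x := x n) (y := xs), hlsc]
  -- final contradiction
  obtain ⟨y, hy⟩ := hcon xs
  have hyS : u y + ε * dist xs y < u xs := by linarith
  have hySn : ∀ n, y ∈ S (x n) := by
    intro n
    simp only [hS, Set.mem_setOf_eq]
    have htri : dist (x n) y ≤ dist (x n) xs + dist xs y := dist_triangle _ _ _
    have := C n
    nlinarith
  have hinf : ∀ n, sInf (u '' S (x n)) ≤ u y := fun n =>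
    csInf_le (hSbdd (x n)) ⟨y, hySn n, rfl⟩
  have hBn : ∀ n, u (x (n+1)) ≤ u y + (1/2:ℝ)^n := by
    intro n
    have := B n
    have := hinf n
    linarith
  have hLy : L ≤ u y := by
    have h1 : Tendsto (fun n => u (x (n+1))) atTop (𝓝 L) :=
      hLtend.comp (tendsto_add_atTop_nat 1)
    have h2 : Tendsto (fun n => u y + (1/2:ℝ)^n) atTop (𝓝 (u y + 0)) := by
      apply Tendsto.add tendsto_const_nhds
      exact tendsto_pow_atTop_nhds_zero_of_lt_one (by norm_num) (by norm_num)
    rw [add_zero] at h2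
    exact le_of_tendsto_of_tendsto h1 h2 (Filter.Eventually.of_forall hBn)
  have hd : (0:ℝ) ≤ ε * dist xs y := by positivity
  linarith

/-- On a complete (nonempty) metric space, a lower semicontinuous function bounded from below
has `inf_X G[u] = 0`. -/
theorem iInf_gslope_eq_zero {X : Type*} [MetricSpace X] [CompleteSpace X] [Nonempty X]
    (u : X → ℝ) (hu : LowerSemicontinuous u) (hb : BddBelow (Set.range u)) :
    ⨅ x, gslope u x = 0 := by
  refine le_antisymm ?_ zero_le
  refine ENNReal.le_of_forall_pos_le_add (fun ε hε _ => ?_)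
  rw [zero_add]
  obtain ⟨x, hx⟩ := ekeland_aux u hu hb (show (0:ℝ) < ε from hε)
  refine le_trans (iInf_le _ x) ?_
  rw [gslope]
  refine iSup₂_le fun y hy => ?_
  have hd : 0 < dist x y := dist_pos.2 (fun h => hy h.symm)
  calc ENNReal.ofReal ((u x - u y) / dist x y) ≤ ENNReal.ofReal ε := by
        apply ENNReal.ofReal_le_ofReal
        rw [div_le_iff₀ hd]
        linarith [hx y]
    _ = (ε : ℝ≥0∞) := ENNReal.ofReal_coe_nnreal
end

section
/- Let X be a complete metric space and u : X → ℝ ∪ {+∞} a proper lsc function bounded from below. Then there exists a sequence (z_n) in X with lim_{n→∞} G[u](z_n) = 0 and ∑_{n=0}^∞ G[u](z_n) · d(z_n, z_{n+1}) < +∞. -/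
open Filter Topology ENNReal

/-- The global slope of a function `u : X → ℝ ∪ {+∞}` (encoded as `X → EReal`):
`G[u](x) = sup_{y ≠ x} (u x - u y)⁺ / d(x,y)` when `u x < +∞`, and `+∞` when `u x = +∞`.
(It is meant to be used for functions that never take the value `⊥`.) -/
noncomputable def gslopeE {X : Type*} [MetricSpace X] (u : X → EReal) (x : X) : ℝ≥0∞ :=
  if u x = ⊤ then ⊤
  else ⨆ (y : X) (_ : y ≠ x), ENNReal.ofReal ((u x - u y).toReal / dist x y)

lemma ekelandE {X : Type*} [MetricSpace X] [CompleteSpace X] (u : X → EReal)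
    (hlsc : LowerSemicontinuous u) (m : ℝ) (hbdd : ∀ x, (m : EReal) ≤ u x)
    (s : ℝ) (hs : 0 < s) (x₀ : X) (hx₀ : u x₀ ≠ ⊤) :
    ∃ z : X, u z ≠ ⊤ ∧ u z + ((s * dist x₀ z : ℝ) : EReal) ≤ u x₀ ∧
      ∀ y : X, u z ≤ u y + ((s * dist z y : ℝ) : EReal) := by
  have hnb : ∀ x, u x ≠ ⊥ := fun x => ne_bot_of_le_ne_bot (by simp) (hbdd x)
  -- ε-minimizer step
  have key : ∀ (ε : ℝ), 0 < ε → ∀ a : X, u a ≠ ⊤ → ∃ b : X,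
      (u b + ((s * dist a b : ℝ) : EReal) ≤ u a) ∧ u b ≠ ⊤ ∧
      ∀ y : X, u y + ((s * dist a y : ℝ) : EReal) ≤ u a → u b ≤ u y + (ε : EReal) := by
    intro ε hε a ha
    set A : Set EReal := u '' {y | u y + ((s * dist a y : ℝ) : EReal) ≤ u a} with hA
    have haA : u a ∈ A := ⟨a, by simp, rfl⟩
    have hInf_le : sInf A ≤ u a := sInf_le haA
    have hInf_ge : (m : EReal) ≤ sInf A := le_sInf (by rintro v ⟨y, -, rfl⟩; exact hbdd y)
    have hInf_ne_top : sInf A ≠ ⊤ := fun h => ha (top_le_iff.1 (h ▸ hInf_le))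
    have hInf_ne_bot : sInf A ≠ ⊥ := ne_bot_of_le_ne_bot (by simp) hInf_ge
    have hlt : sInf A < sInf A + (ε : EReal) := by
      rw [← EReal.coe_toReal hInf_ne_top hInf_ne_bot, ← EReal.coe_add]
      exact_mod_cast lt_add_of_pos_right _ hε
    obtain ⟨v, hvA, hvlt⟩ := sInf_lt_iff.1 hlt
    obtain ⟨b, hbS, rfl⟩ := hvA
    refine ⟨b, hbS, ?_, fun y hy => ?_⟩
    · intro h
      rw [h] at hvlt
      have : sInf A + (ε : EReal) ≠ ⊤ := by
        rw [← EReal.coe_toReal hInf_ne_top hInf_ne_bot, ← EReal.coe_add]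
        exact EReal.coe_ne_top _
      exact this (top_le_iff.1 hvlt.le)
    · exact hvlt.le.trans (add_le_add_left (sInf_le (Set.mem_image_of_mem u (show y ∈ {y | u y + ((s * dist a y : ℝ) : EReal) ≤ u a} from hy))) (ε : EReal))
  choose g hg using fun k : ℕ => key ((1/2) ^ k) (by positivity)
  -- the chain
  let x : ℕ → {a : X // u a ≠ ⊤} := fun n =>
    Nat.rec (motive := fun _ => {a : X // u a ≠ ⊤}) ⟨x₀, hx₀⟩ (fun k p => ⟨g k p.1 p.2, (hg k p.1 p.2).2.1⟩) n
  have hx0 : (x 0).1 = x₀ := rfl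
  have hstep : ∀ k,
      (u (x (k+1)).1 + ((s * dist (x k).1 (x (k+1)).1 : ℝ) : EReal) ≤ u (x k).1) ∧
      ∀ y : X, u y + ((s * dist (x k).1 y : ℝ) : EReal) ≤ u (x k).1 →
        u (x (k+1)).1 ≤ u y + (((1/2) ^ k : ℝ) : EReal) := by
    intro k
    exact ⟨(hg k (x k).1 (x k).2).1, fun y hy => (hg k (x k).1 (x k).2).2.2 y hy⟩
  set r : ℕ → ℝ := fun k => (u (x k).1).toReal with hr
  have hur : ∀ k, u (x k).1 = ((r k : ℝ) : EReal) := fun k =>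
    (EReal.coe_toReal (x k).2 (hnb _)).symm
  have hrm : ∀ k, m ≤ r k := by
    intro k; have := hbdd (x k).1; rw [hur k] at this; exact_mod_cast this
  have hdesc : ∀ k, r (k+1) + s * dist (x k).1 (x (k+1)).1 ≤ r k := by
    intro k
    have := (hstep k).1
    rw [hur k, hur (k+1), ← EReal.coe_add] at this
    exact_mod_cast this
  have hmono : ∀ k, r (k+1) ≤ r k := fun k =>
    le_trans (le_add_of_nonneg_right (by positivity)) (hdesc k)
  have hant : Antitone r := antitone_nat_of_succ_le hmono
  -- transitivity along the chain (in ℝ)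
  have htrans : ∀ k j, r (k+j) + s * dist (x k).1 (x (k+j)).1 ≤ r k := by
    intro k j
    induction j with
    | zero => simp
    | succ j ih =>
      have htri : dist (x k).1 (x (k+j+1)).1 ≤
          dist (x k).1 (x (k+j)).1 + dist (x (k+j)).1 (x (k+j+1)).1 := dist_triangle _ _ _
      have h1 := hdesc (k+j)
      show r (k+j+1) + s * dist (x k).1 (x (k+j+1)).1 ≤ r k
      nlinarith [mul_le_mul_of_nonneg_left htri hs.le]
  -- Cauchy
  have hsum : ∀ N, ∑ i ∈ Finset.range N, dist (x i).1 (x (i+1)).1 ≤ (r 0 - m) / s := by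
    intro N
    have : ∀ i, dist (x i).1 (x (i+1)).1 ≤ (r i - r (i+1)) / s := by
      intro i
      rw [le_div_iff₀ hs]
      have := hdesc i; nlinarith
    calc ∑ i ∈ Finset.range N, dist (x i).1 (x (i+1)).1
        ≤ ∑ i ∈ Finset.range N, (r i - r (i+1)) / s :=
          Finset.sum_le_sum fun i _ => this i
      _ = (r 0 - r N) / s := by rw [← Finset.sum_div, Finset.sum_range_sub']
      _ ≤ (r 0 - m) / s := by
          have := hrm N
          gcongr
  have hcauchy : CauchySeq (fun k => (x k).1) := by
    apply cauchySeq_of_summable_dist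
    apply summable_of_sum_range_le (fun i => dist_nonneg) hsum
  obtain ⟨z, hz⟩ := cauchySeq_tendsto_of_complete hcauchy
  -- limit of r
  have hrbdd : BddBelow (Set.range r) := ⟨m, by rintro v ⟨k, rfl⟩; exact hrm k⟩
  set L : ℝ := ⨅ k, r k with hL
  have hrL : Tendsto r atTop (𝓝 L) := tendsto_atTop_ciInf hant hrbdd
  have hLle : ∀ k, L ≤ r k := fun k => ciInf_le hrbdd k
  -- u z ≤ L
  have huzL : u z ≤ ((L : ℝ) : EReal) := by
    by_contra h
    push_neg at h
    obtain ⟨c, hLc, hcz⟩ := EReal.exists_between_coe_real h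
    have hev : ∀ᶠ k in atTop, (c : EReal) < u (x k).1 :=
      hz.eventually (hlsc z c hcz)
    have : c ≤ L := by
      apply ge_of_tendsto hrL
      filter_upwards [hev] with k hk
      rw [hur k] at hk
      exact_mod_cast hk.le
    exact absurd hLc (by exact_mod_cast this.not_gt)
  -- B: L + s d(x k, z) ≤ r k
  have hB : ∀ k, L + s * dist (x k).1 z ≤ r k := by
    intro k
    have hlim : Tendsto (fun j => r (k+j) + s * dist (x k).1 (x (k+j)).1) atTop
        (𝓝 (L + s * dist (x k).1 z)) := by
      have hk1 : Tendsto (fun j => r (k + j)) atTop (𝓝 L) := by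
        simpa [Nat.add_comm, Function.comp_def] using hrL.comp (tendsto_add_atTop_nat k)
      have hk2 : Tendsto (fun j => ((x (k + j)).1 : X)) atTop (𝓝 z) := by
        simpa [Nat.add_comm, Function.comp_def] using hz.comp (tendsto_add_atTop_nat k)
      exact hk1.add ((tendsto_const_nhds.dist hk2).const_mul s)
    exact le_of_tendsto hlim (Eventually.of_forall fun j => htrans k j)
  have hzB : ∀ k, u z + ((s * dist (x k).1 z : ℝ) : EReal) ≤ u (x k).1 := by
    intro k
    calc u z + ((s * dist (x k).1 z : ℝ) : EReal)
        ≤ ((L : ℝ) : EReal) + ((s * dist (x k).1 z : ℝ) : EReal) := add_le_add_left huzL _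
      _ = (((L + s * dist (x k).1 z : ℝ)) : EReal) := by rw [EReal.coe_add]
      _ ≤ ((r k : ℝ) : EReal) := by exact_mod_cast hB k
      _ = u (x k).1 := (hur k).symm
  have huz_ne_top : u z ≠ ⊤ := fun h => by
    rw [h] at huzL; exact (EReal.coe_ne_top L) (top_le_iff.1 huzL)
  refine ⟨z, huz_ne_top, by simpa [hx0] using hzB 0, ?_⟩
  -- minimality
  intro y
  by_contra hcon
  push_neg at hcon
  have huy_ne_top : u y ≠ ⊤ := by
    intro h
    rw [h, EReal.top_add_of_ne_bot (EReal.coe_ne_bot _)] at hcon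
    exact (not_top_lt) hcon
  set ρ : ℝ := (u y).toReal with hρ
  have huyρ : u y = ((ρ : ℝ) : EReal) := (EReal.coe_toReal huy_ne_top (hnb y)).symm
  have hρL : ρ + s * dist z y < L := by
    have : ((ρ + s * dist z y : ℝ) : EReal) < ((L : ℝ) : EReal) := by
      calc ((ρ + s * dist z y : ℝ) : EReal) = u y + ((s * dist z y : ℝ) : EReal) := by
            rw [huyρ, ← EReal.coe_add]
        _ < u z := hcon
        _ ≤ _ := huzL
    exact_mod_cast this
  -- y is in every S (x k)
  have hyS : ∀ k, u y + ((s * dist (x k).1 y : ℝ) : EReal) ≤ u (x k).1 := by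
    intro k
    rw [huyρ, hur k, ← EReal.coe_add, EReal.coe_le_coe_iff]
    have htri : dist (x k).1 y ≤ dist (x k).1 z + dist z y := dist_triangle _ _ _
    have := hB k
    nlinarith [hρL.le]
  have hrρ : ∀ k, r (k+1) ≤ ρ + (1/2) ^ k := by
    intro k
    have := (hstep k).2 y (hyS k)
    rw [hur (k+1), huyρ, ← EReal.coe_add] at this
    exact_mod_cast this
  have hLρ : L ≤ ρ := by
    have h1 : Tendsto (fun k => r (k+1)) atTop (𝓝 L) := hrL.comp (tendsto_add_atTop_nat 1)
    have h2 : Tendsto (fun k : ℕ => ρ + (1/2 : ℝ) ^ k) atTop (𝓝 (ρ + 0)) :=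
      tendsto_const_nhds.add (tendsto_pow_atTop_nhds_zero_of_lt_one (by norm_num) (by norm_num))
    have := le_of_tendsto_of_tendsto' h1 h2 hrρ
    simpa using this
  have : s * dist z y < 0 := by linarith [hρL]
  nlinarith [dist_nonneg (x := z) (y := y)]

/-- On a complete metric space, for a proper lsc function `u : X → ℝ ∪ {+∞}` bounded from
below, there is a sequence `(z_n)` with `G[u](z_n) → 0` and
`∑ G[u](z_n) d(z_n, z_{n+1}) < ∞`. -/
theorem exists_seq_gslope_tendsto_zero_tsum_lt_top {X : Type*} [MetricSpace X]
    [CompleteSpace X] (u : X → EReal)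
    (hlsc : LowerSemicontinuous u)
    (hproper : ∃ x, u x ≠ ⊤)
    (hbdd : ∃ m : ℝ, ∀ x, (m : EReal) ≤ u x) :
    ∃ z : ℕ → X, Tendsto (fun n => gslopeE u (z n)) atTop (𝓝 0) ∧
      ∑' n, gslopeE u (z n) * edist (z n) (z (n + 1)) < ⊤ := by
  obtain ⟨x₀, hx₀⟩ := hproper
  obtain ⟨m, hbdd⟩ := hbdd
  have hnb : ∀ x, u x ≠ ⊥ := fun x => ne_bot_of_le_ne_bot (by simp) (hbdd x)
  set s : ℕ → ℝ := fun n => 1 / ((n : ℝ) + 1) with hsdef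
  have hspos : ∀ n, 0 < s n := fun n => by positivity
  have hs2 : ∀ n, s n ≤ 2 * s (n + 1) := by
    intro n
    show (1:ℝ) / ((n:ℝ)+1) ≤ 2 * (1 / ((((n+1):ℕ):ℝ) + 1))
    push_cast
    rw [mul_one_div, div_le_div_iff₀ (by positivity) (by positivity)]
    nlinarith
  choose g hg using fun (k : ℕ) => ekelandE u hlsc m hbdd (s k) (hspos k)
  let w : ℕ → {a : X // u a ≠ ⊤} := fun n =>
    Nat.rec (motive := fun _ => {a : X // u a ≠ ⊤}) ⟨x₀, hx₀⟩
      (fun k p => ⟨g k p.1 p.2, (hg k p.1 p.2).1⟩) n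
  have hdesc : ∀ k, u (w (k+1)).1 + ((s k * dist (w k).1 (w (k+1)).1 : ℝ) : EReal) ≤ u (w k).1 :=
    fun k => (hg k (w k).1 (w k).2).2.1
  have hmin : ∀ k y, u (w (k+1)).1 ≤ u y + ((s k * dist (w (k+1)).1 y : ℝ) : EReal) :=
    fun k y => (hg k (w k).1 (w k).2).2.2 y
  set ρ : ℕ → ℝ := fun k => (u (w k).1).toReal with hρ
  have hρcoe : ∀ k, u (w k).1 = ((ρ k : ℝ) : EReal) := fun k =>
    (EReal.coe_toReal (w k).2 (hnb _)).symm
  have hρm : ∀ k, m ≤ ρ k := by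
    intro k; have := hbdd (w k).1; rw [hρcoe k] at this; exact_mod_cast this
  have hdescR : ∀ k, ρ (k+1) + s k * dist (w k).1 (w (k+1)).1 ≤ ρ k := by
    intro k
    have := hdesc k
    rw [hρcoe k, hρcoe (k+1), ← EReal.coe_add] at this
    exact_mod_cast this
  have hρmono : ∀ k, ρ (k+1) ≤ ρ k := fun k => by
    have h1 := hdescR k
    have h2 : 0 ≤ s k * dist (w k).1 (w (k+1)).1 :=
      mul_nonneg (hspos k).le dist_nonneg
    linarith
  have hslope : ∀ n : ℕ, gslopeE u (w (n+1)).1 ≤ ENNReal.ofReal (s n) := by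
    intro n
    rw [gslopeE, if_neg (w (n+1)).2]
    refine iSup_le fun y => iSup_le fun hy => ENNReal.ofReal_le_ofReal ?_
    have hd : 0 < dist (w (n+1)).1 y := dist_pos.2 (Ne.symm hy)
    rw [div_le_iff₀ hd]
    by_cases hyt : u y = ⊤
    · rw [hyt, EReal.sub_top]
      simp only [EReal.toReal_bot]
      positivity
    · have hmy := hmin n y
      rw [hρcoe (n+1), (EReal.coe_toReal hyt (hnb y)).symm, ← EReal.coe_add] at hmy
      have hmyR : ρ (n+1) ≤ (u y).toReal + s n * dist (w (n+1)).1 y := by exact_mod_cast hmy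
      rw [EReal.toReal_sub (w (n+1)).2 (hnb _) hyt (hnb y)]
      rw [← hρ] at *
      linarith
  refine ⟨fun n => (w (n+1)).1, ?_, ?_⟩
  · have h0 : Tendsto (fun n : ℕ => ENNReal.ofReal (s n)) atTop (𝓝 0) := by
      have hs0 : Tendsto s atTop (𝓝 0) := by
        rw [hsdef]; exact tendsto_one_div_add_atTop_nhds_zero_nat
      simpa using ENNReal.tendsto_ofReal hs0
    exact tendsto_of_tendsto_of_tendsto_of_le_of_le tendsto_const_nhds h0
      (fun n => zero_le) hslope
  · have hterm : ∀ n : ℕ, gslopeE u (w (n+1)).1 * edist (w (n+1)).1 (w (n+1+1)).1 ≤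
        ENNReal.ofReal (2 * ρ (n+1) - 2 * ρ (n+2)) := by
      intro n
      calc gslopeE u (w (n+1)).1 * edist (w (n+1)).1 (w (n+1+1)).1
          ≤ ENNReal.ofReal (s n) * ENNReal.ofReal (dist (w (n+1)).1 (w (n+2)).1) := by
            rw [edist_dist]; exact mul_le_mul_left (hslope n) _
        _ = ENNReal.ofReal (s n * dist (w (n+1)).1 (w (n+2)).1) :=
            (ENNReal.ofReal_mul (hspos n).le).symm
        _ ≤ ENNReal.ofReal (2 * ρ (n+1) - 2 * ρ (n+2)) := by
            apply ENNReal.ofReal_le_ofReal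
            have h1 := hdescR (n+1)
            have h2 := mul_le_mul_of_nonneg_right (hs2 n)
              (dist_nonneg (x := (w (n+1)).1) (y := (w (n+2)).1))
            nlinarith [mul_nonneg (hspos (n+1)).le
              (dist_nonneg (x := (w (n+1)).1) (y := (w (n+2)).1))]
    calc ∑' n, gslopeE u (w (n+1)).1 * edist (w (n+1)).1 (w (n+1+1)).1
        ≤ ∑' n, ENNReal.ofReal (2 * ρ (n+1) - 2 * ρ (n+2)) := ENNReal.tsum_le_tsum hterm
      _ ≤ ENNReal.ofReal (2 * ρ 1 - 2 * m) := by
          apply ENNReal.tsum_le_of_sum_range_le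
          intro N
          have hnn : ∀ i ∈ Finset.range N, 0 ≤ 2 * ρ (i+1) - 2 * ρ (i+2) := by
            intro i _; have := hρmono (i+1); linarith
          rw [← ENNReal.ofReal_sum_of_nonneg hnn]
          apply ENNReal.ofReal_le_ofReal
          have htel : ∑ i ∈ Finset.range N, (2 * ρ (i+1) - 2 * ρ (i+2)) =
              2 * ρ 1 - 2 * ρ (N+1) := by
            simpa using Finset.sum_range_sub' (fun i => 2 * ρ (i+1)) N
          rw [htel]
          linarith [hρm (N+1)]
      _ < ⊤ := ENNReal.ofReal_lt_top
end

section
/- Let X be a metric space and u : X → ℝ ∪ {+∞} a proper function with inf_X u finite. If a sequence (x_n) in X satisfies lim_{n→∞} G[u](x_n) = 0 and ∑_{n=0}^∞ G[u](x_{n+1})·d(x_n, x_{n+1}) < +∞, then liminf_{n→∞} u(x_n) = inf_X u. -/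
open Filter Topology ENNReal

lemma gslope_le {X : Type*} [MetricSpace X] (u : X → EReal) (hbot : ∀ x, u x ≠ ⊥)
    {x : X} (hx : gslopeE u x ≠ ⊤) (y : X) :
    u x ≤ u y + ((gslopeE u x).toReal * dist x y : ℝ) := by
  have hux : u x ≠ ⊤ := by
    intro h
    exact hx (by simp [gslopeE, h])
  by_cases hy : u y = ⊤
  · rw [hy, EReal.top_add_coe]; exact le_top
  rcases eq_or_ne y x with rfl | hne
  · simp
  have hD : 0 < dist x y := dist_pos.mpr (Ne.symm hne)
  have key : ENNReal.ofReal ((u x - u y).toReal / dist x y) ≤ gslopeE u x := by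
    rw [gslopeE, if_neg hux]
    exact le_iSup₂ (f := fun y (_ : y ≠ x) => ENNReal.ofReal ((u x - u y).toReal / dist x y)) y hne
  have hmono := ENNReal.toReal_mono hx key
  have ht : (u x - u y).toReal = (u x).toReal - (u y).toReal :=
    EReal.toReal_sub hux (hbot x) hy (hbot y)
  set g := (gslopeE u x).toReal with hg
  have hg0 : 0 ≤ g := ENNReal.toReal_nonneg
  have hreal : (u x).toReal ≤ (u y).toReal + g * dist x y := by
    rcases le_or_gt ((u x).toReal - (u y).toReal) 0 with h0 | h0
    · nlinarith [mul_nonneg hg0 hD.le]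
    · have : ((u x - u y).toReal / dist x y) ≤ g := by
        rw [ENNReal.toReal_ofReal (by rw [ht]; positivity)] at hmono
        exact hmono
      rw [ht, div_le_iff₀ hD] at this
      linarith
  calc u x = ((u x).toReal : EReal) := (EReal.coe_toReal hux (hbot x)).symm
    _ ≤ (((u y).toReal + g * dist x y : ℝ) : EReal) := by exact_mod_cast hreal
    _ = u y + (g * dist x y : ℝ) := by
        rw [EReal.coe_add, EReal.coe_toReal hy (hbot y)]

/-- If `u : X → ℝ ∪ {+∞}` is proper with finite infimum and a sequence `(x_n)` satisfies
`G[u](x_n) → 0` and `∑ G[u](x_{n+1}) d(x_n, x_{n+1}) < ∞`, then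
`liminf u(x_n) = inf_X u`. -/
theorem liminf_eq_iInf_of_gslope_seq {X : Type*} [MetricSpace X]
    (u : X → EReal) (hbot : ∀ x, u x ≠ ⊥)
    (hproper : ∃ x, u x ≠ ⊤) (hinf : (⨅ x, u x) ≠ ⊥)
    (x : ℕ → X)
    (h1 : Tendsto (fun n => gslopeE u (x n)) atTop (𝓝 0))
    (h2 : ∑' n, gslopeE u (x (n + 1)) * edist (x n) (x (n + 1)) < ⊤) :
    Filter.liminf (fun n => u (x n)) atTop = ⨅ y, u y := by
  refine le_antisymm ?_ (Filter.le_liminf_of_le (by isBoundedDefault)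
    (Eventually.of_forall fun n => iInf_le _ _))
  by_contra hlt
  push_neg at hlt
  obtain ⟨y, huy⟩ := iInf_lt_iff.mp hlt
  have hyT : u y ≠ ⊤ := huy.ne_top
  obtain ⟨c, hc1, hc2⟩ := EReal.exists_between_coe_real huy
  set b := (u y).toReal with hbdef
  have hby : u y = (b : EReal) := (EReal.coe_toReal hyT (hbot y)).symm
  have hδ : 0 < c - b := by
    have : (b : EReal) < (c : EReal) := hby ▸ hc1
    exact sub_pos.mpr (by exact_mod_cast this)
  set δ := c - b with hδdef
  -- eventual facts
  have hev1 : ∀ᶠ n in atTop, (c : EReal) < u (x n) :=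
    Filter.eventually_lt_of_lt_liminf hc2
  have hev2 : ∀ᶠ n in atTop, gslopeE u (x n) < ⊤ :=
    h1.eventually_lt_const (by simp)
  obtain ⟨N₁, hN₁⟩ := eventually_atTop.mp (hev1.and hev2)
  set F : ℕ → ℝ≥0∞ := fun n => gslopeE u (x (n + 1)) * edist (x n) (x (n + 1)) with hF
  have htail := ENNReal.tendsto_sum_nat_add F h2.ne
  have hev3 : ∀ᶠ i in atTop, ∑' k, F (k + i) < ENNReal.ofReal (δ / 2) :=
    htail.eventually_lt_const (by simp; positivity)
  obtain ⟨N, hNN₁, hNtail⟩ := ((eventually_ge_atTop N₁).and hev3).exists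
  have hN : ∀ n, N ≤ n → (c : EReal) < u (x n) ∧ gslopeE u (x n) ≠ ⊤ := by
    intro n hn
    obtain ⟨a, b'⟩ := hN₁ n (le_trans hNN₁ hn)
    exact ⟨a, b'.ne⟩
  set T := ∑' k, F (k + N) with hT
  have hTne : T ≠ ⊤ := (hNtail.trans (by simp)).ne
  set g : ℕ → ℝ := fun n => (gslopeE u (x n)).toReal with hgdef
  set r : ℕ → ℝ := fun n => dist (x n) y with hrdef
  set dd : ℕ → ℝ := fun n => dist (x n) (x (n + 1)) with hdddef
  set S := T.toReal with hS
  set e : ℕ → ℝ := fun n => g (n + 1) * dd n / δ with hedef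
  have hgnn : ∀ n, 0 ≤ g n := fun n => ENNReal.toReal_nonneg
  have hFtoReal : ∀ n, (F n).toReal = g (n + 1) * dd n := by
    intro n
    rw [hF]
    simp only [ENNReal.toReal_mul]
    rw [edist_dist, ENNReal.toReal_ofReal dist_nonneg]
  -- δ ≤ g n * r n for n ≥ N
  have hgr : ∀ n, N ≤ n → δ ≤ g n * r n := by
    intro n hn
    have hle := gslope_le u hbot (hN n hn).2 y
    have hlt2 : (c : EReal) < u y + ((g n * r n : ℝ) : EReal) := lt_of_lt_of_le (hN n hn).1 hle
    rw [hby, ← EReal.coe_add, EReal.coe_lt_coe_iff] at hlt2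
    simp only [hδdef]
    linarith
  -- per-term bound
  have hFle : ∀ k, F (N + k) ≤ T := by
    intro k
    rw [hT, add_comm]
    exact ENNReal.le_tsum k
  have hSlt : S < δ / 2 := by
    rw [hS]
    calc T.toReal < (ENNReal.ofReal (δ / 2)).toReal :=
          ENNReal.toReal_strict_mono (by simp) hNtail
      _ = δ / 2 := ENNReal.toReal_ofReal (by positivity)
  have hterm : ∀ n, N ≤ n → g (n + 1) * dd n ≤ S := by
    intro n hn
    obtain ⟨k, rfl⟩ := le_iff_exists_add.mp hn
    rw [← hFtoReal]
    exact ENNReal.toReal_mono hTne (hFle k)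
  have he_half : ∀ n, N ≤ n → e n ≤ 1 / 2 := by
    intro n hn
    have := hterm n hn
    rw [hedef]
    simp only
    rw [div_le_iff₀ hδ]
    nlinarith
  have he_nn : ∀ n, 0 ≤ e n := by
    intro n
    have := hgnn (n + 1)
    have : (0:ℝ) ≤ g (n+1) * dd n := mul_nonneg this dist_nonneg
    positivity
  -- partial sums of e bounded
  have hsum : ∀ j, ∑ k ∈ Finset.range j, e (N + k) ≤ S / δ := by
    intro j
    have h1' : ∑ k ∈ Finset.range j, e (N + k)
        = (∑ k ∈ Finset.range j, (F (N + k)).toReal) / δ := by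
      rw [Finset.sum_div]
      exact Finset.sum_congr rfl fun k _ => by rw [hedef, hFtoReal]
    rw [h1']
    gcongr
    calc ∑ k ∈ Finset.range j, (F (N + k)).toReal
        = (∑ k ∈ Finset.range j, F (N + k)).toReal := by
          rw [ENNReal.toReal_sum]
          intro k _
          exact ((hFle k).trans_lt (lt_top_iff_ne_top.mpr hTne)).ne
      _ ≤ T.toReal := by
          apply ENNReal.toReal_mono hTne
          have : ∑ k ∈ Finset.range j, F (N + k) = ∑ k ∈ Finset.range j, F (k + N) := by
            exact Finset.sum_congr rfl fun k _ => by rw [add_comm]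
          rw [this, hT]
          exact ENNReal.sum_le_tsum _
  -- key induction step
  have hstep : ∀ m, N ≤ m → r (m + 1) ≤ r m * Real.exp (2 * e m) := by
    intro m hm
    have h1' : δ ≤ g (m + 1) * r (m + 1) := hgr (m + 1) (by omega)
    have h2' : r (m + 1) ≤ r m + dd m := by
      rw [hrdef, hdddef]
      simp only
      rw [dist_comm (x m) (x (m+1))]
      linarith [dist_triangle (x (m+1)) (x m) y]
    have heh := he_half m hm
    have hen := he_nn m
    have hr1 : 0 < r (m + 1) := by
      by_contra h
      push_neg at h
      nlinarith [hgnn (m + 1)]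
    have hdd : dd m ≤ e m * r (m + 1) := by
      rw [hedef]
      simp only
      rw [div_mul_eq_mul_div, le_div_iff₀ hδ]
      have hddnn : 0 ≤ dd m := by simp only [hdddef]; exact dist_nonneg
      nlinarith
    have hexp : 1 + 2 * e m ≤ Real.exp (2 * e m) := by
      have := Real.add_one_le_exp (2 * e m)
      linarith
    have hrm : 0 ≤ r m := dist_nonneg
    have hA : r (m + 1) * (1 - e m) ≤ r m := by nlinarith
    have hB : r (m + 1) ≤ r m * (1 + 2 * e m) := by
      nlinarith [mul_le_mul_of_nonneg_right hA (by linarith : (0:ℝ) ≤ 1 + 2 * e m),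
        mul_nonneg hr1.le (mul_nonneg hen (by linarith : (0:ℝ) ≤ 1 - 2 * e m))]
    have hCc : r m * (1 + 2 * e m) ≤ r m * Real.exp (2 * e m) :=
      mul_le_mul_of_nonneg_left hexp hrm
    linarith
  -- induction: boundedness of r
  set C := r N * Real.exp (2 * (S / δ)) with hC
  have hrbound : ∀ j, r (N + j) ≤ C := by
    have key : ∀ j, r (N + j) ≤ r N * Real.exp (2 * ∑ k ∈ Finset.range j, e (N + k)) := by
      intro j
      induction j with
      | zero => simp
      | succ j ih =>
        have hs := hstep (N + j) (by omega)
        calc r (N + (j + 1)) = r (N + j + 1) := by ring_nf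
          _ ≤ r (N + j) * Real.exp (2 * e (N + j)) := hs
          _ ≤ (r N * Real.exp (2 * ∑ k ∈ Finset.range j, e (N + k))) * Real.exp (2 * e (N + j)) := by
              apply mul_le_mul_of_nonneg_right ih (Real.exp_nonneg _)
          _ = r N * Real.exp (2 * ∑ k ∈ Finset.range (j + 1), e (N + k)) := by
              rw [mul_assoc, ← Real.exp_add, Finset.sum_range_succ]
              congr 2
              ring
    intro j
    refine (key j).trans ?_
    rw [hC]
    have hrN : 0 ≤ r N := dist_nonneg
    apply mul_le_mul_of_nonneg_left _ hrN
    exact Real.exp_le_exp.mpr (by nlinarith [hsum j])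
  have hC0 : 0 < C := by
    have := hgr N le_rfl
    have hrN : 0 < r N := by
      by_contra h
      push_neg at h
      nlinarith [hgnn N]
    rw [hC]
    positivity
  -- g tends to 0
  have hg0 : Tendsto g atTop (𝓝 0) := by
    have := (ENNReal.tendsto_toReal (a := 0) (by simp)).comp h1
    simpa [hgdef, Function.comp_def] using this
  have hev4 : ∀ᶠ n in atTop, g n < δ / C := hg0.eventually_lt_const (by positivity)
  obtain ⟨n, hn1, hn2⟩ := ((eventually_ge_atTop N).and hev4).exists
  have hrn : r n ≤ C := by
    obtain ⟨k, rfl⟩ := le_iff_exists_add.mp hn1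
    exact hrbound k
  have hle : δ ≤ g n * r n := hgr n hn1
  have h1'' : g n * C < δ := (lt_div_iff₀ hC0).mp hn2
  have h2'' : g n * r n ≤ g n * C := mul_le_mul_of_nonneg_left hrn (hgnn n)
  linarith
end

section
/- Let λ ≥ 0, X a metric space, ℓ : X → [0,∞) lsc, and T the operator T u(x) = inf_y (u(y)+ℓ(x)d(x,y))/(1+λ d(x,y)). If u₀ : X → ℝ ∪ {+∞} is nonnegative, then the sequence u_n := Tⁿ u₀ is pointwise nonincreasing and converges pointwise to a function v : X → [0, ∞] satisfying T v = v. -/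
open Filter Topology ENNReal

/-- The global slope of a nonnegative extended-real valued function `u : X → [0, ∞]`:
`G[u](x) = sup_{y ≠ x} (u x - u y)⁺ / d(x,y)` when `u x < ∞` (truncated subtraction in
`ℝ≥0∞` is exactly the positive part), and `∞` when `u x = ∞`. -/
noncomputable def gslopeN {X : Type*} [MetricSpace X] (u : X → ℝ≥0∞) (x : X) : ℝ≥0∞ :=
  if u x = ⊤ then ⊤
  else ⨆ (y : X) (_ : y ≠ x), (u x - u y) / edist x y

/-- The operator `T u (x) = inf_y (u y + ℓ x · d(x,y)) / (1 + λ · d(x,y))` acting on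
nonnegative extended-real valued functions. -/
noncomputable def TopE {X : Type*} [MetricSpace X] (lam : ℝ) (ℓ : X → ℝ)
    (u : X → ℝ≥0∞) (x : X) : ℝ≥0∞ :=
  ⨅ y : X, (u y + ENNReal.ofReal (ℓ x) * edist x y) / (1 + ENNReal.ofReal lam * edist x y)

/-- For a nonnegative (extended-real valued) `u₀`, the iterates `Tⁿ u₀` are pointwise
nonincreasing and converge pointwise to a fixed point of `T`. -/
theorem iterates_antitone_tendsto_fixedPoint {X : Type*} [MetricSpace X]
    (lam : ℝ) (hlam : 0 ≤ lam) (ℓ : X → ℝ)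
    (hℓ : LowerSemicontinuous ℓ) (hℓ0 : ∀ x, 0 ≤ ℓ x)
    (u₀ : X → ℝ≥0∞) :
    (∀ x, Antitone (fun n => (TopE lam ℓ)^[n] u₀ x)) ∧
    ∃ v : X → ℝ≥0∞,
      (∀ x, Tendsto (fun n => (TopE lam ℓ)^[n] u₀ x) atTop (𝓝 (v x))) ∧
      TopE lam ℓ v = v := by
  set T := TopE lam ℓ with hT
  have hTle : ∀ u : X → ℝ≥0∞, ∀ x, T u x ≤ u x := by
    intro u x
    refine iInf_le_of_le x ?_
    simp [hT, TopE, edist_self]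
  have hanti : ∀ x, Antitone fun n => T^[n] u₀ x := by
    intro x
    apply antitone_nat_of_succ_le
    intro n
    rw [Function.iterate_succ_apply']
    exact hTle _ x
  set v : X → ℝ≥0∞ := fun x => ⨅ n, T^[n] u₀ x with hv
  have hb : ∀ x y : X, (1 + ENNReal.ofReal lam * edist x y) ≠ 0 := by
    intro x y
    simp [add_eq_zero]
  have hbt : ∀ x y : X, (1 + ENNReal.ofReal lam * edist x y) ≠ ⊤ := by
    intro x y
    exact ENNReal.add_ne_top.2 ⟨one_ne_top,
      ENNReal.mul_ne_top ofReal_ne_top (edist_ne_top x y)⟩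
  refine ⟨hanti, v, fun x => tendsto_atTop_iInf (hanti x), ?_⟩
  funext x
  apply le_antisymm
  · refine le_iInf fun n => ?_
    have h1 : T v x ≤ T (T^[n] u₀) x := by
      refine iInf_mono fun y => ?_
      exact ENNReal.div_le_div_right (add_le_add_left (iInf_le _ n) _) _
    refine h1.trans ?_
    rw [← Function.iterate_succ_apply' T n u₀]
    exact hanti x (Nat.le_succ n)
  · refine le_iInf fun y => ?_
    have key : ∀ n : ℕ, v x ≤
        (T^[n] u₀ y + ENNReal.ofReal (ℓ x) * edist x y) /
          (1 + ENNReal.ofReal lam * edist x y) := by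
      intro n
      refine (iInf_le _ (n + 1)).trans ?_
      rw [Function.iterate_succ_apply']
      exact iInf_le _ y
    calc v x ≤ ⨅ n : ℕ, (T^[n] u₀ y + ENNReal.ofReal (ℓ x) * edist x y) /
          (1 + ENNReal.ofReal lam * edist x y) := le_iInf key
      _ = (v y + ENNReal.ofReal (ℓ x) * edist x y) /
          (1 + ENNReal.ofReal lam * edist x y) := by
        show _ = ((⨅ n, T^[n] u₀ y) + ENNReal.ofReal (ℓ x) * edist x y) /
          (1 + ENNReal.ofReal lam * edist x y)
        rw [ENNReal.iInf_add, ENNReal.iInf_div_of_ne (hb x y) (hbt x y)]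
end

section
/- Let X be a metric space, λ ≥ 0 and ℓ : X → [0,∞) lsc with inf_X ℓ = 0. If u is a supersolution of the discounted global Eikonal equation (i.e. u is lsc, inf_X u = 0, and λ u(x) + G[u](x) ≥ ℓ(x) for all x), then v := lim_{n→∞} Tⁿ u is a solution: v is lsc, inf_X v = 0, and λ v(x) + G[v](x) = ℓ(x) for all x ∈ X. -/
open Filter Topology ENNReal

section Aux

variable {X : Type*} [MetricSpace X] (lam : ℝ) (ℓ : X → ℝ)

private lemma den_ne_zero (x y : X) : (1 : ℝ≥0∞) + ENNReal.ofReal lam * edist x y ≠ 0 :=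
  (zero_lt_one.trans_le le_self_add).ne'

private lemma den_ne_top (x y : X) : (1 : ℝ≥0∞) + ENNReal.ofReal lam * edist x y ≠ ⊤ := by
  exact ENNReal.add_ne_top.2 ⟨one_ne_top, ENNReal.mul_ne_top ofReal_ne_top (edist_ne_top x y)⟩

private lemma TopE_le_apply (w : X → ℝ≥0∞) (x y : X) :
    TopE lam ℓ w x ≤ (w y + ENNReal.ofReal (ℓ x) * edist x y) /
      (1 + ENNReal.ofReal lam * edist x y) := iInf_le _ y

private lemma TopE_le_self (w : X → ℝ≥0∞) (x : X) : TopE lam ℓ w x ≤ w x := by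
  have h := TopE_le_apply lam ℓ w x x
  simpa [edist_self] using h

private lemma TopE_mono {w w' : X → ℝ≥0∞} (h : ∀ z, w z ≤ w' z) (x : X) :
    TopE lam ℓ w x ≤ TopE lam ℓ w' x := by
  exact iInf_mono fun y => ENNReal.div_le_div_right (add_le_add_left (h y) _) _

/-- `w` is a (pointwise reformulated) subsolution. -/
private def IsSub (w : X → ℝ≥0∞) : Prop :=
  ∀ x y : X, w x * (1 + ENNReal.ofReal lam * edist x y) ≤
    w y + ENNReal.ofReal (ℓ x) * edist x y

private lemma isSub_le_TopE {w : X → ℝ≥0∞} (h : IsSub lam ℓ w) (x : X) :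
    w x ≤ TopE lam ℓ w x := by
  refine le_iInf fun y => ?_
  exact (ENNReal.le_div_iff_mul_le (Or.inl (den_ne_zero lam x y))
    (Or.inl (den_ne_top lam x y))).2 (h x y)

end Aux

/-- If `u` is a supersolution of the discounted global Eikonal equation `λ w + G[w] = ℓ`
(`u` lsc, `inf u = 0`, `λ u + G[u] ≥ ℓ`), then the pointwise limit `v` of the iterates
`Tⁿ u` is a solution: `v` is lsc, real-valued, `inf v = 0` and `λ v + G[v] = ℓ`. -/
theorem limit_of_iterates_is_solution {X : Type*} [MetricSpace X] [Nonempty X]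
    (lam : ℝ) (hlam : 0 ≤ lam)
    (ℓ : X → ℝ) (hℓ : LowerSemicontinuous ℓ) (hℓ0 : ∀ x, 0 ≤ ℓ x)
    (hinfℓ : ⨅ x, ℓ x = 0)
    (u : X → ℝ≥0∞) (hu : LowerSemicontinuous u) (hinfu : ⨅ x, u x = 0)
    (hsuper : ∀ x, ENNReal.ofReal (ℓ x) ≤ ENNReal.ofReal lam * u x + gslopeN u x) :
    ∃ v : X → ℝ≥0∞,
      (∀ x, Tendsto (fun n => (TopE lam ℓ)^[n] u x) atTop (𝓝 (v x))) ∧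
      LowerSemicontinuous v ∧ (∀ x, v x ≠ ⊤) ∧ (⨅ x, v x = 0) ∧
      ∀ x, ENNReal.ofReal lam * v x + gslopeN v x = ENNReal.ofReal (ℓ x) := by
  classical
  set T := TopE lam ℓ with hT
  set lam' : ℝ≥0∞ := ENNReal.ofReal lam with hlam'
  set L : X → ℝ≥0∞ := fun x => ENNReal.ofReal (ℓ x) with hL
  set v : X → ℝ≥0∞ := fun x => ⨅ n : ℕ, T^[n] u x with hv
  have hlamt : lam' ≠ ⊤ := ofReal_ne_top
  have hLt : ∀ x, L x ≠ ⊤ := fun x => ofReal_ne_top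
  -- antitonicity of the iterates
  have hant : ∀ x, Antitone fun n => T^[n] u x := by
    intro x
    refine antitone_nat_of_succ_le fun n => ?_
    rw [Function.iterate_succ_apply']
    exact TopE_le_self lam ℓ _ _
  have htend : ∀ x, Tendsto (fun n => T^[n] u x) atTop (𝓝 (v x)) :=
    fun x => tendsto_atTop_iInf (hant x)
  have hvle : ∀ (n : ℕ) (z : X), v z ≤ T^[n] u z := fun n z => iInf_le _ n
  have hvu : ∀ z, v z ≤ u z := by
    intro z
    have := hvle 0 z
    simpa using this
  -- v is finite
  have hvfin : ∀ x, v x ≠ ⊤ := by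
    intro x
    obtain ⟨y₀, hy₀⟩ : ∃ y, u y < 1 := by
      refine iInf_lt_iff.1 ?_
      rw [hinfu]; exact zero_lt_one
    have h1 : v x ≤ (u y₀ + L x * edist x y₀) / (1 + lam' * edist x y₀) := by
      refine (hvle 1 x).trans ?_
      simpa using TopE_le_apply lam ℓ u x y₀
    have h2 : (u y₀ + L x * edist x y₀) / (1 + lam' * edist x y₀) ≤ u y₀ + L x * edist x y₀ := by
      rw [ENNReal.div_le_iff (den_ne_zero lam x y₀) (den_ne_top lam x y₀)]
      exact le_mul_of_one_le_right (zero_le) (le_add_right le_rfl)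
    have h3 : u y₀ + L x * edist x y₀ ≠ ⊤ :=
      ENNReal.add_ne_top.2 ⟨hy₀.ne_top, ENNReal.mul_ne_top (hLt x) (edist_ne_top x y₀)⟩
    exact fun h => h3 (top_le_iff.1 (h ▸ h1.trans h2))
  -- inf v = 0
  have hvinf : ⨅ x, v x = 0 := by
    refine le_antisymm ?_ (zero_le)
    calc ⨅ x, v x ≤ ⨅ x, u x := iInf_mono hvu
    _ = 0 := hinfu
  -- v is a subsolution
  have hsubv : IsSub lam ℓ v := by
    intro x y
    have key : ∀ n : ℕ, v x * (1 + lam' * edist x y) ≤ T^[n] u y + L x * edist x y := by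
      intro n
      have h1 : v x ≤ T^[n + 1] u x := hvle (n + 1) x
      have h2 : T^[n + 1] u x ≤ (T^[n] u y + L x * edist x y) / (1 + lam' * edist x y) := by
        rw [Function.iterate_succ_apply']
        exact TopE_le_apply lam ℓ _ x y
      exact (ENNReal.le_div_iff_mul_le (Or.inl (den_ne_zero lam x y))
        (Or.inl (den_ne_top lam x y))).1 (h1.trans h2)
    calc v x * (1 + lam' * edist x y) ≤ ⨅ n : ℕ, (T^[n] u y + L x * edist x y) := le_iInf key
    _ = v y + L x * edist x y := ENNReal.iInf_add.symm
  have hsubv' : ∀ x y : X, v x ≤ v y + L x * edist x y := by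
    intro x y
    refine le_trans ?_ (hsubv x y)
    exact le_mul_of_one_le_right (zero_le) (le_add_right le_rfl)
  -- lower semicontinuity of v
  have hlsc : LowerSemicontinuous v := by
    intro x c hc
    have hvxt : v x ≠ ⊤ := hvfin x
    set ε : ℝ≥0∞ := ((v x - c) / 2) / (L x + 1) with hε
    have hvc0 : v x - c ≠ 0 := by
      simpa [tsub_eq_zero_iff_le] using not_le.2 hc
    have hvct : v x - c ≠ ⊤ := by
      exact fun h => hvxt (top_le_iff.1 (h ▸ tsub_le_self))
    have hε0 : 0 < ε := by
      apply ENNReal.div_pos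
      · exact fun h => hvc0 (by simpa using ENNReal.div_eq_zero_iff.1 h |>.resolve_right (by simp))
      · exact ENNReal.add_ne_top.2 ⟨hLt x, one_ne_top⟩
    filter_upwards [EMetric.ball_mem_nhds x hε0] with y hy
    by_contra hcy
    push_neg at hcy
    have hct : c ≠ ⊤ := fun h => (h ▸ hc).ne_top rfl
    have hdy : edist x y < ε := by rwa [EMetric.mem_ball, edist_comm] at hy
    have h1 : v x ≤ c + L x * edist x y := le_trans (hsubv' x y) (add_le_add_left hcy _)
    have h2 : L x * edist x y ≤ (L x + 1) * ε := by
      exact mul_le_mul' (le_add_right le_rfl) hdy.le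
    have h3 : (L x + 1) * ε = (v x - c) / 2 := by
      rw [hε]
      exact ENNReal.mul_div_cancel (zero_lt_one.trans_le le_add_self).ne' (ENNReal.add_ne_top.2 ⟨hLt x, one_ne_top⟩)
    have h4 : v x ≤ c + (v x - c) / 2 := h1.trans (by rw [← h3]; exact add_le_add_right h2 _)
    have h5 : c + (v x - c) / 2 < c + (v x - c) := by
      refine (ENNReal.add_lt_add_iff_left hct).2 ?_
      exact ENNReal.half_lt_self hvc0 hvct
    have h6 : c + (v x - c) = v x := add_tsub_cancel_of_le hc.le
    exact absurd (h4.trans_lt (h5.trans_le h6.le)) (lt_irrefl _)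
  -- the slope bound: v x ≤ v z + G[v] x * d(x,z)
  have hgv : ∀ x, gslopeN v x = ⨆ (y : X) (_ : y ≠ x), (v x - v y) / edist x y := by
    intro x; rw [gslopeN, if_neg (hvfin x)]
  have hslope : ∀ x z : X, v x ≤ v z + gslopeN v x * edist x z := by
    intro x z
    rcases eq_or_ne z x with rfl | hzx
    · simp
    · have h1 : (v x - v z) / edist x z ≤ gslopeN v x := by
        rw [hgv]
        exact le_iSup₂ (f := fun (y : X) (_ : y ≠ x) => (v x - v y) / edist x y) z hzx
      have he0 : edist x z ≠ 0 := (edist_pos.2 (Ne.symm hzx)).ne'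
      have h2 : v x - v z ≤ gslopeN v x * edist x z :=
        (ENNReal.div_le_iff he0 (edist_ne_top x z)).1 h1
      calc v x ≤ v x - v z + v z := le_tsub_add
      _ ≤ gslopeN v x * edist x z + v z := add_le_add_left h2 _
      _ = v z + gslopeN v x * edist x z := add_comm _ _
  -- λ v ≤ ℓ
  have hlamle : ∀ x, lam' * v x ≤ L x := by
    intro x
    rcases eq_or_ne (v x) 0 with h0 | h0
    · simp [h0]
    obtain ⟨y, hy⟩ : ∃ y, v y < v x := by
      refine iInf_lt_iff.1 ?_
      rw [hvinf]; exact pos_iff_ne_zero.2 h0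
    have hyx : y ≠ x := fun h => absurd (h ▸ hy) (lt_irrefl _)
    have he0 : edist x y ≠ 0 := (edist_pos.2 (Ne.symm hyx)).ne'
    have h1 : v x * (1 + lam' * edist x y) ≤ v x + L x * edist x y :=
      (hsubv x y).trans (add_le_add_left hy.le _)
    have h2 : v x + v x * (lam' * edist x y) ≤ v x + L x * edist x y := by
      calc v x + v x * (lam' * edist x y) = v x * (1 + lam' * edist x y) := by ring
      _ ≤ v x + L x * edist x y := h1
    have h3 : v x * (lam' * edist x y) ≤ L x * edist x y :=
      (ENNReal.add_le_add_iff_left (hvfin x)).1 h2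
    have h4 : (lam' * v x) * edist x y ≤ L x * edist x y := by
      calc (lam' * v x) * edist x y = v x * (lam' * edist x y) := by ring
      _ ≤ L x * edist x y := h3
    exact (ENNReal.mul_le_mul_iff_left he0 (edist_ne_top x y)).1 h4
  -- subsolution half of the equation
  have hle : ∀ x, lam' * v x + gslopeN v x ≤ L x := by
    intro x
    have hG : gslopeN v x ≤ L x - lam' * v x := by
      rw [hgv]
      refine iSup₂_le fun y hyx => ?_
      have he0 : edist x y ≠ 0 := (edist_pos.2 (Ne.symm hyx)).ne'
      rw [ENNReal.div_le_iff he0 (edist_ne_top x y)]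
      rw [tsub_le_iff_right]
      have hLsplit : L x * edist x y =
          (lam' * v x) * edist x y + (L x - lam' * v x) * edist x y := by
        rw [← add_mul, add_tsub_cancel_of_le (hlamle x)]
      have h1 : v x + v x * (lam' * edist x y) ≤
          v y + ((lam' * v x) * edist x y + (L x - lam' * v x) * edist x y) := by
        calc v x + v x * (lam' * edist x y) = v x * (1 + lam' * edist x y) := by ring
        _ ≤ v y + L x * edist x y := hsubv x y
        _ = v y + ((lam' * v x) * edist x y + (L x - lam' * v x) * edist x y) := by rw [hLsplit]
      have hA : v x * (lam' * edist x y) = (lam' * v x) * edist x y := by ring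
      have hAt : (lam' * v x) * edist x y ≠ ⊤ :=
        ENNReal.mul_ne_top (ENNReal.mul_ne_top hlamt (hvfin x)) (edist_ne_top x y)
      have h2 : v x + (lam' * v x) * edist x y ≤
          (v y + (L x - lam' * v x) * edist x y) + (lam' * v x) * edist x y := by
        calc v x + (lam' * v x) * edist x y = v x + v x * (lam' * edist x y) := by rw [hA]
        _ ≤ v y + ((lam' * v x) * edist x y + (L x - lam' * v x) * edist x y) := h1
        _ = (v y + (L x - lam' * v x) * edist x y) + (lam' * v x) * edist x y := by ring
      have h3 : v x ≤ v y + (L x - lam' * v x) * edist x y :=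
        (ENNReal.add_le_add_iff_right hAt).1 h2
      calc v x ≤ v y + (L x - lam' * v x) * edist x y := h3
      _ = (L x - lam' * v x) * edist x y + v y := add_comm _ _
    calc lam' * v x + gslopeN v x ≤ lam' * v x + (L x - lam' * v x) := add_le_add_right hG _
    _ = L x := add_tsub_cancel_of_le (hlamle x)
  -- supersolution half of the equation
  have hge : ∀ x, L x ≤ lam' * v x + gslopeN v x := by
    intro x₀
    by_cases hvux : v x₀ = u x₀
    · -- v x₀ = u x₀ : use the supersolution property of u directly
      have hux : u x₀ ≠ ⊤ := hvux ▸ hvfin x₀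
      have hgu : gslopeN u x₀ ≤ gslopeN v x₀ := by
        rw [gslopeN, if_neg hux, hgv]
        refine iSup₂_le fun y hyx => ?_
        refine le_trans ?_ (le_iSup₂ (f := fun (y : X) (_ : y ≠ x₀) => (v x₀ - v y) / edist x₀ y) y hyx)
        exact ENNReal.div_le_div_right (tsub_le_tsub hvux.ge (hvu y)) _
      calc L x₀ ≤ lam' * u x₀ + gslopeN u x₀ := hsuper x₀
      _ ≤ lam' * v x₀ + gslopeN v x₀ := add_le_add (by rw [hvux]) hgu
    · -- v x₀ < u x₀ : Perron-type bump argument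
      have hvux' : v x₀ < u x₀ := lt_of_le_of_ne (hvu x₀) hvux
      by_contra hcon
      push_neg at hcon
      set G := gslopeN v x₀ with hG
      set B := lam' * v x₀ + G with hB
      have hBL : B < L x₀ := hcon
      have hBt : B ≠ ⊤ := hBL.ne_top
      have hGt : G ≠ ⊤ := fun h => hBt (by simp [hB, h])
      set g : ℝ≥0∞ := L x₀ - B with hg
      have hg0 : g ≠ 0 := by
        simpa [hg, tsub_eq_zero_iff_le] using not_le.2 hBL
      have hgtop : g ≠ ⊤ := fun h => (hLt x₀) (top_le_iff.1 (h ▸ tsub_le_self))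
      set g4 : ℝ≥0∞ := g / 4 with hg4
      have hg40 : g4 ≠ 0 := by
        simp only [hg4]
        exact (ENNReal.div_pos hg0 (by simp)).ne'
      have hg4t : g4 ≠ ⊤ := by
        simp only [hg4]
        exact (ENNReal.div_lt_top hgtop (by simp)).ne
      have hBg : B + 4 * g4 = L x₀ := by
        have : (4 : ℝ≥0∞) * g4 = g := by
          rw [hg4, mul_comm]
          exact ENNReal.div_mul_cancel (by simp) (by simp)
        rw [this, hg]
        exact add_tsub_cancel_of_le hBL.le
      have hB3 : B + 3 * g4 < L x₀ := by
        rw [← hBg]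
        refine (ENNReal.add_lt_add_iff_left hBt).2 ?_
        have h34 : g4 * 3 < g4 * 4 := (ENNReal.mul_lt_mul_iff_right hg40 hg4t).2 (by norm_num)
        calc 3 * g4 = g4 * 3 := mul_comm _ _
        _ < g4 * 4 := h34
        _ = 4 * g4 := mul_comm _ _
      -- lower bound on ℓ near x₀
      have hB3t : B + 3 * g4 ≠ ⊤ :=
        ENNReal.add_ne_top.2 ⟨hBt, ENNReal.mul_ne_top (by simp) hg4t⟩
      obtain ⟨ε₁, hε₁0, hε₁⟩ : ∃ ε₁ > (0 : ℝ≥0∞), ∀ z, edist z x₀ < ε₁ →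
          B + 3 * g4 ≤ L z := by
        have hc₁ : (B + 3 * g4).toReal < ℓ x₀ := by
          have := (ENNReal.toReal_lt_toReal hB3t (hLt x₀)).2 hB3
          rwa [hL, ENNReal.toReal_ofReal (hℓ0 x₀)] at this
        have hev : ∀ᶠ z in 𝓝 x₀, (B + 3 * g4).toReal < ℓ z := hℓ x₀ _ hc₁
        rw [eventually_nhds_iff] at hev
        obtain ⟨s, hs, hsopen, hxs⟩ := hev
        obtain ⟨ε, hε0, hball⟩ := EMetric.mem_nhds_iff.1 (hsopen.mem_nhds hxs)
        refine ⟨ε, hε0, fun z hz => ?_⟩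
        have hz' : z ∈ s := hball hz
        have := (hs z hz').le
        calc B + 3 * g4 = ENNReal.ofReal (B + 3 * g4).toReal := (ofReal_toReal hB3t).symm
        _ ≤ L z := ENNReal.ofReal_le_ofReal this
      -- lower bound on u near x₀
      obtain ⟨b, hb1, hb2⟩ := exists_between hvux'
      have hbt : b ≠ ⊤ := fun h => by
        rcases eq_or_ne (u x₀) ⊤ with hu' | hu'
        · exact (h ▸ hb2).ne_top rfl
        · exact (h ▸ hb2).ne_top rfl
      obtain ⟨ε₂, hε₂0, hε₂⟩ : ∃ ε₂ > (0 : ℝ≥0∞), ∀ z, edist z x₀ < ε₂ → b < u z := by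
        have hev : ∀ᶠ z in 𝓝 x₀, b < u z := hu x₀ b hb2
        rw [eventually_nhds_iff] at hev
        obtain ⟨s, hs, hsopen, hxs⟩ := hev
        obtain ⟨ε, hε0, hball⟩ := EMetric.mem_nhds_iff.1 (hsopen.mem_nhds hxs)
        exact ⟨ε, hε0, fun z hz => hs z (hball hz)⟩
      set m : ℝ≥0∞ := min (min ε₁ ε₂) 1 with hm
      have hm0 : m ≠ 0 := (lt_min (lt_min hε₁0 hε₂0) zero_lt_one).ne'
      have hmt : m ≠ ⊤ := fun h => by
        rw [hm] at h
        exact one_ne_top (top_le_iff.1 (h ▸ min_le_right _ _))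
      set C : ℝ≥0∞ := G + g4 with hC
      have hCt : C ≠ ⊤ := ENNReal.add_ne_top.2 ⟨hGt, hg4t⟩
      set δ : ℝ≥0∞ := min (min (b - v x₀) (g4 / (lam' + 1))) (g4 * (m / 2)) with hδ
      have hδ0 : δ ≠ 0 := by
        have h1 : (0 : ℝ≥0∞) < b - v x₀ := tsub_pos_of_lt hb1
        have h2 : (0 : ℝ≥0∞) < g4 / (lam' + 1) :=
          ENNReal.div_pos hg40 (ENNReal.add_ne_top.2 ⟨hlamt, one_ne_top⟩)
        have h3 : (0 : ℝ≥0∞) < g4 * (m / 2) :=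
          ENNReal.mul_pos hg40 (ENNReal.div_pos hm0 (by simp)).ne'
        exact (lt_min (lt_min h1 h2) h3).ne'
      have hdlam : lam' * δ ≤ g4 := by
        have h1 : δ ≤ g4 / (lam' + 1) := le_trans (min_le_left _ _) (min_le_right _ _)
        calc lam' * δ ≤ (lam' + 1) * (g4 / (lam' + 1)) :=
          mul_le_mul' (le_add_right le_rfl) h1
        _ = g4 := ENNReal.mul_div_cancel (zero_lt_one.trans_le le_add_self).ne' (ENNReal.add_ne_top.2 ⟨hlamt, one_ne_top⟩)
      have hδb : v x₀ + δ ≤ b := by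
        have h1 : δ ≤ b - v x₀ := le_trans (min_le_left _ _) (min_le_left _ _)
        calc v x₀ + δ ≤ v x₀ + (b - v x₀) := add_le_add_right h1 _
        _ = b := add_tsub_cancel_of_le hb1.le
      have hδm : δ ≤ g4 * (m / 2) := min_le_right _ _
      have hδt : δ ≠ ⊤ := by
        have hδle : δ ≤ b := le_add_self.trans hδb
        exact fun h => hbt (top_le_iff.1 (h ▸ hδle))
      set a : ℝ≥0∞ := v x₀ + δ with ha
      have hat : a ≠ ⊤ := ENNReal.add_ne_top.2 ⟨hvfin x₀, hδt⟩
      set φ : X → ℝ≥0∞ := fun z => a - C * edist x₀ z with hφ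
      set w : X → ℝ≥0∞ := fun z => max (v z) (φ z) with hw
      -- active points are close to x₀
      have hactive : ∀ z, v z < φ z → edist x₀ z < m := by
        intro z hz
        have hφa : φ z ≤ a := tsub_le_self
        have hvzt : v z ≠ ⊤ := hvfin z
        have step1 : v z + C * edist x₀ z < a := by
          by_contra h
          push_neg at h
          exact absurd (tsub_le_iff_right.2 h) (not_le.2 hz)
        have step2 : v x₀ ≤ v z + G * edist x₀ z := hslope x₀ z
        have step3 : v z + G * edist x₀ z + g4 * edist x₀ z < v z + G * edist x₀ z + δ := by
          calc v z + G * edist x₀ z + g4 * edist x₀ z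
              = v z + (G + g4) * edist x₀ z := by ring
          _ = v z + C * edist x₀ z := by rw [hC]
          _ < a := step1
          _ = v x₀ + δ := rfl
          _ ≤ (v z + G * edist x₀ z) + δ := add_le_add_left step2 _
        have hfin : v z + G * edist x₀ z ≠ ⊤ :=
          ENNReal.add_ne_top.2 ⟨hvzt, ENNReal.mul_ne_top hGt (edist_ne_top _ _)⟩
        have step4 : g4 * edist x₀ z < δ := (ENNReal.add_lt_add_iff_left hfin).1 step3
        have step5 : g4 * edist x₀ z < g4 * (m / 2) := step4.trans_le hδm
        have step6 : edist x₀ z < m / 2 := (ENNReal.mul_lt_mul_iff_right hg40 hg4t).1 step5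
        exact step6.trans_le (ENNReal.half_le_self)
      -- w ≤ u
      have hwu : ∀ z, w z ≤ u z := by
        intro z
        refine max_le (hvu z) ?_
        by_cases hz : v z < φ z
        · have h1 : edist x₀ z < m := hactive z hz
          have h2 : edist z x₀ < ε₂ := by
            rw [edist_comm]
            exact h1.trans_le (le_trans (min_le_left _ _) (min_le_right _ _))
          calc φ z ≤ a := tsub_le_self
          _ ≤ b := hδb
          _ ≤ u z := (hε₂ z h2).le
        · exact le_trans (not_lt.1 hz) (hvu z)
      -- w is a subsolution
      have hwsub : IsSub lam ℓ w := by
        intro x y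
        by_cases hx : v x < φ x
        · have hwx : w x = φ x := max_eq_right hx.le
          have hxm : edist x₀ x < m := hactive x hx
          have hℓx : B + 3 * g4 ≤ L x := by
            apply hε₁ x
            rw [edist_comm]
            exact hxm.trans_le (le_trans (min_le_left _ _) (min_le_left _ _))
          have hφa : φ x ≤ a := tsub_le_self
          -- Lipschitz property of the cone
          have hLip : φ x ≤ φ y + C * edist x y := by
            rw [hφ]
            simp only []
            rw [tsub_le_iff_right]
            calc a ≤ (a - C * edist x₀ y) + C * edist x₀ y := le_tsub_add
            _ ≤ (a - C * edist x₀ y) + C * (edist x₀ x + edist x y) :=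
                add_le_add_right (mul_le_mul' le_rfl (edist_triangle x₀ x y)) _
            _ = (a - C * edist x₀ y) + C * edist x y + C * edist x₀ x := by ring
          have hkey : C + lam' * a ≤ L x := by
            refine le_trans ?_ hℓx
            have h1 : lam' * a ≤ lam' * v x₀ + g4 := by
              calc lam' * a = lam' * v x₀ + lam' * δ := by rw [ha]; ring
              _ ≤ lam' * v x₀ + g4 := add_le_add_right hdlam _
            calc C + lam' * a ≤ (G + g4) + (lam' * v x₀ + g4) := add_le_add_right h1 _
            _ = (lam' * v x₀ + G) + 2 * g4 := by ring
            _ = B + 2 * g4 := by rw [hB]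
            _ ≤ B + 3 * g4 := by
                refine add_le_add_right ?_ _
                refine mul_le_mul' ?_ le_rfl
                norm_num
          rw [hwx]
          calc φ x * (1 + lam' * edist x y) = φ x + φ x * (lam' * edist x y) := by ring
          _ ≤ (φ y + C * edist x y) + a * (lam' * edist x y) :=
              add_le_add hLip (mul_le_mul' hφa le_rfl)
          _ = φ y + (C + lam' * a) * edist x y := by ring
          _ ≤ w y + L x * edist x y :=
              add_le_add (le_max_right _ _) (mul_le_mul' hkey le_rfl)
        · have hwx : w x = v x := max_eq_left (not_lt.1 hx)
          rw [hwx]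
          calc v x * (1 + lam' * edist x y) ≤ v y + L x * edist x y := hsubv x y
          _ ≤ w y + L x * edist x y := add_le_add_left (le_max_left _ _) _
      -- w ≤ Tⁿ u for all n, hence w ≤ v
      have hwTn : ∀ n : ℕ, ∀ z, w z ≤ T^[n] u z := by
        intro n
        induction n with
        | zero => simpa using hwu
        | succ n ih =>
          intro z
          rw [Function.iterate_succ_apply']
          calc w z ≤ TopE lam ℓ w z := isSub_le_TopE lam ℓ hwsub z
          _ ≤ TopE lam ℓ (T^[n] u) z := TopE_mono lam ℓ ih z
      have hwv : w x₀ ≤ v x₀ := le_iInf fun n => hwTn n x₀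
      have hφx₀ : φ x₀ = a := by
        simp [hφ, edist_self]
      have : v x₀ < w x₀ := by
        calc v x₀ < v x₀ + δ := ENNReal.lt_add_right (hvfin x₀) hδ0
        _ = a := rfl
        _ = φ x₀ := hφx₀.symm
        _ ≤ w x₀ := le_max_right _ _
      exact absurd (this.trans_le hwv) (lt_irrefl _)
  exact ⟨v, htend, hlsc, hvfin, hvinf, fun x => le_antisymm (hle x) (hge x)⟩
end

section
/- With the notation of the previous setting, the value u₀(x) = inf over sequences starting at x with ℓ(x_n) → 0 of ∑ ℓ(x_n)d(x_n,x_{n+1}) is unchanged if the infimum is restricted to sequences (x_n) for which (ℓ(x_n)) is strictly decreasing to 0. -/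
open Filter Topology ENNReal

open scoped Classical in
/-- Indices of successive "record lows" of `ℓ` along the sequence `σ` : `recIdx ℓ σ (k+1)`
is the first index after `recIdx ℓ σ k` at which `ℓ ∘ σ` does not exceed its value at
`recIdx ℓ σ k` (if such an index exists; otherwise the index stabilizes). -/
noncomputable def recIdx {X : Type*} (ℓ : X → ℝ) (σ : ℕ → X) : ℕ → ℕ
  | 0 => 0
  | (k+1) =>
    let i := recIdx ℓ σ k
    if h : ∃ n, i < n ∧ ℓ (σ n) ≤ ℓ (σ i) then Nat.find h else i

open scoped Classical in
/-- From any sequence along which `ℓ` tends to `0`, one can extract a sequence with the same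
starting point along which `ℓ` decreases to `0`, without increasing the weighted length. -/
lemma exists_antitone_subsequence {X : Type*} [MetricSpace X] (ℓ : X → ℝ)
    (hℓ0 : ∀ x, 0 ≤ ℓ x) (σ : ℕ → X)
    (hT : Tendsto (fun n => ℓ (σ n)) atTop (𝓝 0)) :
    ∃ τ : ℕ → X, τ 0 = σ 0 ∧ Antitone (fun n => ℓ (τ n)) ∧
      Tendsto (fun n => ℓ (τ n)) atTop (𝓝 0) ∧
      ∑' n, ENNReal.ofReal (ℓ (τ n)) * edist (τ n) (τ (n + 1)) ≤
        ∑' n, ENNReal.ofReal (ℓ (σ n)) * edist (σ n) (σ (n + 1)) := by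
  set φ := recIdx ℓ σ with hφ
  have hstep : ∀ k, φ (k+1) = if h : ∃ n, φ k < n ∧ ℓ (σ n) ≤ ℓ (σ (φ k)) then Nat.find h else φ k := by
    intro k; rfl
  -- monotonicity of φ
  have hmono : ∀ k, φ k ≤ φ (k+1) := by
    intro k; rw [hstep k]
    split_ifs with h
    · exact (Nat.find_spec h).1.le
    · rfl
  -- ℓ along φ is antitone stepwise
  have hanti1 : ∀ k, ℓ (σ (φ (k+1))) ≤ ℓ (σ (φ k)) := by
    intro k; rw [hstep k]
    split_ifs with h
    · exact (Nat.find_spec h).2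
    · rfl
  have hanti : Antitone (fun k => ℓ (σ (φ k))) :=
    antitone_nat_of_succ_le hanti1
  -- if ℓ(σ (φ k)) > 0 then the step is strict
  have hstrict : ∀ k, 0 < ℓ (σ (φ k)) → φ k < φ (k+1) := by
    intro k hk
    have h : ∃ n, φ k < n ∧ ℓ (σ n) ≤ ℓ (σ (φ k)) := by
      have := (hT.eventually_lt_const hk).and (eventually_ge_atTop (φ k + 1))
      obtain ⟨n, hn1, hn2⟩ := this.exists
      exact ⟨n, hn2, hn1.le⟩
    rw [hstep k, dif_pos h]
    exact (Nat.find_spec h).1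
  -- minimality: ℓ (σ (φ k)) ≤ ℓ (σ j) for j ∈ [φ k, φ (k+1))
  have hmin : ∀ k, ∀ j, φ k ≤ j → j < φ (k+1) → ℓ (σ (φ k)) ≤ ℓ (σ j) := by
    intro k j hj1 hj2
    rcases eq_or_lt_of_le hj1 with rfl | hlt
    · rfl
    rw [hstep k] at hj2
    split_ifs at hj2 with h
    · have := Nat.find_min h hj2
      push_neg at this
      exact (this hlt).le
    · omega
  refine ⟨fun k => σ (φ k), rfl, hanti, ?_, ?_⟩
  · -- tendsto 0
    by_cases hz : ∃ k, ℓ (σ (φ k)) = 0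
    · obtain ⟨k, hk⟩ := hz
      have : ∀ m, k ≤ m → ℓ (σ (φ m)) = 0 := fun m hm =>
        le_antisymm (hk ▸ hanti hm) (hℓ0 _)
      exact Tendsto.congr' (by filter_upwards [eventually_ge_atTop k] with m hm using (this m hm).symm)
        tendsto_const_nhds
    · push_neg at hz
      have hpos : ∀ k, 0 < ℓ (σ (φ k)) := fun k => (hℓ0 _).lt_of_ne' (hz k)
      have hsm : StrictMono φ := strictMono_nat_of_lt_succ fun k => hstrict k (hpos k)
      exact hT.comp hsm.tendsto_atTop
  · -- sum bound
    set f : ℕ → ℝ≥0∞ := fun n => ENNReal.ofReal (ℓ (σ n)) * edist (σ n) (σ (n + 1)) with hf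
    set g : ℕ → ℝ≥0∞ := fun k => ENNReal.ofReal (ℓ (σ (φ k))) * edist (σ (φ k)) (σ (φ (k+1))) with hg
    have hblock : ∀ k, g k ≤ ∑ j ∈ Finset.Ico (φ k) (φ (k+1)), f j := by
      intro k
      calc g k ≤ ENNReal.ofReal (ℓ (σ (φ k))) *
            ∑ j ∈ Finset.Ico (φ k) (φ (k+1)), edist (σ j) (σ (j+1)) := by
              exact mul_le_mul_right (edist_le_Ico_sum_edist σ (hmono k)) _
        _ = ∑ j ∈ Finset.Ico (φ k) (φ (k+1)),
              ENNReal.ofReal (ℓ (σ (φ k))) * edist (σ j) (σ (j+1)) := by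
              rw [Finset.mul_sum]
        _ ≤ ∑ j ∈ Finset.Ico (φ k) (φ (k+1)), f j := by
              refine Finset.sum_le_sum fun j hj => ?_
              rw [Finset.mem_Ico] at hj
              exact mul_le_mul_left (ENNReal.ofReal_le_ofReal (hmin k j hj.1 hj.2)) _
    have hpartial : ∀ K, ∑ k ∈ Finset.range K, g k ≤ ∑ j ∈ Finset.range (φ K), f j := by
      intro K
      induction K with
      | zero => simp
      | succ K ih =>
        rw [Finset.sum_range_succ]
        calc ∑ k ∈ Finset.range K, g k + g K
            ≤ ∑ j ∈ Finset.range (φ K), f j + ∑ j ∈ Finset.Ico (φ K) (φ (K+1)), f j :=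
              add_le_add ih (hblock K)
          _ = ∑ j ∈ Finset.range (φ (K+1)), f j := Finset.sum_range_add_sum_Ico f (hmono K)
    calc ∑' k, g k = ⨆ K, ∑ k ∈ Finset.range K, g k := ENNReal.tsum_eq_iSup_nat
      _ ≤ ∑' n, f n := iSup_le fun K => (hpartial K).trans (ENNReal.sum_le_tsum _)

/-- The value `u₀(x)` is unchanged if the infimum is restricted to sequences along which
`ℓ` is decreasing (to `0`). -/
theorem series_formula_decreasing_sequences {X : Type*} [MetricSpace X]
    (ℓ : X → ℝ) (hℓ : LowerSemicontinuous ℓ)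
    (hℓ0 : ∀ x, 0 ≤ ℓ x) (hinfℓ : ⨅ x, ℓ x = 0)
    (H0 : ∃ σ : ℕ → X, Tendsto (fun n => ℓ (σ n)) atTop (𝓝 0) ∧
      ∑' n, ENNReal.ofReal (ℓ (σ n)) * edist (σ n) (σ (n + 1)) < ⊤)
    (x : X) :
    (⨅ (σ : ℕ → X) (_ : σ 0 = x ∧ Tendsto (fun n => ℓ (σ n)) atTop (𝓝 0)),
        ∑' n, ENNReal.ofReal (ℓ (σ n)) * edist (σ n) (σ (n + 1))) =
    ⨅ (σ : ℕ → X) (_ : σ 0 = x ∧ Antitone (fun n => ℓ (σ n)) ∧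
        Tendsto (fun n => ℓ (σ n)) atTop (𝓝 0)),
      ∑' n, ENNReal.ofReal (ℓ (σ n)) * edist (σ n) (σ (n + 1)) := by
  apply le_antisymm
  · refine le_iInf fun τ => le_iInf fun h => ?_
    exact iInf_le_of_le τ (iInf_le _ ⟨h.1, h.2.2⟩)
  · refine le_iInf fun σ => le_iInf fun h => ?_
    obtain ⟨τ, ht0, hA, hT', hsum⟩ := exists_antitone_subsequence ℓ hℓ0 σ h.2
    exact le_trans (iInf_le_of_le τ (iInf_le _ ⟨h.1 ▸ ht0, hA, hT'⟩)) hsum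
end

section
/- Let X be a compact metric space, λ > 0, and ℓ : X → [0,∞) a bounded lsc function with inf_X ℓ = 0. If u, v : X → ℝ are bounded lsc functions with inf_X u = inf_X v = 0 such that λ u + G[u] ≤ ℓ pointwise and λ v + G[v] ≥ ℓ pointwise, then u ≤ v on X. -/
open Filter Topology ENNReal

/-- From an `EReal` inequality `a + g ≤ L` with `a, L` real, deduce
`g ≤ ofReal (L - a)` in `ℝ≥0∞`. -/
lemma ennreal_le_of_ereal_add_le {a L : ℝ} {g : ℝ≥0∞}
    (h : (a : EReal) + (g : EReal) ≤ (L : EReal)) :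
    g ≤ ENNReal.ofReal (L - a) := by
  have hg : g ≠ ⊤ := by
    intro htop
    rw [htop, EReal.coe_ennreal_top, EReal.coe_add_top] at h
    exact (EReal.coe_ne_top L) (top_le_iff.1 h)
  have hcoe : ((g.toReal : ℝ) : EReal) = (g : EReal) := by
    rw [← EReal.toReal_coe_ennreal (x := g)]
    exact EReal.coe_toReal (by simpa [EReal.coe_ennreal_eq_top_iff] using hg)
      (EReal.coe_ennreal_ne_bot g)
  rw [← hcoe, ← EReal.coe_add, EReal.coe_le_coe_iff] at h
  calc g = ENNReal.ofReal g.toReal := (ENNReal.ofReal_toReal hg).symm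
    _ ≤ ENNReal.ofReal (L - a) := ENNReal.ofReal_le_ofReal (by linarith)

/-- From an `EReal` inequality `L ≤ a + g` with `a, L` real, deduce
`ofReal (L - a) ≤ g` in `ℝ≥0∞`. -/
lemma ennreal_ofReal_le_of_ereal_le_add {a L : ℝ} {g : ℝ≥0∞}
    (h : (L : EReal) ≤ (a : EReal) + (g : EReal)) :
    ENNReal.ofReal (L - a) ≤ g := by
  rcases eq_or_ne g ⊤ with rfl | hg
  · exact le_top
  have hcoe : ((g.toReal : ℝ) : EReal) = (g : EReal) := by
    rw [← EReal.toReal_coe_ennreal (x := g)]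
    exact EReal.coe_toReal (by simpa [EReal.coe_ennreal_eq_top_iff] using hg)
      (EReal.coe_ennreal_ne_bot g)
  rw [← hcoe, ← EReal.coe_add, EReal.coe_le_coe_iff] at h
  calc ENNReal.ofReal (L - a) ≤ ENNReal.ofReal g.toReal :=
        ENNReal.ofReal_le_ofReal (by linarith)
    _ = g := ENNReal.ofReal_toReal hg

/-- A lower semicontinuous function, bounded below, on a nonempty compact space
attains its minimum. -/
lemma lsc_exists_min {X : Type*} [TopologicalSpace X] [CompactSpace X] [Nonempty X]
    (g : X → ℝ) (hg : LowerSemicontinuous g) (hb : BddBelow (Set.range g)) :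
    ∃ x, ∀ y, g x ≤ g y := by
  set m := ⨅ y, g y with hm
  set t : ℕ → Set X := fun n => g ⁻¹' Set.Iic (m + 1 / (n + 1)) with ht
  have hcl : ∀ n, IsClosed (t n) := fun n => hg.isClosed_preimage _
  have hne : ∀ n, (t n).Nonempty := by
    intro n
    have h1 : m < m + 1 / (n + 1 : ℝ) := by
      have : (0 : ℝ) < 1 / (n + 1) := by positivity
      linarith
    obtain ⟨x, hx⟩ := exists_lt_of_ciInf_lt (hm ▸ h1)
    exact ⟨x, hx.le⟩
  have hsub : ∀ n, t (n + 1) ⊆ t n := by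
    intro n x hx
    have h2 : (1 : ℝ) / (n + 1 + 1) ≤ 1 / (n + 1) := by
      apply one_div_le_one_div_of_le
      · positivity
      · linarith
    have hx' : g x ≤ m + 1 / (n + 1 + 1 : ℝ) := by
      simpa [ht] using hx
    simp only [ht, Set.mem_preimage, Set.mem_Iic]
    push_cast
    push_cast at hx'
    linarith
  obtain ⟨x, hx⟩ := IsCompact.nonempty_iInter_of_sequence_nonempty_isCompact_isClosed t
    hsub hne ((hcl 0).isCompact) hcl
  refine ⟨x, fun y => ?_⟩
  have hxm : g x ≤ m := by
    refine le_of_forall_pos_le_add fun ε hε => ?_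
    obtain ⟨n, hn⟩ := exists_nat_one_div_lt hε
    have hxn : g x ≤ m + 1 / (n + 1 : ℝ) := by
      have := Set.mem_iInter.1 hx n
      simpa [ht] using this
    push_cast at hxn hn
    linarith
  exact hxm.trans (ciInf_le hb y)

/-- Comparison principle (compact case): on a compact metric space, a bounded lsc subsolution
lies below any bounded lsc supersolution of `λ w + G[w] = ℓ` (λ > 0, ℓ bounded lsc with
`inf ℓ = 0`). -/
theorem comparison_principle_compact {X : Type*} [MetricSpace X] [CompactSpace X] [Nonempty X]
    (lam : ℝ) (hlam : 0 < lam)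
    (ℓ : X → ℝ) (hℓ : LowerSemicontinuous ℓ) (hℓ0 : ∀ x, 0 ≤ ℓ x)
    (hℓb : ∃ M : ℝ, ∀ x, ℓ x ≤ M) (hinfℓ : ⨅ x, ℓ x = 0)
    (u v : X → ℝ) (hu : LowerSemicontinuous u) (hv : LowerSemicontinuous v)
    (hub : ∃ M : ℝ, ∀ x, |u x| ≤ M) (hvb : ∃ M : ℝ, ∀ x, |v x| ≤ M)
    (hinfu : ⨅ x, u x = 0) (hinfv : ⨅ x, v x = 0)
    (hsub : ∀ x, ((lam * u x : ℝ) : EReal) + (gslope u x : EReal) ≤ (ℓ x : EReal))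
    (hsup : ∀ x, (ℓ x : EReal) ≤ ((lam * v x : ℝ) : EReal) + (gslope v x : EReal)) :
    ∀ x, u x ≤ v x := by
  obtain ⟨Mu, hMu⟩ := hub
  obtain ⟨Mv, hMv⟩ := hvb
  obtain ⟨Mℓ, hMℓ⟩ := hℓb
  -- u ≥ 0
  have hubdd : BddBelow (Set.range u) := by
    refine ⟨-Mu, ?_⟩
    rintro _ ⟨x, rfl⟩
    linarith [(abs_le.1 (hMu x)).1]
  have hu0 : ∀ x, 0 ≤ u x := fun x => hinfu ▸ ciInf_le hubdd x
  -- λ u ≤ ℓ pointwise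
  have hsub0 : ∀ x, lam * u x ≤ ℓ x := by
    intro x
    have h := hsub x
    have hge : ((lam * u x : ℝ) : EReal) ≤ ((lam * u x : ℝ) : EReal) + (gslope u x : EReal) :=
      le_add_of_nonneg_right (EReal.coe_ennreal_nonneg _)
    exact_mod_cast hge.trans h
  -- key subsolution inequality
  have hkey : ∀ x y, u x - u y ≤ (ℓ x - lam * u x) * dist x y := by
    intro x y
    rcases eq_or_ne y x with rfl | hyx
    · simp
    · have hd : 0 < dist x y := dist_pos.2 (Ne.symm hyx)
      have hgle : gslope u x ≤ ENNReal.ofReal (ℓ x - lam * u x) :=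
        ennreal_le_of_ereal_add_le (hsub x)
      have h1 : ENNReal.ofReal ((u x - u y) / dist x y) ≤ ENNReal.ofReal (ℓ x - lam * u x) := by
        refine le_trans ?_ hgle
        exact le_iSup₂ (f := fun (y : X) (_ : y ≠ x) => ENNReal.ofReal ((u x - u y) / dist x y))
          y hyx
      have h2 : (u x - u y) / dist x y ≤ ℓ x - lam * u x := by
        rcases le_or_gt ((u x - u y) / dist x y) 0 with h | h
        · linarith [hsub0 x]
        · exact (ENNReal.ofReal_le_ofReal_iff (by linarith [hsub0 x])).1 h1
      calc u x - u y = (u x - u y) / dist x y * dist x y := by field_simp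
        _ ≤ (ℓ x - lam * u x) * dist x y := mul_le_mul_of_nonneg_right h2 hd.le
  -- u is Lipschitz, hence continuous
  have hulip : ∀ x y, u x - u y ≤ Mℓ * dist x y := by
    intro x y
    refine (hkey x y).trans (mul_le_mul_of_nonneg_right ?_ dist_nonneg)
    have := mul_nonneg hlam.le (hu0 x)
    linarith [hMℓ x]
  have hucont : Continuous u := by
    refine LipschitzWith.continuous (K := Real.toNNReal Mℓ) ?_
    refine LipschitzWith.of_dist_le_mul fun x y => ?_
    rw [Real.dist_eq, Real.coe_toNNReal']
    have h1 := hulip x y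
    have h2 := hulip y x
    rw [dist_comm y x] at h2
    have hmax : Mℓ * dist x y ≤ max Mℓ 0 * dist x y :=
      mul_le_mul_of_nonneg_right (le_max_left _ _) dist_nonneg
    rw [abs_sub_le_iff]
    constructor <;> linarith
  -- v - u is lsc, attains its min
  have hglsc : LowerSemicontinuous (fun x => v x - u x) := by
    have : LowerSemicontinuous fun x => -u x := (hucont.neg).lowerSemicontinuous
    simpa [sub_eq_add_neg] using hv.add this
  have hgbdd : BddBelow (Set.range fun x => v x - u x) := by
    refine ⟨-Mv - Mu, ?_⟩
    rintro _ ⟨x, rfl⟩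
    have h1 := (abs_le.1 (hMv x)).1
    have h2 := (abs_le.1 (hMu x)).2
    simp only
    linarith
  obtain ⟨z, hz⟩ := lsc_exists_min _ hglsc hgbdd
  -- suppose u > v somewhere
  intro x0
  by_contra hcon
  push_neg at hcon
  set M := u z - v z with hMdef
  have hM : 0 < M := by
    have := hz x0
    simp only [hMdef]
    linarith
  set ε := lam * M / 2 with hε
  have hεpos : 0 < ε := by positivity
  rcases le_or_gt (ℓ z - lam * v z) ε with hc | hc
  · -- case A: λ v z ≥ ℓ z - ε : use λ u z ≤ ℓ z
    have := hsub0 z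
    have : lam * M ≤ ε := by
      simp only [hMdef]
      nlinarith
    rw [hε] at this
    nlinarith
  · -- case B: there is y ≠ z with (v z - v y)/d > ℓ z - λ v z - ε
    have hgge : ENNReal.ofReal (ℓ z - lam * v z) ≤ gslope v z :=
      ennreal_ofReal_le_of_ereal_le_add (hsup z)
    have hlt : ENNReal.ofReal (ℓ z - lam * v z - ε) < gslope v z := by
      refine lt_of_lt_of_le ?_ hgge
      exact (ENNReal.ofReal_lt_ofReal_iff (by linarith)).2 (by linarith)
    rw [gslope, lt_iSup_iff] at hlt
    obtain ⟨y, hy⟩ := hlt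
    rw [lt_iSup_iff] at hy
    obtain ⟨hyz, hy⟩ := hy
    have hd : 0 < dist z y := dist_pos.2 (Ne.symm hyz)
    have hyv : ℓ z - lam * v z - ε < (v z - v y) / dist z y := by
      by_contra hle
      push_neg at hle
      exact absurd (ENNReal.ofReal_le_ofReal hle) (not_le.2 hy)
    have hyv' : (ℓ z - lam * v z - ε) * dist z y < v z - v y :=
      (lt_div_iff₀ hd).1 hyv
    have hku := hkey z y
    have hzy := hz y
    nlinarith [mul_pos (mul_pos hlam hM) hd]
end

section
/- Let X be a complete metric space, λ > 0, and ℓ : X → [0,∞) a bounded lsc function with inf_X ℓ = 0. If u, v : X → ℝ are bounded lsc functions with inf_X u = inf_X v = 0 satisfying λ u + G[u] ≤ ℓ and λ v + G[v] ≥ ℓ pointwise, then u ≤ v on X. In particular the equation λ w + G[w] = ℓ with inf w = 0 has a unique bounded Lipschitz solution. -/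
open Filter Topology ENNReal

set_option linter.unusedVariables false
set_option linter.unusedSectionVars false

section Aux
variable {X : Type*} [MetricSpace X]

lemma gslope_le_of {u : X → ℝ} {x : X} {K : ℝ} (hK : 0 ≤ K)
    (h : ∀ y, u x - u y ≤ K * dist x y) : gslope u x ≤ ENNReal.ofReal K := by
  refine iSup₂_le fun y hy => ?_
  have hd : 0 < dist x y := dist_pos.mpr (Ne.symm hy)
  exact ENNReal.ofReal_le_ofReal ((div_le_iff₀ hd).mpr (h y))

lemma slope_le_of_gslope_le {u : X → ℝ} {x : X} {K : ℝ} (hK : 0 ≤ K)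
    (h : gslope u x ≤ ENNReal.ofReal K) : ∀ y, u x - u y ≤ K * dist x y := by
  intro y
  rcases eq_or_ne y x with rfl | hy
  · simp
  have hd : 0 < dist x y := dist_pos.mpr (Ne.symm hy)
  rcases le_or_gt (u x - u y) 0 with h0 | h0
  · exact h0.trans (by positivity)
  have h1 : ENNReal.ofReal ((u x - u y) / dist x y) ≤ ENNReal.ofReal K :=
    le_trans (le_iSup₂_of_le y hy le_rfl) h
  exact (div_le_iff₀ hd).mp ((ENNReal.ofReal_le_ofReal_iff hK).mp h1)

lemma ennreal_coe_ereal_of_ne_top {g : ℝ≥0∞} (hg : g ≠ ⊤) :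
    (g : EReal) = ((g.toReal : ℝ) : EReal) := by
  conv_lhs => rw [← ENNReal.ofReal_toReal hg]
  rw [EReal.coe_ennreal_ofReal, max_eq_left ENNReal.toReal_nonneg]

/-- B1 : from the EReal subsolution inequality to the real form. -/
lemma sub_real_of_ereal {lam : ℝ} {ℓ u : X → ℝ} {x : X}
    (h : ((lam * u x : ℝ) : EReal) + (gslope u x : EReal) ≤ (ℓ x : EReal)) :
    lam * u x ≤ ℓ x ∧ ∀ y, u x - u y ≤ (ℓ x - lam * u x) * dist x y := by
  have hg : gslope u x ≠ ⊤ := by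
    intro htop
    rw [htop] at h
    simp only [EReal.coe_ennreal_top] at h
    rw [EReal.add_top_of_ne_bot (EReal.coe_ne_bot _)] at h
    exact (EReal.coe_ne_top (ℓ x)) (top_le_iff.mp h)
  set K := (gslope u x).toReal with hKdef
  have hK0 : (0:ℝ) ≤ K := ENNReal.toReal_nonneg
  rw [ennreal_coe_ereal_of_ne_top hg, ← EReal.coe_add, EReal.coe_le_coe_iff] at h
  refine ⟨by linarith, fun y => ?_⟩
  have hs := slope_le_of_gslope_le hK0 (ENNReal.ofReal_toReal hg).symm.le y
  calc u x - u y ≤ K * dist x y := hs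
    _ ≤ (ℓ x - lam * u x) * dist x y :=
      mul_le_mul_of_nonneg_right (by linarith) dist_nonneg

/-- B2 : converse. -/
lemma ereal_of_sub_real {lam : ℝ} {ℓ u : X → ℝ} {x : X} (h1 : lam * u x ≤ ℓ x)
    (h2 : ∀ y, u x - u y ≤ (ℓ x - lam * u x) * dist x y) :
    ((lam * u x : ℝ) : EReal) + (gslope u x : EReal) ≤ (ℓ x : EReal) := by
  have hb : (0:ℝ) ≤ ℓ x - lam * u x := by linarith
  have hg : (gslope u x : EReal) ≤ ((ℓ x - lam * u x : ℝ) : EReal) := by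
    refine le_trans (EReal.coe_ennreal_le_coe_ennreal_iff.mpr (gslope_le_of hb h2)) ?_
    rw [EReal.coe_ennreal_ofReal, max_eq_left hb]
  calc ((lam * u x : ℝ) : EReal) + (gslope u x : EReal)
      ≤ ((lam * u x : ℝ) : EReal) + ((ℓ x - lam * u x : ℝ) : EReal) := add_le_add_right hg _
    _ = ((ℓ x : ℝ) : EReal) := by rw [← EReal.coe_add]; norm_num

/-- B3 : from the EReal supersolution inequality to a real bound. -/
lemma sup_real_of_ereal {lam : ℝ} {ℓ v : X → ℝ} {x : X}
    (h : (ℓ x : EReal) ≤ ((lam * v x : ℝ) : EReal) + (gslope v x : EReal)) :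
    ∀ K, 0 ≤ K → (∀ y, v x - v y ≤ K * dist x y) → ℓ x ≤ lam * v x + K := by
  intro K hK hs
  have hg : (gslope v x : EReal) ≤ ((K : ℝ) : EReal) := by
    refine le_trans (EReal.coe_ennreal_le_coe_ennreal_iff.mpr (gslope_le_of hK hs)) ?_
    rw [EReal.coe_ennreal_ofReal, max_eq_left hK]
  have : (ℓ x : EReal) ≤ ((lam * v x + K : ℝ) : EReal) := by
    refine h.trans ?_
    rw [EReal.coe_add]
    exact add_le_add_right hg _
  exact EReal.coe_le_coe_iff.mp this

/-- B4 : converse, given any finite global slope bound. -/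
lemma ereal_of_sup_real {lam : ℝ} {ℓ v : X → ℝ} {x : X} {b : ℝ} (hb : 0 ≤ b)
    (hsl : ∀ y, v x - v y ≤ b * dist x y)
    (h : ∀ K, 0 ≤ K → (∀ y, v x - v y ≤ K * dist x y) → ℓ x ≤ lam * v x + K) :
    (ℓ x : EReal) ≤ ((lam * v x : ℝ) : EReal) + (gslope v x : EReal) := by
  have hfin : gslope v x ≠ ⊤ := ((gslope_le_of hb hsl).trans_lt ENNReal.ofReal_lt_top).ne
  set K := (gslope v x).toReal with hKdef
  have hK0 : (0:ℝ) ≤ K := ENNReal.toReal_nonneg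
  have hs := slope_le_of_gslope_le hK0 (ENNReal.ofReal_toReal hfin).symm.le
  have := h K hK0 hs
  rw [ennreal_coe_ereal_of_ne_top hfin, ← EReal.coe_add, EReal.coe_le_coe_iff]
  exact this

end Aux

section Ekeland
variable {X : Type*} [MetricSpace X] [CompleteSpace X]

/-- Weak Ekeland variational principle. -/
lemma weak_ekeland (f : X → ℝ) (hf : LowerSemicontinuous f)
    {B : ℝ} (hB : ∀ x, B ≤ f x) {δ : ℝ} (hδ : 0 < δ) (x₁ : X) :
    ∃ x₀, f x₀ ≤ f x₁ ∧ ∀ y, f x₀ ≤ f y + δ * dist x₀ y := by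
  classical
  set R : X → X → Prop := fun x y => f y + δ * dist x y ≤ f x with hR
  have hRrefl : ∀ x, R x x := fun x => by simp [hR]
  have hRtrans : ∀ x y z, R x y → R y z → R x z := by
    intro x y z h1 h2
    have htri : dist x z ≤ dist x y + dist y z := dist_triangle x y z
    simp only [hR] at *
    nlinarith
  set F : X → Set X := fun x => {y | R x y} with hF
  have hFne : ∀ x, (F x).Nonempty := fun x => ⟨x, hRrefl x⟩
  have hbdd : ∀ x, BddBelow (f '' F x) := fun x => ⟨B, by rintro t ⟨y, -, rfl⟩; exact hB y⟩
  -- choice step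
  have step : ∀ n : ℕ, ∀ x : X, ∃ y, R x y ∧ f y ≤ sInf (f '' F x) + (1/2)^n := by
    intro n x
    have h1 : sInf (f '' F x) < sInf (f '' F x) + (1/2)^n := by
      have : (0:ℝ) < (1/2)^n := by positivity
      linarith
    obtain ⟨t, ⟨y, hy, rfl⟩, ht⟩ := (csInf_lt_iff (hbdd x) ((hFne x).image f)).mp h1
    exact ⟨y, hy, ht.le⟩
  set seq : ℕ → X := fun n => Nat.rec x₁ (fun n xn => (step n xn).choose) n with hseq
  have hseq0 : seq 0 = x₁ := rfl
  have hseqS : ∀ n, seq (n+1) = (step n (seq n)).choose := fun n => rfl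
  have hstep : ∀ n, R (seq n) (seq (n+1)) ∧
      f (seq (n+1)) ≤ sInf (f '' F (seq n)) + (1/2)^n := by
    intro n; rw [hseqS]; exact (step n (seq n)).choose_spec
  have hchain : ∀ n m, n ≤ m → R (seq n) (seq m) := by
    intro n m hnm
    induction m with
    | zero => cases Nat.le_zero.mp hnm; exact hRrefl _
    | succ m ih =>
      rcases Nat.lt_or_ge n (m+1) with h | h
      · exact hRtrans _ _ _ (ih (Nat.lt_succ_iff.mp h)) (hstep m).1
      · have : n = m + 1 := le_antisymm hnm h
        subst this; exact hRrefl _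
  have hanti : ∀ n m, n ≤ m → f (seq m) ≤ f (seq n) := by
    intro n m hnm
    have := hchain n m hnm
    simp only [hR] at this
    nlinarith [dist_nonneg (x := seq n) (y := seq m)]
  have hbddB : BddBelow (Set.range fun n => f (seq n)) := ⟨B, by rintro t ⟨n, rfl⟩; exact hB _⟩
  set L : ℝ := ⨅ n, f (seq n) with hL
  have hfL : Tendsto (fun n => f (seq n)) atTop (𝓝 L) :=
    tendsto_atTop_ciInf (fun n m hnm => hanti n m hnm) hbddB
  have hLle : ∀ n, L ≤ f (seq n) := fun n => ciInf_le hbddB n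
  -- Cauchy
  have hdist : ∀ N n m, N ≤ n → N ≤ m → dist (seq n) (seq m) ≤ (f (seq N) - L)/δ := by
    intro N n m hn hm
    wlog hnm : n ≤ m generalizing n m
    · rw [dist_comm]; exact this m n hm hn (le_of_not_ge hnm)
    have h1 := hchain n m hnm
    simp only [hR] at h1
    have h2 : δ * dist (seq n) (seq m) ≤ f (seq n) - f (seq m) := by linarith
    have h3 : f (seq n) ≤ f (seq N) := hanti N n hn
    have h4 : L ≤ f (seq m) := hLle m
    rw [le_div_iff₀ hδ]; nlinarith
  have hcauchy : CauchySeq seq := by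
    refine cauchySeq_of_le_tendsto_0 (fun N => (f (seq N) - L)/δ)
      (fun n m N hn hm => hdist N n m hn hm) ?_
    have : Tendsto (fun N => (f (seq N) - L)/δ) atTop (𝓝 ((L - L)/δ)) :=
      ((hfL.sub tendsto_const_nhds).div_const δ)
    simpa using this
  obtain ⟨x₀, hx₀⟩ := cauchySeq_tendsto_of_complete hcauchy
  -- f x₀ ≤ L
  have hfx₀ : f x₀ ≤ L := by
    by_contra hc
    push_neg at hc
    obtain ⟨c, hc1, hc2⟩ := exists_between hc
    have hev : ∀ᶠ n in atTop, c < f (seq n) := (hx₀.eventually (hf x₀ c hc2))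
    have : c ≤ L := ge_of_tendsto hfL (hev.mono fun n hn => hn.le)
    linarith
  -- x₀ ∈ F (seq n)
  have hmem : ∀ n, R (seq n) x₀ := by
    intro n
    have h1 : ∀ᶠ m in atTop, f (seq m) + δ * dist (seq n) (seq m) ≤ f (seq n) := by
      filter_upwards [eventually_ge_atTop n] with m hm
      exact hchain n m hm
    have h2 : Tendsto (fun m => f (seq m) + δ * dist (seq n) (seq m)) atTop
        (𝓝 (L + δ * dist (seq n) x₀)) :=
      hfL.add (((continuous_const.dist continuous_id).tendsto x₀ |>.comp hx₀ |>.const_mul δ))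
    have h3 : L + δ * dist (seq n) x₀ ≤ f (seq n) := le_of_tendsto h2 h1
    have : f x₀ + δ * dist (seq n) x₀ ≤ f (seq n) := by linarith
    exact this
  refine ⟨x₀, ?_, ?_⟩
  · have := hmem 0
    simp only [hR, hseq0] at this
    nlinarith [dist_nonneg (x := x₁) (y := x₀)]
  · intro y
    by_contra hy
    push_neg at hy
    have hymem : ∀ n, R (seq n) y := by
      intro n
      have h1 : dist (seq n) y ≤ dist (seq n) x₀ + dist x₀ y := dist_triangle _ _ _
      have h2 := hmem n
      simp only [hR] at h2 ⊢
      nlinarith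
    have hylb : ∀ n : ℕ, L - (1/2)^n ≤ f y := by
      intro n
      have h1 : f y ∈ f '' F (seq n) := ⟨y, hymem n, rfl⟩
      have h2 : sInf (f '' F (seq n)) ≤ f y := csInf_le (hbdd _) h1
      have h3 := (hstep n).2
      have h4 := hLle (n+1)
      linarith
    have hyL : L ≤ f y := by
      have h1 : Tendsto (fun n : ℕ => L - (1/2)^n) atTop (𝓝 (L - 0)) :=
        tendsto_const_nhds.sub (tendsto_pow_atTop_nhds_zero_of_lt_one (by norm_num) (by norm_num))
      have := le_of_tendsto' (by simpa using h1) hylb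
      simpa using this
    nlinarith [dist_nonneg (x := x₀) (y := y), hfx₀, hy]
end Ekeland


section CP
variable {X : Type*} [MetricSpace X] [CompleteSpace X] [Nonempty X]

/-- Comparison principle, real form. -/
lemma comparison_real {lam : ℝ} (hlam : 0 < lam) {ℓ u v : X → ℝ}
    {Mℓ : ℝ} (hℓM : ∀ x, ℓ x ≤ Mℓ)
    (hv : LowerSemicontinuous v)
    {Mu : ℝ} (hub : ∀ x, |u x| ≤ Mu)
    (hu0 : ∀ x, 0 ≤ u x) (hv0 : ∀ x, 0 ≤ v x)
    (hsub : ∀ x, lam * u x ≤ ℓ x ∧ ∀ y, u x - u y ≤ (ℓ x - lam * u x) * dist x y)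
    (hsup : ∀ x, ∀ K, 0 ≤ K → (∀ y, v x - v y ≤ K * dist x y) → ℓ x ≤ lam * v x + K) :
    ∀ x, u x ≤ v x := by
  have hMℓ0 : 0 ≤ Mℓ := by
    have x0 := Classical.arbitrary X
    have h1 := (hsub x0).1
    have h2 := hu0 x0
    have h3 := hℓM x0
    nlinarith
  -- u is Lipschitz with constant Mℓ
  have hulip : ∀ x y, u x - u y ≤ Mℓ * dist x y := by
    intro x y
    refine le_trans ((hsub x).2 y) (mul_le_mul_of_nonneg_right ?_ dist_nonneg)
    nlinarith [hu0 x, hℓM x]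
  have hucont : Continuous u := by
    refine LipschitzWith.continuous (K := Real.toNNReal Mℓ) ?_
    refine LipschitzWith.of_dist_le_mul fun x y => ?_
    rw [Real.dist_eq, Real.coe_toNNReal _ hMℓ0, abs_sub_le_iff]
    exact ⟨hulip x y, by rw [dist_comm]; exact hulip y x⟩
  -- f := v - u is lsc and bounded below
  set f : X → ℝ := fun x => v x - u x with hfdef
  have hflsc : LowerSemicontinuous f :=
    hv.add (Continuous.lowerSemicontinuous (by continuity : Continuous fun x => -u x))
  have hfB : ∀ x, -Mu ≤ f x := by
    intro x
    have := abs_le.mp (hub x)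
    have := hv0 x
    simp only [hfdef]; linarith
  -- sSup of u - v
  set c : ℝ := sSup (Set.range fun x => u x - v x) with hc
  have hbdd : BddAbove (Set.range fun x => u x - v x) := by
    refine ⟨Mu, ?_⟩
    rintro t ⟨x, rfl⟩
    have := abs_le.mp (hub x)
    have := hv0 x
    dsimp; linarith
  have hle : ∀ x, u x - v x ≤ c := fun x => le_csSup hbdd ⟨x, rfl⟩
  have hkey : ∀ ε > 0, ∀ δ > 0, c ≤ ε + δ / lam := by
    intro ε hε δ hδ
    have h1 : c - ε < c := by linarith
    obtain ⟨t, ⟨x₁, rfl⟩, ht⟩ := exists_lt_of_lt_csSup (Set.range_nonempty _) h1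
    obtain ⟨x₀, h₀1, h₀2⟩ := weak_ekeland f hflsc hfB hδ x₁
    have hx₀ : c - ε < u x₀ - v x₀ := by
      simp only [hfdef] at h₀1; dsimp at ht; linarith
    have hslope : ∀ y, v x₀ - v y ≤ (ℓ x₀ - lam * u x₀ + δ) * dist x₀ y := by
      intro y
      have h2 := h₀2 y
      have h3 := (hsub x₀).2 y
      simp only [hfdef] at h2
      nlinarith [dist_nonneg (x := x₀) (y := y)]
    have hK0 : 0 ≤ ℓ x₀ - lam * u x₀ + δ := by
      have := (hsub x₀).1; linarith
    have h4 := hsup x₀ _ hK0 hslope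
    have h5 : lam * (u x₀ - v x₀) ≤ δ := by linarith
    have h6 : u x₀ - v x₀ ≤ δ / lam := by
      rw [le_div_iff₀ hlam]; linarith
    linarith
  have hc0 : c ≤ 0 := by
    refine le_of_forall_pos_le_add fun ε hε => ?_
    have := hkey (ε/2) (by linarith) (lam * ε/2) (by positivity)
    have h7 : lam * ε / 2 / lam = ε/2 := by field_simp
    rw [h7] at this
    linarith
  intro x
  have := hle x
  linarith

/-- Perron construction: a maximal subsolution which is also a supersolution. -/
lemma perron {lam : ℝ} (hlam : 0 < lam) {ℓ : X → ℝ} (hℓ : LowerSemicontinuous ℓ)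
    (hℓ0 : ∀ x, 0 ≤ ℓ x) {M : ℝ} (hℓM : ∀ x, ℓ x ≤ M) :
    ∃ w : X → ℝ, (∀ x, 0 ≤ w x) ∧ (∀ x, lam * w x ≤ ℓ x) ∧
      (∀ x y, w x - w y ≤ (ℓ x - lam * w x) * dist x y) ∧
      (∀ x, ∀ K, 0 ≤ K → (∀ y, w x - w y ≤ K * dist x y) → ℓ x ≤ lam * w x + K) := by
  classical
  set S : Set (X → ℝ) := {u | (∀ x, 0 ≤ u x) ∧ (∀ x, lam * u x ≤ ℓ x) ∧
      ∀ x y, u x - u y ≤ (ℓ x - lam * u x) * dist x y} with hS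
  have h0S : (fun _ : X => (0:ℝ)) ∈ S := by
    refine ⟨fun x => le_rfl, fun x => by simpa using hℓ0 x, fun x y => ?_⟩
    simp only [sub_zero, mul_zero, sub_self]
    exact mul_nonneg (hℓ0 x) dist_nonneg
  have hSb : ∀ u ∈ S, ∀ x, u x ≤ M / lam := by
    intro u hu x
    rw [le_div_iff₀ hlam]
    have := hu.2.1 x
    have := hℓM x
    nlinarith
  set w : X → ℝ := fun x => sSup ((fun u : X → ℝ => u x) '' S) with hw
  have hne : ∀ x : X, ((fun u : X → ℝ => u x) '' S).Nonempty := fun x => ⟨0, ⟨_, h0S, rfl⟩⟩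
  have hbdd : ∀ x : X, BddAbove ((fun u : X → ℝ => u x) '' S) := by
    intro x
    exact ⟨M / lam, by rintro t ⟨u, hu, rfl⟩; exact hSb u hu x⟩
  have hwge : ∀ u ∈ S, ∀ x, u x ≤ w x := fun u hu x => le_csSup (hbdd x) ⟨u, hu, rfl⟩
  have hwle : ∀ x B, (∀ u ∈ S, u x ≤ B) → w x ≤ B := by
    intro x B hB
    exact csSup_le (hne x) (by rintro t ⟨u, hu, rfl⟩; exact hB u hu)
  have hwapprox : ∀ x, ∀ ε > 0, ∃ u ∈ S, w x - ε < u x := by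
    intro x ε hε
    have : w x - ε < w x := by linarith
    obtain ⟨t, ⟨u, hu, rfl⟩, ht⟩ := exists_lt_of_lt_csSup (hne x) this
    exact ⟨u, hu, ht⟩
  have hw0 : ∀ x, 0 ≤ w x := fun x => hwge _ h0S x
  have hwℓ : ∀ x, lam * w x ≤ ℓ x := by
    intro x
    have : w x ≤ ℓ x / lam := hwle x _ (fun u hu => by
      rw [le_div_iff₀ hlam]; have := hu.2.1 x; nlinarith)
    rw [le_div_iff₀ hlam] at this
    nlinarith
  have hwslope : ∀ x y, w x - w y ≤ (ℓ x - lam * w x) * dist x y := by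
    intro x y
    refine le_of_forall_pos_le_add fun ε' hε' => ?_
    set d := dist x y with hd
    have hd0 : 0 ≤ d := dist_nonneg
    have hden : (0:ℝ) < 1 + lam * d := by positivity
    set ε := ε' / (1 + lam * d) with hε
    have hε0 : 0 < ε := by positivity
    obtain ⟨u, hu, hux⟩ := hwapprox x ε hε0
    have h1 : w y ≥ u y := hwge u hu y
    have h2 := hu.2.2 x y
    have h3 : (ℓ x - lam * u x) * d ≤ (ℓ x - lam * w x) * d + lam * ε * d := by
      have h31 : w x - u x ≤ ε := by linarith
      have h32 : lam * (w x - u x) * d ≤ lam * ε * d :=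
        mul_le_mul_of_nonneg_right (mul_le_mul_of_nonneg_left h31 hlam.le) hd0
      nlinarith [h32]
    have h4 : w x - w y ≤ ε + (ℓ x - lam * u x) * d := by linarith
    have h5 : ε * (1 + lam * d) = ε' := by rw [hε]; field_simp
    nlinarith
  have hwS : w ∈ S := ⟨hw0, hwℓ, hwslope⟩
  refine ⟨w, hw0, hwℓ, hwslope, ?_⟩
  -- supersolution property
  intro x₀ K hK hslope
  by_contra hcon
  push_neg at hcon
  set θ : ℝ := (ℓ x₀ - lam * w x₀ - K) / 2 with hθ
  have hθ0 : 0 < θ := by rw [hθ]; linarith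
  -- lower semicontinuity of ℓ at x₀
  have hlsc : ∀ᶠ y in 𝓝 x₀, ℓ x₀ - θ/2 < ℓ y := hℓ x₀ _ (by linarith)
  obtain ⟨ρ, hρ0, hρ⟩ := Metric.eventually_nhds_iff.mp hlsc
  set δ : ℝ := min (θ / (2 * lam)) (θ * ρ / 2) with hδdef
  have hδ0 : 0 < δ := by
    apply lt_min
    · positivity
    · positivity
  have hδ1 : lam * δ ≤ θ / 2 := by
    have : δ ≤ θ / (2 * lam) := min_le_left _ _
    rw [le_div_iff₀ (by positivity)] at this
    nlinarith
  have hδ2 : δ / θ < ρ := by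
    have h1 : δ ≤ θ * ρ / 2 := min_le_right _ _
    rw [div_lt_iff₀ hθ0]
    nlinarith
  set ψ : X → ℝ := fun y => w x₀ + δ - (K + θ) * dist x₀ y with hψ
  set φ : X → ℝ := fun y => max (w y) (ψ y) with hφ
  -- active set analysis
  have hA : ∀ x, w x < ψ x → dist x₀ x < ρ ∧ lam * ψ x + (K + θ) < ℓ x := by
    intro x hx
    have h1 : w x₀ - w x ≤ K * dist x₀ x := hslope x
    have h2 : (K + θ) * dist x₀ x < w x₀ - w x + δ := by
      simp only [hψ] at hx; linarith
    have h3 : θ * dist x₀ x < δ := by nlinarith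
    have h4 : dist x₀ x < δ / θ := by rw [lt_div_iff₀ hθ0]; nlinarith
    have h5 : dist x₀ x < ρ := h4.trans hδ2
    have h6 : ℓ x₀ - θ/2 < ℓ x := by
      apply hρ
      rw [dist_comm]; exact h5
    refine ⟨h5, ?_⟩
    have h7 : ψ x ≤ w x₀ + δ := by
      simp only [hψ]
      nlinarith [dist_nonneg (x := x₀) (y := x), hK, hθ0]
    have h8 : lam * ψ x ≤ lam * w x₀ + lam * δ := by nlinarith
    have h9 : ℓ x₀ = lam * w x₀ + K + 2 * θ := by rw [hθ]; ring
    nlinarith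
  have hφS : φ ∈ S := by
    refine ⟨fun x => le_trans (hw0 x) (le_max_left _ _), ?_, ?_⟩
    · intro x
      rcases le_or_gt (ψ x) (w x) with h | h
      · rw [hφ]; simp only [max_eq_left h]; exact hwℓ x
      · have := (hA x h).2
        rw [hφ]; simp only [max_eq_right h.le]
        nlinarith [hK, hθ0]
    · intro x y
      have hφy : ψ y ≤ φ y := le_max_right _ _
      have hwy : w y ≤ φ y := le_max_left _ _
      rcases le_or_gt (ψ x) (w x) with h | h
      · rw [hφ]; simp only [max_eq_left h]
        have := hwslope x y
        linarith [hwy]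
      · have hAx := hA x h
        rw [hφ]
        simp only [max_eq_right h.le]
        have h1 : ψ x - ψ y = (K + θ) * (dist x₀ y - dist x₀ x) := by
          simp only [hψ]; ring
        have h2 : dist x₀ y - dist x₀ x ≤ dist x y := by
          have := dist_triangle x₀ x y
          linarith
        have h3 : ψ x - ψ y ≤ (K + θ) * dist x y := by
          rw [h1]
          exact mul_le_mul_of_nonneg_left h2 (by linarith)
        have h4 : (K + θ) ≤ ℓ x - lam * ψ x := by linarith [hAx.2]
        calc ψ x - φ y ≤ ψ x - ψ y := by linarith
          _ ≤ (K + θ) * dist x y := h3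
          _ ≤ (ℓ x - lam * ψ x) * dist x y :=
            mul_le_mul_of_nonneg_right h4 dist_nonneg
  -- contradiction
  have h1 : φ x₀ ≤ w x₀ := hwge φ hφS x₀
  have h2 : ψ x₀ = w x₀ + δ := by simp [hψ]
  have h3 : ψ x₀ ≤ φ x₀ := le_max_right _ _
  linarith

end CP

/-- Comparison principle (complete case) and uniqueness: on a complete metric space with
λ > 0 and ℓ bounded lsc, `inf ℓ = 0`, every bounded lsc subsolution lies below every bounded
lsc supersolution; in particular the equation `λ w + G[w] = ℓ`, `inf w = 0` has a unique
bounded Lipschitz solution. -/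
theorem comparison_principle_complete_and_uniqueness {X : Type*} [MetricSpace X]
    [CompleteSpace X] [Nonempty X]
    (lam : ℝ) (hlam : 0 < lam)
    (ℓ : X → ℝ) (hℓ : LowerSemicontinuous ℓ) (hℓ0 : ∀ x, 0 ≤ ℓ x)
    (hℓb : ∃ M : ℝ, ∀ x, ℓ x ≤ M) (hinfℓ : ⨅ x, ℓ x = 0)
    (u v : X → ℝ) (hu : LowerSemicontinuous u) (hv : LowerSemicontinuous v)
    (hub : ∃ M : ℝ, ∀ x, |u x| ≤ M) (hvb : ∃ M : ℝ, ∀ x, |v x| ≤ M)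
    (hinfu : ⨅ x, u x = 0) (hinfv : ⨅ x, v x = 0)
    (hsub : ∀ x, ((lam * u x : ℝ) : EReal) + (gslope u x : EReal) ≤ (ℓ x : EReal))
    (hsup : ∀ x, (ℓ x : EReal) ≤ ((lam * v x : ℝ) : EReal) + (gslope v x : EReal)) :
    (∀ x, u x ≤ v x) ∧
    ∃! w : X → ℝ, (∃ M : ℝ, ∀ x, |w x| ≤ M) ∧ (∃ K : NNReal, LipschitzWith K w) ∧
      (⨅ x, w x = 0) ∧
      ∀ x, ((lam * w x : ℝ) : EReal) + (gslope w x : EReal) = (ℓ x : EReal) := by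
  obtain ⟨M, hℓM⟩ := hℓb
  obtain ⟨Mu, hub⟩ := hub
  obtain ⟨Mv, hvb⟩ := hvb
  have hM0 : 0 ≤ M := le_trans (hℓ0 (Classical.arbitrary X)) (hℓM (Classical.arbitrary X))
  -- nonnegativity from inf = 0
  have nonneg_of_inf : ∀ (f : X → ℝ) (Mf : ℝ), (∀ x, |f x| ≤ Mf) → (⨅ x, f x = 0) →
      ∀ x, 0 ≤ f x := by
    intro f Mf hMf hinf x
    have hbdd : BddBelow (Set.range f) := ⟨-Mf, by rintro t ⟨y, rfl⟩; exact (abs_le.mp (hMf y)).1⟩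
    have := ciInf_le hbdd x
    rw [hinf] at this
    exact this
  have hu0 : ∀ x, 0 ≤ u x := nonneg_of_inf u Mu hub hinfu
  have hv0 : ∀ x, 0 ≤ v x := nonneg_of_inf v Mv hvb hinfv
  -- real forms
  have hsubR : ∀ x, lam * u x ≤ ℓ x ∧ ∀ y, u x - u y ≤ (ℓ x - lam * u x) * dist x y :=
    fun x => sub_real_of_ereal (hsub x)
  have hsupR : ∀ x, ∀ K, 0 ≤ K → (∀ y, v x - v y ≤ K * dist x y) → ℓ x ≤ lam * v x + K :=
    fun x => sup_real_of_ereal (hsup x)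
  constructor
  · exact comparison_real hlam hℓM hv hub hu0 hv0 hsubR hsupR
  -- existence
  obtain ⟨w, hw0, hwℓ, hwslope, hwsup⟩ := perron hlam hℓ hℓ0 hℓM
  have hwb : ∀ x, |w x| ≤ M / lam := by
    intro x
    rw [abs_le]
    constructor
    · have := hw0 x; have : 0 ≤ M / lam := by positivity
      linarith [hw0 x]
    · rw [le_div_iff₀ hlam]
      have := hwℓ x; have := hℓM x; nlinarith
  have hwslopeM : ∀ x y, w x - w y ≤ M * dist x y := by
    intro x y
    refine le_trans (hwslope x y) (mul_le_mul_of_nonneg_right ?_ dist_nonneg)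
    have := hℓM x
    have h1 : 0 ≤ lam * w x := mul_nonneg hlam.le (hw0 x)
    linarith
  have hwlip : LipschitzWith (Real.toNNReal M) w := by
    refine LipschitzWith.of_dist_le_mul fun x y => ?_
    rw [Real.dist_eq, Real.coe_toNNReal _ hM0, abs_sub_le_iff]
    exact ⟨hwslopeM x y, by rw [dist_comm]; exact hwslopeM y x⟩
  have hwcont : Continuous w := hwlip.continuous
  have hwbddB : BddBelow (Set.range w) := ⟨0, by rintro t ⟨y, rfl⟩; exact hw0 y⟩
  have hwinf : ⨅ x, w x = 0 := by
    refine le_antisymm ?_ (le_ciInf hw0)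
    refine le_of_forall_pos_le_add fun ε hε => ?_
    have h1 : ⨅ x, ℓ x < lam * ε := by rw [hinfℓ]; positivity
    obtain ⟨x, hx⟩ := exists_lt_of_ciInf_lt h1
    have h2 : w x < ε := by
      have := hwℓ x
      nlinarith
    have := ciInf_le hwbddB x
    linarith
  have hweq : ∀ x, ((lam * w x : ℝ) : EReal) + (gslope w x : EReal) = (ℓ x : EReal) := by
    intro x
    have hb : (0:ℝ) ≤ ℓ x - lam * w x := by linarith [hwℓ x]
    refine le_antisymm (ereal_of_sub_real (hwℓ x) (hwslope x)) ?_
    exact ereal_of_sup_real hb (hwslope x) (hwsup x)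
  refine ⟨w, ⟨⟨M / lam, hwb⟩, ⟨Real.toNNReal M, hwlip⟩, hwinf, hweq⟩, ?_⟩
  -- uniqueness
  rintro w' ⟨⟨Mw', hw'b⟩, ⟨K', hw'lip⟩, hw'inf, hw'eq⟩
  have hw'cont : Continuous w' := hw'lip.continuous
  have hw'lsc : LowerSemicontinuous w' := hw'cont.lowerSemicontinuous
  have hwlsc : LowerSemicontinuous w := hwcont.lowerSemicontinuous
  have hw'0 : ∀ x, 0 ≤ w' x := nonneg_of_inf w' Mw' hw'b hw'inf
  have hw'subR : ∀ x, lam * w' x ≤ ℓ x ∧ ∀ y, w' x - w' y ≤ (ℓ x - lam * w' x) * dist x y :=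
    fun x => sub_real_of_ereal (hw'eq x).le
  have hw'supR : ∀ x, ∀ K, 0 ≤ K → (∀ y, w' x - w' y ≤ K * dist x y) → ℓ x ≤ lam * w' x + K :=
    fun x => sup_real_of_ereal (hw'eq x).ge
  have hwsubR : ∀ x, lam * w x ≤ ℓ x ∧ ∀ y, w x - w y ≤ (ℓ x - lam * w x) * dist x y :=
    fun x => ⟨hwℓ x, hwslope x⟩
  have h1 : ∀ x, w' x ≤ w x :=
    comparison_real hlam hℓM hwlsc hw'b hw'0 hw0 hw'subR hwsup
  have h2 : ∀ x, w x ≤ w' x :=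
    comparison_real hlam hℓM hw'lsc hwb hw0 hw'0 hwsubR hw'supR
  funext x
  exact le_antisymm (h1 x) (h2 x)
end

section
/- Let X be a metric space, x₀ ∈ X, and ℓ : X → [0,∞) given by ℓ(x₀)=0 and ℓ(x)=1 for x ≠ x₀. Then X is complete if and only if the equation G[u] = ℓ with u lsc, u ≥ 0, inf_X u = 0 has a unique solution, namely u(x) = d(x, x₀). -/
open Filter Topology ENNReal

section helpers
variable {X : Type*} [MetricSpace X]

lemma gslope_le_one_of_lip {u : X → ℝ} {x : X} (h : ∀ y, u x - u y ≤ dist x y) :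
    gslope u x ≤ 1 := by
  refine iSup₂_le fun y hy => ?_
  rw [← ENNReal.ofReal_one]
  refine ENNReal.ofReal_le_ofReal ?_
  rw [div_le_one (dist_pos.2 (Ne.symm hy))]
  exact h y

lemma sub_le_dist_of_gslope_le_one {u : X → ℝ} {x : X} (h : gslope u x ≤ 1) (y : X) :
    u x - u y ≤ dist x y := by
  rcases eq_or_ne y x with rfl | hy
  · simp
  rcases le_or_gt (u x - u y) 0 with h0 | h0
  · exact h0.trans dist_nonneg
  · have hle : ENNReal.ofReal ((u x - u y) / dist x y) ≤ 1 :=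
      le_trans (le_iSup₂ (f := fun y (_ : y ≠ x) => ENNReal.ofReal ((u x - u y) / dist x y)) y hy) h
    rw [← ENNReal.ofReal_one, ENNReal.ofReal_le_ofReal_iff zero_le_one] at hle
    have hd : 0 < dist x y := dist_pos.2 (Ne.symm hy)
    rwa [div_le_one hd] at hle

lemma le_of_gslope_eq_zero {u : X → ℝ} {x : X} (h : gslope u x = 0) (y : X) :
    u x ≤ u y := by
  rcases eq_or_ne y x with rfl | hy
  · exact le_refl _
  have h0 : ENNReal.ofReal ((u x - u y) / dist x y) = 0 :=
    le_antisymm (h ▸ le_iSup₂ (f := fun y (_ : y ≠ x) => ENNReal.ofReal ((u x - u y) / dist x y)) y hy) zero_le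
  rw [ENNReal.ofReal_eq_zero] at h0
  have hd : 0 < dist x y := dist_pos.2 (Ne.symm hy)
  rw [div_le_iff₀ hd] at h0
  linarith

lemma exists_of_one_le_gslope {u : X → ℝ} {x : X} (h : (1:ℝ≥0∞) ≤ gslope u x) {c : ℝ}
    (hc : c < 1) (hc0 : 0 ≤ c) : ∃ y, y ≠ x ∧ c * dist x y < u x - u y := by
  by_contra hcon
  push_neg at hcon
  have hb : gslope u x ≤ ENNReal.ofReal c := by
    refine iSup₂_le fun y hy => ENNReal.ofReal_le_ofReal ?_
    rw [div_le_iff₀ (dist_pos.2 (Ne.symm hy))]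
    have := hcon y hy
    linarith [mul_comm c (dist x y)]
  exact absurd h (not_le.2 (lt_of_le_of_lt hb (ENNReal.ofReal_lt_one.2 hc)))

lemma gslope_dist_self (x₀ : X) : gslope (fun y => dist y x₀) x₀ = 0 := by
  refine le_antisymm (iSup₂_le fun y hy => ?_) zero_le
  simp only [dist_self, zero_sub]
  exact (ENNReal.ofReal_eq_zero.2 (div_nonpos_iff.2
    (Or.inr ⟨neg_nonpos.2 dist_nonneg, dist_nonneg⟩))).le

lemma gslope_dist_ne (x₀ : X) {x : X} (hx : x ≠ x₀) : gslope (fun y => dist y x₀) x = 1 := by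
  refine le_antisymm (gslope_le_one_of_lip fun y => ?_) ?_
  · have := dist_triangle x y x₀
    linarith
  · have hterm : ENNReal.ofReal ((dist x x₀ - dist x₀ x₀) / dist x x₀) = 1 := by
      rw [dist_self, sub_zero, div_self (ne_of_gt (dist_pos.2 hx)), ENNReal.ofReal_one]
    calc (1:ℝ≥0∞) = ENNReal.ofReal ((dist x x₀ - dist x₀ x₀) / dist x x₀) := hterm.symm
      _ ≤ _ := le_iSup₂ (f := fun y (_ : y ≠ x) =>
          ENNReal.ofReal ((dist x x₀ - dist y x₀) / dist x y)) x₀ (Ne.symm hx)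

end helpers

section uniq
variable {X : Type*} [MetricSpace X]

lemma uniq_solution [CompleteSpace X] (x₀ : X) (u : X → ℝ)
    (hlsc : LowerSemicontinuous u) (hpos : ∀ x, 0 ≤ u x) (hinf : (⨅ x, u x) = 0)
    (h0 : gslope u x₀ = 0) (h1 : ∀ x, x ≠ x₀ → gslope u x = 1) :
    ∀ x, u x = dist x x₀ := by
  -- u x₀ = 0
  haveI : Nonempty X := ⟨x₀⟩
  have hu0 : u x₀ = 0 := by
    have hle : u x₀ ≤ ⨅ x, u x := le_ciInf (le_of_gslope_eq_zero h0)
    rw [hinf] at hle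
    exact le_antisymm hle (hpos x₀)
  -- upper bound
  have hupper : ∀ x, u x ≤ dist x x₀ := by
    intro x
    rcases eq_or_ne x x₀ with rfl | hx
    · simp [hu0]
    · have := sub_le_dist_of_gslope_le_one (le_of_eq (h1 x hx)) x₀
      linarith
  intro x
  refine le_antisymm (hupper x) ?_
  -- lower bound: key per-ε estimate
  have key : ∀ ε : ℝ, 0 < ε → ε < 1 → (1 - ε) * dist x x₀ ≤ u x := by
    intro ε hε0 hε1
    set c : ℝ := 1 - ε with hc
    have hc0 : 0 < c := by simp [hc]; linarith
    have hc1 : c < 1 := by simp [hc]; linarith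
    set A : X → Set X := fun z => {y | c * dist z y ≤ u z - u y} with hA
    have hAself : ∀ z, z ∈ A z := fun z => by simp [hA]
    have hAmono : ∀ z y, y ∈ A z → u y ≤ u z := by
      intro z y hy
      have h1' : c * dist z y ≤ u z - u y := hy
      nlinarith [dist_nonneg (x := z) (y := y)]
    have hAtrans : ∀ z y w, y ∈ A z → w ∈ A y → w ∈ A z := by
      intro z y w hy hw
      have h1' : c * dist z y ≤ u z - u y := hy
      have h2' : c * dist y w ≤ u y - u w := hw
      have h3' : dist z w ≤ dist z y + dist y w := dist_triangle z y w
      show c * dist z w ≤ u z - u w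
      nlinarith
    have hbdd : ∀ z, BddBelow (u '' A z) := by
      intro z
      refine ⟨0, ?_⟩
      rintro r ⟨y, -, rfl⟩
      exact hpos y
    have hne : ∀ z, (u '' A z).Nonempty := fun z => ⟨u z, z, hAself z, rfl⟩
    have hstep : ∀ (z : X) (n : ℕ), ∃ w, w ∈ A z ∧ u w < sInf (u '' A z) + (1/2:ℝ)^n := by
      intro z n
      obtain ⟨r, hr, hlt⟩ := Real.lt_sInf_add_pos (hne z) (by positivity : (0:ℝ) < (1/2:ℝ)^n)
      obtain ⟨w, hw, rfl⟩ := hr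
      exact ⟨w, hw, hlt⟩
    set s : ℕ → X := fun n => Nat.rec x (fun n z => (hstep z n).choose) n with hs
    have hs0 : s 0 = x := rfl
    have hmem : ∀ n, s (n+1) ∈ A (s n) := fun n => ((hstep (s n) n).choose_spec).1
    have hopt : ∀ n, u (s (n+1)) < sInf (u '' A (s n)) + (1/2:ℝ)^n :=
      fun n => ((hstep (s n) n).choose_spec).2
    have hchain : ∀ n m, n ≤ m → s m ∈ A (s n) := by
      intro n m hnm
      induction m, hnm using Nat.le_induction with
      | base => exact hAself _
      | succ m hnm ih => exact hAtrans _ _ _ ih (hmem m)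
    have hanti : ∀ n m, n ≤ m → u (s m) ≤ u (s n) := fun n m h => hAmono _ _ (hchain n m h)
    have hbddr : BddBelow (Set.range fun n => u (s n)) := by
      refine ⟨0, ?_⟩
      rintro r ⟨n, rfl⟩
      exact hpos _
    set L : ℝ := ⨅ n, u (s n) with hLdef
    have hL : Tendsto (fun n => u (s n)) atTop (𝓝 L) :=
      tendsto_atTop_ciInf (fun a b hab => hanti a b hab) hbddr
    have hLle : ∀ n, L ≤ u (s n) := fun n => ciInf_le hbddr n
    have hdist_le : ∀ n m, n ≤ m → dist (s n) (s m) ≤ (u (s n) - u (s m)) / c := by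
      intro n m h
      have := hchain n m h
      rw [le_div_iff₀ hc0]
      have h' : c * dist (s n) (s m) ≤ u (s n) - u (s m) := this
      linarith [mul_comm c (dist (s n) (s m))]
    have hcauchy : CauchySeq s := by
      refine cauchySeq_of_le_tendsto_0 (fun N => (u (s N) - L) / c) ?_ ?_
      · intro n m N hn hm
        rcases le_total n m with h | h
        · refine (hdist_le n m h).trans ?_
          have h1' := hanti N n hn
          have h2' := hLle m
          exact (div_le_div_iff_of_pos_right hc0).2 (by linarith)
        · rw [dist_comm]
          refine (hdist_le m n h).trans ?_
          have h1' := hanti N m hm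
          have h2' := hLle n
          exact (div_le_div_iff_of_pos_right hc0).2 (by linarith)
      · have : Tendsto (fun N => (u (s N) - L) / c) atTop (𝓝 ((L - L) / c)) :=
          ((hL.sub tendsto_const_nhds).div_const c)
        simpa using this
    obtain ⟨z, hz⟩ := cauchySeq_tendsto_of_complete hcauchy
    have huz : u z ≤ L := by
      by_contra hcon
      push_neg at hcon
      set c' : ℝ := (L + u z) / 2 with hc'
      have hc'1 : L < c' := by simp [hc']; linarith
      have hc'2 : c' < u z := by simp [hc']; linarith
      have hev : ∀ᶠ w in 𝓝 z, c' < u w := hlsc z c' hc'2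
      have hev2 : ∀ᶠ n in atTop, c' < u (s n) := hz.eventually hev
      have : c' ≤ L := ge_of_tendsto hL (hev2.mono fun n h => h.le)
      linarith
    have hdistz : ∀ n, dist (s n) z ≤ (u (s n) - L) / c := by
      intro n
      have htd : Tendsto (fun m => dist (s n) (s m)) atTop (𝓝 (dist (s n) z)) :=
        tendsto_const_nhds.dist hz
      refine le_of_tendsto htd ?_
      filter_upwards [eventually_ge_atTop n] with m hm
      refine (hdist_le n m hm).trans ?_
      have := hLle m
      gcongr
    have hzA : ∀ n, z ∈ A (s n) := by
      intro n
      show c * dist (s n) z ≤ u (s n) - u z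
      have h1' := hdistz n
      rw [le_div_iff₀ hc0] at h1'
      have := huz
      nlinarith
    have hz0 : z = x₀ := by
      by_contra hne'
      obtain ⟨w, hwne, hw⟩ := exists_of_one_le_gslope (le_of_eq (h1 z hne').symm) hc1 hc0.le
      have hwA : ∀ n, w ∈ A (s n) := by
        intro n
        have h1' : c * dist (s n) z ≤ u (s n) - u z := hzA n
        have h3' : dist (s n) w ≤ dist (s n) z + dist z w := dist_triangle _ _ _
        show c * dist (s n) w ≤ u (s n) - u w
        nlinarith
      have hLw : L ≤ u w := by
        have hInf : ∀ n, sInf (u '' A (s n)) ≤ u w :=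
          fun n => csInf_le (hbdd _) ⟨w, hwA n, rfl⟩
        have hf : Tendsto (fun n => u (s (n+1))) atTop (𝓝 L) :=
          hL.comp (tendsto_add_atTop_nat 1)
        have hg : Tendsto (fun n => u w + (1/2:ℝ)^n) atTop (𝓝 (u w + 0)) :=
          tendsto_const_nhds.add
            (tendsto_pow_atTop_nhds_zero_of_lt_one (by norm_num) (by norm_num))
        have := le_of_tendsto_of_tendsto' hf hg
          (fun n => ((hopt n).trans_le (by linarith [hInf n])).le)
        simpa using this
      have hdzw : 0 < dist z w := dist_pos.2 (Ne.symm hwne)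
      nlinarith
    have : c * dist (s 0) z ≤ u (s 0) - u z := hzA 0
    rw [hs0, hz0] at this
    have huz0 : u z = 0 := by rw [hz0, hu0]
    rw [hz0] at huz0
    have : c * dist x x₀ ≤ u x := by
      have huzz : u x₀ = 0 := hu0
      nlinarith [this]
    linarith [this]
  by_contra hcon
  push_neg at hcon
  set d : ℝ := dist x x₀ with hd
  have hd0 : 0 < d := lt_of_le_of_lt (hpos x) hcon
  set ε : ℝ := (d - u x) / (2 * d) with hε
  have hε0 : 0 < ε := div_pos (by linarith) (by linarith)
  have hε1 : ε < 1 := by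
    rw [hε, div_lt_one (by linarith)]
    linarith [hpos x]
  have hkey := key ε hε0 hε1
  have h2 : ε * d = (d - u x) / 2 := by
    rw [hε]
    field_simp
  nlinarith [hkey]
end uniq

section rev
variable {X : Type*} [MetricSpace X]

lemma complete_of_unique (x₀ : X)
    (H : ∀ u : X → ℝ, LowerSemicontinuous u → (∀ x, 0 ≤ u x) → (⨅ x, u x) = 0 →
      gslope u x₀ = 0 → (∀ x, x ≠ x₀ → gslope u x = 1) → u = fun x => dist x x₀) :
    CompleteSpace X := by
  haveI : Nonempty X := ⟨x₀⟩
  refine Metric.complete_of_cauchySeq_tendsto ?_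
  by_contra hcon
  push_neg at hcon
  obtain ⟨y, hy, hno⟩ := hcon
  -- the limit function f x = lim_n dist x (y n)
  have hex : ∀ x : X, ∃ l, Tendsto (fun n => dist x (y n)) atTop (𝓝 l) := fun x =>
    cauchySeq_tendsto_of_complete
      ((LipschitzWith.dist_right x).uniformContinuous.comp_cauchySeq hy)
  set f : X → ℝ := fun x => (hex x).choose with hf
  have hftend : ∀ x, Tendsto (fun n => dist x (y n)) atTop (𝓝 (f x)) :=
    fun x => (hex x).choose_spec
  have hfnonneg : ∀ x, 0 ≤ f x := fun x =>
    ge_of_tendsto (hftend x) (Eventually.of_forall fun n => dist_nonneg)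
  have hfpos : ∀ x, 0 < f x := by
    intro x
    rcases (hfnonneg x).lt_or_eq with h | h
    · exact h
    · exfalso
      refine hno x (tendsto_iff_dist_tendsto_zero.2 ?_)
      have := hftend x
      rw [← h] at this
      simpa [dist_comm] using this
  have hflip : ∀ a b : X, f a - f b ≤ dist a b := by
    intro a b
    have : Tendsto (fun n => dist a (y n) - dist b (y n)) atTop (𝓝 (f a - f b)) :=
      (hftend a).sub (hftend b)
    refine le_of_tendsto this (Eventually.of_forall fun n => ?_)
    have := dist_triangle a b (y n)
    linarith
  -- c m = f (y m) tends to 0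
  have hc0 : Tendsto (fun m => f (y m)) atTop (𝓝 0) := by
    rw [Metric.tendsto_atTop]
    intro ε hε
    rw [Metric.cauchySeq_iff] at hy
    obtain ⟨N, hN⟩ := hy (ε/2) (by linarith)
    refine ⟨N, fun m hm => ?_⟩
    have hle : f (y m) ≤ ε/2 := by
      refine le_of_tendsto (hftend (y m)) ?_
      filter_upwards [eventually_ge_atTop N] with n hn
      exact (hN m hm n hn).le
    rw [Real.dist_eq, sub_zero, abs_of_nonneg (hfnonneg _)]
    linarith
  -- dist x (y m) is close to f x
  have hdub : ∀ x m, dist x (y m) ≤ f x + f (y m) := by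
    intro x m
    have : Tendsto (fun n => dist x (y n) + dist (y m) (y n)) atTop (𝓝 (f x + f (y m))) :=
      (hftend x).add (hftend (y m))
    refine ge_of_tendsto this (Eventually.of_forall fun n => ?_)
    have h1 := dist_triangle x (y n) (y m)
    have h2 := dist_comm (y n) (y m)
    linarith
  have hdlb : ∀ x m, f x - f (y m) ≤ dist x (y m) := by
    intro x m
    have : Tendsto (fun n => dist x (y n) - dist (y m) (y n)) atTop (𝓝 (f x - f (y m))) :=
      (hftend x).sub (hftend (y m))
    refine le_of_tendsto this (Eventually.of_forall fun n => ?_)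
    have h1 := dist_triangle x (y m) (y n)
    linarith
  -- the competitor function v
  set v : X → ℝ := fun x => min (dist x x₀) (f x) with hv
  have hfcont : Continuous f := by
    refine (LipschitzWith.of_dist_le_mul (K := 1) fun a b => ?_).continuous
    rw [Real.dist_eq, abs_sub_le_iff]
    constructor
    · simpa using hflip a b
    · rw [dist_comm a b] at *
      simpa using hflip b a
  have hvcont : Continuous v := (continuous_id.dist continuous_const).min hfcont
  have hvnonneg : ∀ x, 0 ≤ v x := fun x => le_min dist_nonneg (hfnonneg x)
  have hvx₀ : v x₀ = 0 := by
    rw [hv]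
    simp [hfnonneg x₀]
  have hvinf : (⨅ x, v x) = 0 := by
    refine le_antisymm ?_ (le_ciInf hvnonneg)
    refine le_trans (ciInf_le ⟨0, ?_⟩ x₀) (le_of_eq hvx₀)
    rintro r ⟨w, rfl⟩
    exact hvnonneg w
  have hvlip : ∀ a b : X, v a - v b ≤ dist a b := by
    intro a b
    rcases min_cases (dist b x₀) (f b) with ⟨hb, -⟩ | ⟨hb, -⟩
    · have : v a ≤ dist a x₀ := min_le_left _ _
      have h3 := dist_triangle a b x₀
      rw [hv]
      simp only
      rw [hb]
      linarith
    · have : v a ≤ f a := min_le_right _ _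
      have h3 := hflip a b
      rw [hv]
      simp only
      rw [hb]
      linarith
  have hv0 : gslope v x₀ = 0 := by
    refine le_antisymm (iSup₂_le fun w hw => ?_) zero_le
    rw [hvx₀]
    refine (ENNReal.ofReal_eq_zero.2 (div_nonpos_iff.2 (Or.inr ⟨?_, dist_nonneg⟩))).le
    linarith [hvnonneg w]
  have hv1 : ∀ x, x ≠ x₀ → gslope v x = 1 := by
    intro x hx
    refine le_antisymm (gslope_le_one_of_lip fun w => hvlip x w) ?_
    rcases le_or_gt (dist x x₀) (f x) with hcase | hcase
    · -- v x = dist x x₀, use w = x₀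
      have hvx : v x = dist x x₀ := min_eq_left hcase
      have hterm : ENNReal.ofReal ((v x - v x₀) / dist x x₀) = 1 := by
        rw [hvx₀, hvx, sub_zero, div_self (ne_of_gt (dist_pos.2 hx)), ENNReal.ofReal_one]
      calc (1:ℝ≥0∞) = ENNReal.ofReal ((v x - v x₀) / dist x x₀) := hterm.symm
        _ ≤ _ := le_iSup₂ (f := fun w (_ : w ≠ x) =>
            ENNReal.ofReal ((v x - v w) / dist x w)) x₀ (Ne.symm hx)
    · -- v x = f x, approximate with y m
      have hvx : v x = f x := min_eq_right hcase.le
      have hfx : 0 < f x := hfpos x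
      -- for large m, consider w = y m
      have hratio : Tendsto (fun m => (f x - 2 * f (y m)) / (f x + f (y m))) atTop
          (𝓝 ((f x - 2 * 0) / (f x + 0))) := by
        refine Tendsto.div ?_ ?_ (by simpa using hfx.ne')
        · exact tendsto_const_nhds.sub (hc0.const_mul 2)
        · exact tendsto_const_nhds.add hc0
      have hlim1 : ((f x - 2 * 0) / (f x + 0) : ℝ) = 1 := by
        field_simp
        ring
      rw [hlim1] at hratio
      have htendE : Tendsto (fun m => ENNReal.ofReal ((f x - 2 * f (y m)) / (f x + f (y m))))
          atTop (𝓝 1) := by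
        have := (ENNReal.continuous_ofReal.tendsto 1).comp hratio
        simpa [Function.comp_def] using this
      refine le_of_tendsto htendE ?_
      -- eventually, the term at y m bounds this ratio
      have hev : ∀ᶠ m in atTop, f (y m) < f x / 2 := by
        have := hc0
        rw [Metric.tendsto_atTop] at this
        obtain ⟨N, hN⟩ := this (f x / 2) (by linarith)
        refine eventually_atTop.2 ⟨N, fun m hm => ?_⟩
        have := hN m hm
        rw [Real.dist_eq, sub_zero, abs_of_nonneg (hfnonneg _)] at this
        linarith
      filter_upwards [hev] with m hm
      have hym : y m ≠ x := by
        intro hEq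
        rw [hEq] at hm
        linarith
      have hd1 : dist x (y m) ≤ f x + f (y m) := hdub x m
      have hd2 : 0 < dist x (y m) := dist_pos.2 (Ne.symm hym)
      have hvym : v (y m) ≤ f (y m) := min_le_right _ _
      refine le_trans (ENNReal.ofReal_le_ofReal ?_)
        (le_iSup₂ (f := fun w (_ : w ≠ x) =>
          ENNReal.ofReal ((v x - v w) / dist x w)) (y m) hym)
      rw [hvx, div_le_div_iff₀ (by linarith) hd2]
      have h2c : 0 < f x - 2 * f (y m) := by linarith
      nlinarith [hd1, hvym, hfnonneg (y m), hvnonneg (y m),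
        mul_le_mul_of_nonneg_left hd1 h2c.le]
  -- apply uniqueness
  have := H v hvcont.lowerSemicontinuous hvnonneg hvinf hv0 hv1
  -- but then dist (y m) x₀ = v (y m) ≤ f (y m) → 0, so y → x₀
  refine hno x₀ (tendsto_iff_dist_tendsto_zero.2 ?_)
  have hle : ∀ m, dist (y m) x₀ ≤ f (y m) := by
    intro m
    have hvm : v (y m) = dist (y m) x₀ := by rw [this]
    rw [hv] at hvm
    simp only at hvm
    rcases le_or_gt (dist (y m) x₀) (f (y m)) with h | h
    · exact h
    · rw [min_eq_right h.le] at hvm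
      linarith
  exact squeeze_zero (fun m => dist_nonneg) hle hc0

end rev

/-- Characterization of completeness: with `ℓ(x₀) = 0` and `ℓ ≡ 1` elsewhere, `X` is complete
iff the equation `G[u] = ℓ`, `u` lsc nonnegative with `inf u = 0`, has `d(·, x₀)` as its
unique solution. -/
theorem completeSpace_iff_unique_solution {X : Type*} [MetricSpace X]
    (x₀ : X) (ℓ : X → ℝ) (hℓ1 : ℓ x₀ = 0) (hℓ2 : ∀ x, x ≠ x₀ → ℓ x = 1) :
    CompleteSpace X ↔
      ((LowerSemicontinuous (fun x => dist x x₀) ∧ (∀ x : X, 0 ≤ dist x x₀) ∧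
          (⨅ x : X, dist x x₀) = 0 ∧
          ∀ x, gslope (fun y => dist y x₀) x = ENNReal.ofReal (ℓ x)) ∧
        ∀ u : X → ℝ, LowerSemicontinuous u → (∀ x, 0 ≤ u x) → (⨅ x, u x) = 0 →
          (∀ x, gslope u x = ENNReal.ofReal (ℓ x)) → u = fun x => dist x x₀) := by
  haveI : Nonempty X := ⟨x₀⟩
  constructor
  · intro hc
    refine ⟨⟨(continuous_id.dist continuous_const).lowerSemicontinuous,
      fun x => dist_nonneg, ?_, ?_⟩, ?_⟩
    · refine le_antisymm ((ciInf_le ⟨0, ?_⟩ x₀).trans (by simp)) (le_ciInf fun x => dist_nonneg)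
      rintro r ⟨w, rfl⟩
      exact dist_nonneg
    · intro x
      rcases eq_or_ne x x₀ with rfl | hx
      · rw [gslope_dist_self, hℓ1]
        simp
      · rw [gslope_dist_ne x₀ hx, hℓ2 x hx]
        simp
    · intro u hlsc hpos hinf hg
      funext x
      exact uniq_solution x₀ u hlsc hpos hinf (by rw [hg x₀, hℓ1]; simp)
        (fun z hz => by rw [hg z, hℓ2 z hz]; simp) x
  · rintro ⟨-, H⟩
    refine complete_of_unique x₀ ?_
    intro u hlsc hpos hinf h0 h1
    refine H u hlsc hpos hinf fun x => ?_
    rcases eq_or_ne x x₀ with rfl | hx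
    · rw [h0, hℓ1]
      simp
    · rw [h1 x hx, hℓ2 x hx]
      simp
end

section
/- Let X be a metric space, λ ≥ 0, ℓ : X → [0,∞) lsc with inf_X ℓ = 0, and u : X → ℝ with inf_X u = 0. Then T^∞ u(x) = sup { v(x) : v is a subsolution of λ w + G[w] = ℓ with inf_X v = 0, and v ≤ u }, for every x ∈ X. -/
open Filter Topology ENNReal

namespace PerronAux

variable {X : Type*} [MetricSpace X]

lemma D_ne_zero (lam : ℝ) (x y : X) : (1 + ENNReal.ofReal lam * edist x y) ≠ 0 := by
  simp

lemma D_ne_top (lam : ℝ) (x y : X) : (1 + ENNReal.ofReal lam * edist x y) ≠ ⊤ := by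
  refine ENNReal.add_ne_top.2 ⟨ENNReal.one_ne_top, ENNReal.mul_ne_top ENNReal.ofReal_ne_top
    (edist_ne_top x y)⟩

/-- `T` is monotone. -/
lemma TopE_mono (lam : ℝ) (ℓ : X → ℝ) {u v : X → ℝ≥0∞} (h : ∀ x, u x ≤ v x) (x : X) :
    TopE lam ℓ u x ≤ TopE lam ℓ v x := by
  refine iInf_mono fun y => ?_
  exact ENNReal.div_le_div (add_le_add_left (h y) _) le_rfl

/-- `T v ≤ v` always. -/
lemma TopE_le_self (lam : ℝ) (ℓ : X → ℝ) (v : X → ℝ≥0∞) (x : X) :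
    TopE lam ℓ v x ≤ v x := by
  refine le_trans (iInf_le _ x) ?_
  simp [edist_self]

/-- A subsolution satisfies `v ≤ T v`. -/
lemma le_TopE_of_subsolution (lam : ℝ) (ℓ : X → ℝ) (v : X → ℝ≥0∞)
    (hsub : ∀ y, ENNReal.ofReal lam * v y + gslopeN v y ≤ ENNReal.ofReal (ℓ y)) (x : X) :
    v x ≤ TopE lam ℓ v x := by
  have hvx : v x ≠ ⊤ := by
    intro h
    have := hsub x
    rw [gslopeN, if_pos h] at this
    simp at this
  refine le_iInf fun y => ?_
  by_cases hyx : y = x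
  · subst hyx
    simp [edist_self]
  · set d := edist x y with hd
    have hd0 : d ≠ 0 := (edist_pos.2 fun h => hyx h.symm).ne'
    have hdt : d ≠ ⊤ := edist_ne_top x y
    rw [ENNReal.le_div_iff_mul_le (Or.inl (D_ne_zero lam x y)) (Or.inl (D_ne_top lam x y))]
    have hterm : ENNReal.ofReal lam * v x + (v x - v y) / d ≤ ENNReal.ofReal (ℓ x) := by
      refine le_trans (add_le_add_right ?_ _) (hsub x)
      rw [gslopeN, if_neg hvx]
      exact le_iSup₂ (f := fun z (_ : z ≠ x) => (v x - v z) / edist x z) y hyx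
    have h2 := mul_le_mul_left hterm d
    rw [add_mul, ENNReal.div_mul_cancel hd0 hdt] at h2
    calc v x * (1 + ENNReal.ofReal lam * d)
        = v x + ENNReal.ofReal lam * v x * d := by ring
      _ ≤ (v y + (v x - v y)) + ENNReal.ofReal lam * v x * d :=
          add_le_add_left le_add_tsub _
      _ = v y + (ENNReal.ofReal lam * v x * d + (v x - v y)) := by ring
      _ ≤ v y + ENNReal.ofReal (ℓ x) * d := add_le_add_right h2 _

/-- A fixed point of `T` with zero infimum is a subsolution. -/
lemma subsolution_of_fixed (lam : ℝ) (ℓ : X → ℝ) (w : X → ℝ≥0∞)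
    (hfix : ∀ x, TopE lam ℓ w x = w x) (hinf : ⨅ x, w x = 0) (x : X) :
    ENNReal.ofReal lam * w x + gslopeN w x ≤ ENNReal.ofReal (ℓ x) := by
  -- finiteness of w
  have hfin : ∀ z, w z ≠ ⊤ := by
    intro z
    obtain ⟨y, hy⟩ : ∃ y, w y < 1 := by
      refine iInf_lt_iff.mp ?_
      rw [hinf]; exact zero_lt_one
    have h1 : w z ≤ w y + ENNReal.ofReal (ℓ z) * edist z y := by
      rw [← hfix z]
      refine le_trans (iInf_le _ y) ?_
      refine ENNReal.div_le_of_le_mul ?_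
      exact le_mul_of_one_le_right' (le_add_right le_rfl)
    intro htop
    rw [htop] at h1
    exact absurd (top_le_iff.mp h1)
      (ENNReal.add_ne_top.2 ⟨hy.ne_top, ENNReal.mul_ne_top ENNReal.ofReal_ne_top
        (edist_ne_top z y)⟩)
  -- the fixed-point inequality, multiplied out
  have hkey : ∀ z y : X, w z + ENNReal.ofReal lam * w z * edist z y
      ≤ w y + ENNReal.ofReal (ℓ z) * edist z y := by
    intro z y
    have h1 : w z ≤ (w y + ENNReal.ofReal (ℓ z) * edist z y)
        / (1 + ENNReal.ofReal lam * edist z y) := by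
      rw [← hfix z]; exact iInf_le _ y
    rw [ENNReal.le_div_iff_mul_le (Or.inl (D_ne_zero lam z y)) (Or.inl (D_ne_top lam z y))]
      at h1
    calc w z + ENNReal.ofReal lam * w z * edist z y
        = w z * (1 + ENNReal.ofReal lam * edist z y) := by ring
      _ ≤ _ := h1
  -- λ w ≤ ℓ pointwise
  have hlw : ∀ z, ENNReal.ofReal lam * w z ≤ ENNReal.ofReal (ℓ z) := by
    intro z
    by_cases h : ENNReal.ofReal lam * w z ≤ ENNReal.ofReal (ℓ z)
    · exact h
    · push_neg at h
      have hz0 : w z = 0 := by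
        have hle : ∀ y, w z ≤ w y := by
          intro y
          have h1 := hkey z y
          have h2 : w y + ENNReal.ofReal (ℓ z) * edist z y
              ≤ w y + ENNReal.ofReal lam * w z * edist z y :=
            add_le_add_right (mul_le_mul_left h.le _) _
          have h3 := h1.trans h2
          have hne : ENNReal.ofReal lam * w z * edist z y ≠ ⊤ :=
            ENNReal.mul_ne_top (ENNReal.mul_ne_top ENNReal.ofReal_ne_top (hfin z))
              (edist_ne_top z y)
          exact (ENNReal.add_le_add_iff_right hne).mp h3
        have : w z ≤ ⨅ y, w y := le_iInf hle
        rw [hinf] at this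
        exact le_antisymm this zero_le
      simp [hz0]
  -- conclude
  have hx := hfin x
  have hca : ENNReal.ofReal (ℓ x)
      = (ENNReal.ofReal (ℓ x) - ENNReal.ofReal lam * w x) + ENNReal.ofReal lam * w x :=
    (tsub_add_cancel_of_le (hlw x)).symm
  rw [gslopeN, if_neg hx, hca, add_comm (ENNReal.ofReal lam * w x)]
  refine add_le_add_left ?_ _
  refine iSup₂_le fun y hy => ?_
  have hcanc : AddLECancellable (ENNReal.ofReal lam * w x) :=
    ENNReal.cancel_of_ne (ENNReal.mul_ne_top ENNReal.ofReal_ne_top hx)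
  refine hcanc.le_tsub_of_add_le_left ?_
  set d := edist x y with hd
  have hd0 : d ≠ 0 := (edist_pos.2 fun h => hy h.symm).ne'
  have hdt : d ≠ ⊤ := edist_ne_top x y
  rcases le_or_gt (w x) (w y) with hle | hlt
  · rw [tsub_eq_zero_of_le hle, ENNReal.zero_div, add_zero]
    exact hlw x
  · rw [← ENNReal.mul_le_mul_iff_left hd0 hdt, add_mul, ENNReal.div_mul_cancel hd0 hdt]
    have h1 := hkey x y
    have hwy : w y ≠ ⊤ := (hlt.trans_le le_top).ne
    calc ENNReal.ofReal lam * w x * d + (w x - w y)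
        = (ENNReal.ofReal lam * w x * d + w x) - w y :=
          ((ENNReal.cancel_of_ne hwy).add_tsub_assoc_of_le hlt.le _).symm
      _ ≤ (w y + ENNReal.ofReal (ℓ x) * d) - w y := by
          refine tsub_le_tsub_right ?_ _
          calc ENNReal.ofReal lam * w x * d + w x
              = w x + ENNReal.ofReal lam * w x * d := by ring
            _ ≤ w y + ENNReal.ofReal (ℓ x) * d := h1
      _ = ENNReal.ofReal (ℓ x) * d := ENNReal.add_sub_cancel_left hwy

/-- `T` commutes with countable pointwise infima. -/
lemma TopE_iInf (lam : ℝ) (ℓ : X → ℝ) (f : ℕ → X → ℝ≥0∞) (x : X) :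
    TopE lam ℓ (fun z => ⨅ n, f n z) x = ⨅ n, TopE lam ℓ (f n) x := by
  unfold TopE
  have : ∀ y : X, ((⨅ n, f n y) + ENNReal.ofReal (ℓ x) * edist x y)
      / (1 + ENNReal.ofReal lam * edist x y)
      = ⨅ n, (f n y + ENNReal.ofReal (ℓ x) * edist x y)
          / (1 + ENNReal.ofReal lam * edist x y) := by
    intro y
    rw [ENNReal.iInf_add, ENNReal.iInf_div_of_ne (D_ne_zero lam x y) (D_ne_top lam x y)]
  simp only [this]
  exact iInf_comm

end PerronAux

/-- Perron-type characterization: `T^∞ u` (the pointwise nonincreasing limit of the iterates,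
i.e. their pointwise infimum) equals, at every point, the supremum of all subsolutions of
`λ w + G[w] = ℓ` lying below `u`. -/
theorem iInf_iterates_eq_sup_subsolutions {X : Type*} [MetricSpace X] [Nonempty X]
    (lam : ℝ) (hlam : 0 ≤ lam)
    (ℓ : X → ℝ) (hℓ : LowerSemicontinuous ℓ) (hℓ0 : ∀ x, 0 ≤ ℓ x)
    (hinfℓ : ⨅ x, ℓ x = 0)
    (u : X → ℝ≥0∞) (hinfu : ⨅ x, u x = 0) :
    ∀ x, (⨅ n : ℕ, (TopE lam ℓ)^[n] u x) =
      ⨆ (v : X → ℝ≥0∞) (_ : (⨅ y, v y = 0) ∧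
          (∀ y, ENNReal.ofReal lam * v y + gslopeN v y ≤ ENNReal.ofReal (ℓ y)) ∧
          ∀ y, v y ≤ u y),
        v x := by
  intro x
  set T : (X → ℝ≥0∞) → X → ℝ≥0∞ := TopE lam ℓ with hT
  set w : X → ℝ≥0∞ := fun z => ⨅ n : ℕ, T^[n] u z with hw
  -- the iterates are antitone in n
  have hanti : ∀ n z, T^[n + 1] u z ≤ T^[n] u z := by
    intro n z
    rw [Function.iterate_succ_apply']
    exact PerronAux.TopE_le_self lam ℓ _ z
  -- w is a fixed point
  have hwfix : ∀ z, T w z = w z := by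
    intro z
    have h1 : T w z = ⨅ n : ℕ, T (T^[n] u) z := by
      rw [hT]
      exact PerronAux.TopE_iInf lam ℓ (fun n => T^[n] u) z
    have h2 : ∀ n : ℕ, T (T^[n] u) z = T^[n + 1] u z := by
      intro n
      rw [Function.iterate_succ_apply']
    rw [h1]
    simp only [h2]
    refine le_antisymm ?_ ?_
    · refine le_iInf fun n => ?_
      exact le_trans (iInf_le _ n) (hanti n z)
    · exact le_iInf fun n => iInf_le _ (n + 1)
  -- w ≤ u
  have hwleu : ∀ z, w z ≤ u z := by
    intro z
    have := iInf_le (fun n : ℕ => T^[n] u z) 0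
    simpa using this
  -- inf w = 0
  have hwinf : ⨅ z, w z = 0 := by
    refine le_antisymm ?_ zero_le
    calc ⨅ z, w z ≤ ⨅ z, u z := iInf_mono hwleu
      _ = 0 := hinfu
  -- w is a subsolution
  have hwsub : ∀ z, ENNReal.ofReal lam * w z + gslopeN w z ≤ ENNReal.ofReal (ℓ z) :=
    PerronAux.subsolution_of_fixed lam ℓ w hwfix hwinf
  refine le_antisymm ?_ ?_
  · exact le_iSup₂ (f := fun (v : X → ℝ≥0∞)
      (_ : (⨅ y, v y = 0) ∧
        (∀ y, ENNReal.ofReal lam * v y + gslopeN v y ≤ ENNReal.ofReal (ℓ y)) ∧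
        ∀ y, v y ≤ u y) => v x) w ⟨hwinf, hwsub, hwleu⟩
  · refine iSup₂_le fun v hv => ?_
    obtain ⟨hv0, hvsub, hvu⟩ := hv
    have hvn : ∀ n z, v z ≤ T^[n] u z := by
      intro n
      induction n with
      | zero => simpa using hvu
      | succ n ih =>
        intro z
        rw [Function.iterate_succ_apply']
        calc v z ≤ T v z := PerronAux.le_TopE_of_subsolution lam ℓ v hvsub z
          _ ≤ T (T^[n] u) z := PerronAux.TopE_mono lam ℓ ih z
    exact le_iInf fun n => hvn n x
end

section
/- Let X be a bounded metric space, λ ≥ 0, and ℓ : X → [0,∞) lsc with inf_X ℓ = 0. Then v(x) := ℓ(x) · diam(X) is a supersolution of λ w + G[w] = ℓ (that is, v is lsc, inf v = 0, and λ v + G[v] ≥ ℓ pointwise), and every subsolution w satisfies w ≤ ℓ · diam(X). -/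
open Filter Topology ENNReal

/-- On a bounded metric space, `v := ℓ · diam X` is a supersolution of `λ w + G[w] = ℓ`
(it is lsc, has infimum `0` and satisfies `λ v + G[v] ≥ ℓ`), and every subsolution `w`
satisfies `w ≤ ℓ · diam X`. -/
theorem diam_supersolution_and_bound {X : Type*} [MetricSpace X] [Nonempty X]
    (hX : Bornology.IsBounded (Set.univ : Set X))
    (lam : ℝ) (hlam : 0 ≤ lam)
    (ℓ : X → ℝ) (hℓ : LowerSemicontinuous ℓ) (hℓ0 : ∀ x, 0 ≤ ℓ x)
    (hinfℓ : ⨅ x, ℓ x = 0) :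
    (LowerSemicontinuous (fun x => ℓ x * Metric.diam (Set.univ : Set X)) ∧
      (⨅ x, ℓ x * Metric.diam (Set.univ : Set X)) = 0 ∧
      ∀ x, (ℓ x : EReal) ≤
        ((lam * (ℓ x * Metric.diam (Set.univ : Set X)) : ℝ) : EReal) +
          (gslope (fun y => ℓ y * Metric.diam (Set.univ : Set X)) x : EReal)) ∧
    ∀ w : X → ℝ, (⨅ x, w x = 0) →
      (∀ x, ((lam * w x : ℝ) : EReal) + (gslope w x : EReal) ≤ (ℓ x : EReal)) →
      ∀ x, w x ≤ ℓ x * Metric.diam (Set.univ : Set X) := by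
  set D := Metric.diam (Set.univ : Set X) with hDdef
  have hD0 : (0 : ℝ) ≤ D := Metric.diam_nonneg
  have hdist : ∀ x y : X, dist x y ≤ D := fun x y =>
    Metric.dist_le_diam_of_mem hX (Set.mem_univ x) (Set.mem_univ y)
  have hsing : D = 0 → ∀ x : X, ℓ x = 0 := by
    intro hD x
    have hall : ∀ y : X, ℓ y = ℓ x := by
      intro y
      have h1 : dist x y ≤ 0 := hD ▸ hdist x y
      have h2 : dist x y = 0 := le_antisymm h1 dist_nonneg
      rw [(dist_eq_zero.1 h2)]
    have : (⨅ y, ℓ y) = ℓ x := by simp only [hall]; exact ciInf_const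
    rw [hinfℓ] at this; exact this.symm
  constructor
  · refine ⟨?_, ?_, ?_⟩
    · -- lower semicontinuity
      rcases eq_or_lt_of_le hD0 with h | h
      · simp only [← h, mul_zero]
        exact lowerSemicontinuous_const
      · intro x y hy
        have hyd : y / D < ℓ x := (div_lt_iff₀ h).2 hy
        filter_upwards [hℓ x _ hyd] with z hz
        calc y = y / D * D := by field_simp
          _ < ℓ z * D := mul_lt_mul_of_pos_right hz h
    · -- infimum is zero
      have hbdd : BddBelow (Set.range fun x => ℓ x * D) := by
        refine ⟨0, ?_⟩
        rintro _ ⟨x, rfl⟩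
        exact mul_nonneg (hℓ0 x) hD0
      have hge : (0 : ℝ) ≤ ⨅ x, ℓ x * D := le_ciInf fun x => mul_nonneg (hℓ0 x) hD0
      have hle : (⨅ x, ℓ x * D) ≤ 0 := by
        rcases eq_or_lt_of_le hD0 with h | h
        · inhabit X
          calc (⨅ x, ℓ x * D) ≤ ℓ default * D := ciInf_le hbdd default
            _ = 0 := by rw [← h, mul_zero]
        · by_contra hc
          push_neg at hc
          have hcD : 0 < (⨅ x, ℓ x * D) / D := div_pos hc h
          obtain ⟨x, hx⟩ := exists_lt_of_ciInf_lt
            (show (⨅ z, ℓ z) < (⨅ x, ℓ x * D) / D by rw [hinfℓ]; exact hcD)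
          have h1 : ℓ x * D < ⨅ x, ℓ x * D := by
            calc ℓ x * D < (⨅ x, ℓ x * D) / D * D := mul_lt_mul_of_pos_right hx h
              _ = ⨅ x, ℓ x * D := by field_simp; exact iInf_congr fun _ => mul_comm _ _
          exact absurd (ciInf_le hbdd x) (not_le.2 h1)
      exact le_antisymm hle hge
    · -- supersolution
      intro x
      have hg : ENNReal.ofReal (ℓ x) ≤ gslope (fun y => ℓ y * D) x := by
        refine ENNReal.le_of_forall_pos_le_add fun ε hε _ => ?_
        have key : ENNReal.ofReal (ℓ x - ε) ≤ gslope (fun y => ℓ y * D) x := by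
          rcases le_or_gt (ℓ x - (ε : ℝ)) 0 with h | h
          · rw [ENNReal.ofReal_eq_zero.2 h]; exact zero_le
          · have hεpos : (0 : ℝ) < ε := hε
            have hDpos : 0 < D := by
              rcases eq_or_lt_of_le hD0 with hD | hD
              · exfalso; have := hsing hD.symm x; nlinarith
              · exact hD
            obtain ⟨y, hy⟩ := exists_lt_of_ciInf_lt
              (show (⨅ z, ℓ z) < (ε : ℝ) by rw [hinfℓ]; exact hεpos)
            have hyx : y ≠ x := by
              intro hh; rw [hh] at hy; nlinarith
            have hdxy : 0 < dist x y := dist_pos.2 (Ne.symm hyx)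
            have hval : ℓ x - (ε : ℝ) ≤ (ℓ x * D - ℓ y * D) / dist x y := by
              rw [le_div_iff₀ hdxy]
              nlinarith [hdist x y, hℓ0 y]
            calc ENNReal.ofReal (ℓ x - ε)
                ≤ ENNReal.ofReal ((ℓ x * D - ℓ y * D) / dist x y) :=
                  ENNReal.ofReal_le_ofReal hval
              _ ≤ gslope (fun y => ℓ y * D) x := by
                  rw [gslope]
                  exact le_iSup₂_of_le y hyx le_rfl
        calc ENNReal.ofReal (ℓ x) = ENNReal.ofReal ((ℓ x - ε) + ε) := by ring_nf
          _ ≤ ENNReal.ofReal (ℓ x - ε) + ENNReal.ofReal ε := ENNReal.ofReal_add_le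
          _ ≤ gslope (fun y => ℓ y * D) x + ε := by
              rw [ENNReal.ofReal_coe_nnreal]
              exact add_le_add key le_rfl
      calc (ℓ x : EReal) = ((ENNReal.ofReal (ℓ x) : ℝ≥0∞) : EReal) := by
            rw [EReal.coe_ennreal_ofReal, max_eq_left (hℓ0 x)]
        _ ≤ (gslope (fun y => ℓ y * D) x : EReal) :=
            EReal.coe_ennreal_le_coe_ennreal_iff.2 hg
        _ = 0 + (gslope (fun y => ℓ y * D) x : EReal) := (zero_add _).symm
        _ ≤ ((lam * (ℓ x * D) : ℝ) : EReal) + (gslope (fun y => ℓ y * D) x : EReal) := by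
            refine add_le_add ?_ le_rfl
            exact_mod_cast mul_nonneg hlam (mul_nonneg (hℓ0 x) hD0)
  · -- comparison for subsolutions
    intro w hinf hsub x
    have hpt : ∀ z : X, ∃ t : ℝ, 0 ≤ t ∧ lam * w z + t ≤ ℓ z ∧
        ∀ y, y ≠ z → w z - w y ≤ t * dist z y := by
      intro z
      have h := hsub z
      have hgtop : gslope w z ≠ ⊤ := by
        intro htop
        rw [htop, EReal.coe_ennreal_top,
          EReal.add_top_of_ne_bot (EReal.coe_ne_bot _)] at h
        exact absurd h (by simp)
      set t := (gslope w z).toReal with ht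
      have ht0 : 0 ≤ t := ENNReal.toReal_nonneg
      have hofReal : ENNReal.ofReal t = gslope w z := ENNReal.ofReal_toReal hgtop
      have hcoe : (gslope w z : EReal) = (t : EReal) := by
        rw [← hofReal, EReal.coe_ennreal_ofReal, max_eq_left ht0]
      rw [hcoe, ← EReal.coe_add, EReal.coe_le_coe_iff] at h
      refine ⟨t, ht0, h, fun y hy => ?_⟩
      have hdzy : 0 < dist z y := dist_pos.2 (Ne.symm hy)
      have hle : ENNReal.ofReal ((w z - w y) / dist z y) ≤ gslope w z := by
        rw [gslope]; exact le_iSup₂_of_le y hy le_rfl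
      rw [← hofReal] at hle
      have := (ENNReal.ofReal_le_ofReal_iff ht0).1 hle
      rw [div_le_iff₀ hdzy] at this
      linarith
    obtain ⟨t, ht0, htle, hlip⟩ := hpt x
    have hbdd : BddBelow (Set.range w) := by
      refine ⟨w x - t * D, ?_⟩
      rintro _ ⟨y, rfl⟩
      by_cases hy : y = x
      · subst hy; nlinarith
      · have h1 := hlip y hy
        have h2 := hdist x y
        nlinarith
    have hw0 : ∀ y, 0 ≤ w y := fun y => by
      rw [← hinf]; exact ciInf_le hbdd y
    have hεbound : ∀ ε : ℝ, 0 < ε → w x ≤ ℓ x * D + ε := by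
      intro ε hε
      obtain ⟨y, hy⟩ := exists_lt_of_ciInf_lt
        (show (⨅ z, w z) < ε by rw [hinf]; exact hε)
      by_cases hyx : y = x
      · subst hyx; nlinarith [mul_nonneg (hℓ0 y) hD0]
      · have h1 := hlip y hyx
        have h2 := hdist x y
        have h3 : (0:ℝ) ≤ dist x y := dist_nonneg
        have h4 : 0 ≤ lam * w x := mul_nonneg hlam (hw0 x)
        nlinarith [hℓ0 x]
    by_contra hc
    push_neg at hc
    have := hεbound ((w x - ℓ x * D) / 2) (by linarith)
    linarith
end

section
/- Let X be a bounded metric space and λ ≥ 0. Let ℓ, k : X → [0,∞) be lsc with inf ℓ = inf k = 0, and let u, v be the maximal (Perron) solutions of λ w + G[w] = ℓ and λ w + G[w] = k respectively. Then for every ρ > 0 and every x ∈ X: v(x) − u(x) ≤ (ρ + ‖k − ℓ‖_∞) · diam(X) + ‖k − ℓ‖_∞ · u(x)/ρ. -/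
open Filter Topology ENNReal

/-- `w` is a solution of `λ w + G[w] = ℓ` with `inf w = 0`. -/
def IsSolution {X : Type*} [MetricSpace X] (lam : ℝ) (ℓ : X → ℝ) (w : X → ℝ) : Prop :=
  LowerSemicontinuous w ∧ (⨅ x, w x = 0) ∧
    ∀ x, ((lam * w x : ℝ) : EReal) + (gslope w x : EReal) = (ℓ x : EReal)

/-- `w` is the Perron (pointwise maximal) solution of `λ w + G[w] = ℓ`. -/
def IsPerronSolution {X : Type*} [MetricSpace X] (lam : ℝ) (ℓ : X → ℝ) (w : X → ℝ) : Prop :=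
  IsSolution lam ℓ w ∧ ∀ w' : X → ℝ, IsSolution lam ℓ w' → ∀ x, w' x ≤ w x

set_option linter.unusedSectionVars false
set_option linter.unusedVariables false
set_option maxHeartbeats 1000000

namespace PerronAux

variable {X : Type*} [MetricSpace X] [Nonempty X]

/-- One step of the Perron iteration operator. -/
noncomputable def Tmap (lam : ℝ) (f g : X → ℝ) (x : X) : ℝ :=
  ⨅ y, (g y + f x * dist x y) / (1 + lam * dist x y)

/-- Iterates of the operator starting from `f · D`. -/
noncomputable def iterT (lam : ℝ) (f : X → ℝ) (D : ℝ) : ℕ → X → ℝ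
  | 0 => fun z => f z * D
  | n + 1 => Tmap lam f (iterT lam f D n)

/-- The candidate maximal solution: the decreasing limit of the iterates. -/
noncomputable def winf (lam : ℝ) (f : X → ℝ) (D : ℝ) (x : X) : ℝ :=
  ⨅ n, iterT lam f D n x

section basic

variable {lam D : ℝ} {f g : X → ℝ}

lemma denom_pos (hlam : 0 ≤ lam) (x y : X) : (0:ℝ) < 1 + lam * dist x y := by
  have := mul_nonneg hlam dist_nonneg (a := lam) (b := dist x y)
  linarith

lemma term_nonneg (hlam : 0 ≤ lam) (hf : ∀ z, 0 ≤ f z) (hg : ∀ z, 0 ≤ g z) (x y : X) :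
    0 ≤ (g y + f x * dist x y) / (1 + lam * dist x y) :=
  div_nonneg (add_nonneg (hg y) (mul_nonneg (hf x) dist_nonneg)) (denom_pos hlam x y).le

lemma bddBelow_Tterm (hlam : 0 ≤ lam) (hf : ∀ z, 0 ≤ f z) (hg : ∀ z, 0 ≤ g z) (x : X) :
    BddBelow (Set.range fun y => (g y + f x * dist x y) / (1 + lam * dist x y)) :=
  ⟨0, by rintro _ ⟨y, rfl⟩; exact term_nonneg hlam hf hg x y⟩

lemma Tmap_nonneg (hlam : 0 ≤ lam) (hf : ∀ z, 0 ≤ f z) (hg : ∀ z, 0 ≤ g z) (x : X) :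
    0 ≤ Tmap lam f g x :=
  le_ciInf fun y => term_nonneg hlam hf hg x y

lemma Tmap_le_self (hlam : 0 ≤ lam) (hf : ∀ z, 0 ≤ f z) (hg : ∀ z, 0 ≤ g z) (x : X) :
    Tmap lam f g x ≤ g x := by
  have h := ciInf_le (bddBelow_Tterm hlam hf hg x) x
  simpa [Tmap] using h

lemma Tmap_le (hlam : 0 ≤ lam) (hf : ∀ z, 0 ≤ f z) (hg : ∀ z, 0 ≤ g z) (x y : X) :
    Tmap lam f g x ≤ (g y + f x * dist x y) / (1 + lam * dist x y) :=
  ciInf_le (bddBelow_Tterm hlam hf hg x) y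

lemma iterT_nonneg (hlam : 0 ≤ lam) (hf : ∀ z, 0 ≤ f z) (hD : 0 ≤ D) :
    ∀ n z, 0 ≤ iterT lam f D n z := by
  intro n
  induction n with
  | zero => exact fun z => mul_nonneg (hf z) hD
  | succ n ih => exact fun z => Tmap_nonneg hlam hf ih z

lemma iterT_le_base (hlam : 0 ≤ lam) (hf : ∀ z, 0 ≤ f z) (hD : 0 ≤ D) :
    ∀ n z, iterT lam f D n z ≤ f z * D := by
  intro n
  induction n with
  | zero => exact fun z => le_rfl
  | succ n ih =>
    intro z
    exact (Tmap_le_self hlam hf (iterT_nonneg hlam hf hD n) z).trans (ih z)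

lemma bddBelow_iterT (hlam : 0 ≤ lam) (hf : ∀ z, 0 ≤ f z) (hD : 0 ≤ D) (x : X) :
    BddBelow (Set.range fun n => iterT lam f D n x) :=
  ⟨0, by rintro _ ⟨n, rfl⟩; exact iterT_nonneg hlam hf hD n x⟩

/-- A function satisfying the pointwise supersolution inequality and below the base
stays below all iterates. -/
lemma le_iterT {w : X → ℝ} (hlam : 0 ≤ lam) (hf : ∀ z, 0 ≤ f z) (hD : 0 ≤ D)
    (hsup : ∀ z y, w z * (1 + lam * dist z y) ≤ w y + f z * dist z y)
    (hbase : ∀ z, w z ≤ f z * D) :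
    ∀ n z, w z ≤ iterT lam f D n z := by
  intro n
  induction n with
  | zero => exact hbase
  | succ n ih =>
    intro z
    refine le_ciInf fun y => ?_
    rw [le_div_iff₀ (denom_pos hlam z y)]
    exact (hsup z y).trans (by have := ih y; linarith)

end basic

section misc
variable {lam D : ℝ} {f : X → ℝ}

lemma exists_small {g : X → ℝ} (h : ⨅ x, g x = 0) {δ : ℝ} (hδ : 0 < δ) : ∃ y, g y < δ :=
  exists_lt_of_ciInf_lt (by rw [h]; exact hδ)

lemma slope_le {w : X → ℝ} {c : ℝ} (hc : 0 ≤ c) {x : X}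
    (hg : gslope w x ≤ ENNReal.ofReal c) {y : X} (hy : y ≠ x) :
    w x - w y ≤ c * dist x y := by
  have hd : 0 < dist x y := dist_pos.mpr (Ne.symm hy)
  have hterm : ENNReal.ofReal ((w x - w y) / dist x y) ≤ gslope w x :=
    le_iSup_of_le y (le_iSup_of_le hy le_rfl)
  have := (ENNReal.ofReal_le_ofReal_iff hc).mp (hterm.trans hg)
  rw [div_le_iff₀ hd] at this
  linarith

lemma eq_ofReal_of_solution {lam : ℝ} {f w : X → ℝ} (hw : IsSolution lam f w) (x : X) :
    0 ≤ f x - lam * w x ∧ gslope w x = ENNReal.ofReal (f x - lam * w x) := by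
  have heq := hw.2.2 x
  have hne : gslope w x ≠ ⊤ := by
    intro htop
    rw [htop] at heq
    simp only [EReal.coe_ennreal_top] at heq
    rw [EReal.coe_add_top] at heq
    exact (EReal.coe_ne_top (f x)) heq.symm
  set t := (gslope w x).toReal with ht
  have ht0 : 0 ≤ t := ENNReal.toReal_nonneg
  have hcoe : ((gslope w x : ℝ≥0∞) : EReal) = (t : EReal) := by
    conv_lhs => rw [← ENNReal.ofReal_toReal hne]
    rw [EReal.coe_ennreal_ofReal, max_eq_left ht0]
  rw [hcoe, ← EReal.coe_add] at heq
  have hre : lam * w x + t = f x := EReal.coe_eq_coe_iff.mp heq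
  have h1 : f x - lam * w x = t := by linarith
  refine ⟨by rw [h1]; exact ht0, ?_⟩
  rw [h1, ht, ENNReal.ofReal_toReal hne]

/-- supersolution inequality for solutions. -/
lemma supersol_of_solution {lam : ℝ} {f w : X → ℝ} (hlam : 0 ≤ lam)
    (hw : IsSolution lam f w) (x y : X) :
    w x * (1 + lam * dist x y) ≤ w y + f x * dist x y := by
  obtain ⟨hc0, hg⟩ := eq_ofReal_of_solution hw x
  rcases eq_or_ne y x with rfl | hne
  · simp
  · have hd : 0 < dist x y := dist_pos.mpr (Ne.symm hne)
    have hterm : ENNReal.ofReal ((w x - w y) / dist x y) ≤ gslope w x := by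
      exact le_iSup_of_le y (le_iSup_of_le hne le_rfl)
    rw [hg] at hterm
    have := (ENNReal.ofReal_le_ofReal_iff hc0).mp hterm
    rw [div_le_iff₀ hd] at this
    nlinarith [this]

lemma sol_nonneg {lam D : ℝ} {f w : X → ℝ} (hlam : 0 ≤ lam)
    (hDle : ∀ p q : X, dist p q ≤ D) (hD0 : 0 < D)
    (hw : IsSolution lam f w) : ∀ x, 0 ≤ w x := by
  have hbdd : BddBelow (Set.range w) := by
    by_contra hnb
    rw [not_bddBelow_iff] at hnb
    obtain ⟨x⟩ := ‹Nonempty X›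
    obtain ⟨hc0, hg⟩ := eq_ofReal_of_solution hw x
    set c := f x - lam * w x
    obtain ⟨_, ⟨y, rfl⟩, hy⟩ := hnb (-(|w x| + c * D + 1))
    have hyx : y ≠ x := by
      intro h; rw [h] at hy
      have : -|w x| ≤ w x := neg_abs_le _
      nlinarith [mul_nonneg hc0 hD0.le]
    have h1 : w x - w y ≤ c * dist x y := slope_le hc0 hg.le hyx
    have h2 : c * dist x y ≤ c * D := mul_le_mul_of_nonneg_left (hDle x y) hc0
    have : -|w x| ≤ w x := neg_abs_le _
    nlinarith
  intro x
  have : ⨅ z, w z ≤ w x := ciInf_le hbdd x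
  rw [hw.2.1] at this
  exact this

lemma sol_le_mul {lam D : ℝ} {f w : X → ℝ} (hlam : 0 ≤ lam)
    (hDle : ∀ p q : X, dist p q ≤ D) (hD0 : 0 < D)
    (hw : IsSolution lam f w) : ∀ x, w x ≤ f x * D := by
  intro x
  obtain ⟨hc0, hg⟩ := eq_ofReal_of_solution hw x
  set c := f x - lam * w x with hc
  have hwx : ∀ z, 0 ≤ w z := sol_nonneg hlam hDle hD0 hw
  have hcf : c ≤ f x := by have := mul_nonneg hlam (hwx x); simp [hc]; linarith
  have key : w x ≤ c * D := by
    refine le_of_forall_pos_le_add fun δ hδ => ?_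
    obtain ⟨y, hy⟩ := exists_small hw.2.1 hδ
    rcases eq_or_ne y x with rfl | hyx
    · nlinarith [mul_nonneg hc0 hD0.le]
    · have h1 := slope_le hc0 hg.le hyx
      have h2 : c * dist x y ≤ c * D := mul_le_mul_of_nonneg_left (hDle x y) hc0
      linarith
  calc w x ≤ c * D := key
    _ ≤ f x * D := mul_le_mul_of_nonneg_right hcf hD0.le

end misc

section winfsec
variable {lam D : ℝ} {f : X → ℝ}
variable (hlam : 0 ≤ lam) (hf : ∀ z, 0 ≤ f z) (hD0 : 0 < D)
  (hDle : ∀ p q : X, dist p q ≤ D) (hinf : ⨅ x, f x = 0)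
include hlam hf hD0

lemma winf_nonneg (x : X) : 0 ≤ winf lam f D x :=
  le_ciInf fun n => iterT_nonneg hlam hf hD0.le n x

lemma winf_le_iterT (n : ℕ) (x : X) : winf lam f D x ≤ iterT lam f D n x :=
  ciInf_le (bddBelow_iterT hlam hf hD0.le x) n

lemma winf_supersol (x y : X) :
    winf lam f D x * (1 + lam * dist x y) ≤ winf lam f D y + f x * dist x y := by
  have key : ∀ n, winf lam f D x * (1 + lam * dist x y) - f x * dist x y ≤ iterT lam f D n y := by
    intro n
    have h1 : winf lam f D x ≤ iterT lam f D (n+1) x := winf_le_iterT hlam hf hD0 (n+1) x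
    have h2 : iterT lam f D (n+1) x ≤ (iterT lam f D n y + f x * dist x y) / (1 + lam * dist x y) :=
      Tmap_le hlam hf (iterT_nonneg hlam hf hD0.le n) x y
    have h3 := h1.trans h2
    rw [le_div_iff₀ (denom_pos hlam x y)] at h3
    linarith
  have := le_ciInf key
  have h4 : (⨅ n, iterT lam f D n y) = winf lam f D y := rfl
  linarith [this.trans_eq h4]

include hDle hinf

lemma winf_small {δ : ℝ} (hδ : 0 < δ) : ∃ y, winf lam f D y < δ := by
  obtain ⟨y, hy⟩ := exists_small hinf (div_pos hδ hD0)
  refine ⟨y, lt_of_le_of_lt (winf_le_iterT hlam hf hD0 0 y) ?_⟩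
  calc f y * D < (δ / D) * D := by
        exact mul_lt_mul_of_pos_right hy hD0
    _ = δ := by field_simp

lemma winf_iInf : ⨅ x, winf lam f D x = 0 := by
  have hb : BddBelow (Set.range (winf lam f D)) :=
    ⟨0, by rintro _ ⟨z, rfl⟩; exact winf_nonneg hlam hf hD0 z⟩
  refine le_antisymm ?_ (le_ciInf fun z => winf_nonneg hlam hf hD0 z)
  by_contra h
  push_neg at h
  obtain ⟨y, hy⟩ := winf_small hlam hf hD0 hDle hinf h
  exact absurd ((ciInf_le hb y).trans_lt hy) (lt_irrefl _)

lemma winf_c_nonneg (x : X) : 0 ≤ f x - lam * winf lam f D x := by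
  set w := winf lam f D
  by_contra h
  push_neg at h
  have hx0 : w x ≤ 0 := by
    refine le_of_forall_pos_le_add fun δ hδ => ?_
    obtain ⟨y, hy⟩ := winf_small hlam hf hD0 hDle hinf hδ
    have hsup := winf_supersol hlam hf hD0 x y
    have hd0 : 0 ≤ dist x y := dist_nonneg
    have hwx : 0 ≤ w x := winf_nonneg hlam hf hD0 x
    -- w x (1 + lam d) ≤ w y + f x d;  f x < lam * w x
    nlinarith [mul_nonneg (mul_nonneg hlam hwx) hd0]
  have hwx : w x = 0 := le_antisymm hx0 (winf_nonneg hlam hf hD0 x)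
  rw [hwx] at h
  simp at h
  exact absurd (hf x) (not_le.mpr h)

end winfsec
section main
variable {lam D : ℝ} {f : X → ℝ}
variable (hlam : 0 ≤ lam) (hf : ∀ z, 0 ≤ f z) (hD0 : 0 < D)
  (hDle : ∀ p q : X, dist p q ≤ D) (hinf : ⨅ x, f x = 0)
include hlam hf hD0

lemma winf_lsc : LowerSemicontinuous (winf lam f D) := by
  intro x t ht
  set w := winf lam f D with hwdef
  have key : ∀ z, w x - f x * dist x z ≤ w z := by
    intro z
    have h1 := winf_supersol hlam hf hD0 x z
    have h2 : 0 ≤ lam * w x * dist x z :=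
      mul_nonneg (mul_nonneg hlam (winf_nonneg hlam hf hD0 x)) dist_nonneg
    nlinarith
  have hfx1 : (0:ℝ) < f x + 1 := by linarith [hf x]
  set ε := (w x - t) / (f x + 1) with hε
  have hε0 : 0 < ε := div_pos (by linarith) hfx1
  refine Metric.eventually_nhds_iff.mpr ⟨ε, hε0, fun z hz => ?_⟩
  have hz' : dist x z < ε := by rw [dist_comm]; exact hz
  have h3 : f x * dist x z ≤ f x * ε := mul_le_mul_of_nonneg_left hz'.le (hf x)
  have h4 : f x * ε < (f x + 1) * ε := by nlinarith
  have h5 : (f x + 1) * ε = w x - t := by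
    rw [hε, mul_div_cancel₀ _ hfx1.ne']
  have := key z
  linarith

include hDle hinf

lemma winf_slope_le (x : X) :
    gslope (winf lam f D) x ≤ ENNReal.ofReal (f x - lam * winf lam f D x) := by
  refine iSup₂_le fun y hy => ?_
  have hd : 0 < dist x y := dist_pos.mpr (Ne.symm hy)
  have hsup := winf_supersol hlam hf hD0 x y
  refine ENNReal.ofReal_le_ofReal ?_
  rw [div_le_iff₀ hd]
  nlinarith

lemma cone_lemma (hflsc : LowerSemicontinuous f) {w : X → ℝ}
    (hw0 : ∀ z, 0 ≤ w z)
    (hsup : ∀ p q, w p * (1 + lam * dist p q) ≤ w q + f p * dist p q)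
    (hsmall : ∀ δ : ℝ, 0 < δ → ∃ y, w y < δ)
    (hwle : ∀ z, w z ≤ f z * D)
    (hmax : ∀ w'' : X → ℝ,
      (∀ p q, w'' p * (1 + lam * dist p q) ≤ w'' q + f p * dist p q) →
      (∀ z, w'' z ≤ f z * D) → ∀ z, w'' z ≤ w z)
    (x : X) :
    ENNReal.ofReal (f x - lam * w x) ≤ gslope w x := by
  have hR0 : 0 ≤ f x - lam * w x := by
    by_contra h
    push_neg at h
    have hx0 : w x ≤ 0 := by
      refine le_of_forall_pos_le_add fun δ hδ => ?_
      obtain ⟨y, hy⟩ := hsmall δ hδ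
      have h1 := hsup x y
      have h2 : 0 ≤ lam * w x * dist x y :=
        mul_nonneg (mul_nonneg hlam (hw0 x)) dist_nonneg
      nlinarith [dist_nonneg (x := x) (y := y), hw0 y]
    have hwx : w x = 0 := le_antisymm hx0 (hw0 x)
    rw [hwx] at h
    simp at h
    exact absurd (hf x) (not_le.mpr h)
  have hlamw0 : 0 ≤ lam * w x := mul_nonneg hlam (hw0 x)
  by_contra hcon
  push_neg at hcon
  have hgne : gslope w x ≠ ⊤ := ne_top_of_lt hcon
  have hgt0 : 0 ≤ (gslope w x).toReal := ENNReal.toReal_nonneg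
  have hgtR : (gslope w x).toReal < f x - lam * w x := by
    have h := (ENNReal.toReal_lt_toReal hgne ENNReal.ofReal_ne_top).mpr hcon
    rwa [ENNReal.toReal_ofReal hR0] at h
  obtain ⟨θ, hθdef, hθ0⟩ : ∃ θ : ℝ, θ = (f x - lam * w x - (gslope w x).toReal)/2 ∧ 0 < θ :=
    ⟨_, rfl, by linarith⟩
  obtain ⟨B, hBdef, hB0, hBR⟩ :
      ∃ B : ℝ, B = f x - lam * w x - θ ∧ 0 ≤ B ∧ (gslope w x).toReal ≤ B :=
    ⟨_, rfl, by rw [hθdef]; linarith, by rw [hθdef]; linarith⟩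
  have hgB : gslope w x ≤ ENNReal.ofReal B := by
    rw [← ENNReal.ofReal_toReal hgne]
    exact ENNReal.ofReal_le_ofReal hBR
  have hstar : ∀ y, w x - w y ≤ B * dist x y := by
    intro y
    rcases eq_or_ne y x with rfl | hy
    · simp
    · exact slope_le hB0 hgB hy
  have hwxBD : w x ≤ B * D := by
    refine le_of_forall_pos_le_add fun δ hδ => ?_
    obtain ⟨y, hy⟩ := hsmall δ hδ
    have h1 := hstar y
    have h2 : B * dist x y ≤ B * D := mul_le_mul_of_nonneg_left (hDle x y) hB0
    linarith
  have hlt : f x - θ/4 < f x := by linarith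
  obtain ⟨r, hr0, hball⟩ := Metric.eventually_nhds_iff.mp (hflsc x _ hlt)
  have hlam1 : (0:ℝ) < lam + 1 := by linarith
  obtain ⟨a, ha0, ha1, ha2, ha3⟩ :
      ∃ a : ℝ, 0 < a ∧ a ≤ θ*r/4 ∧ a ≤ θ*D/2 ∧ a ≤ θ/(4*(lam+1)) := by
    refine ⟨min (θ*r/4) (min (θ*D/2) (θ/(4*(lam+1)))), ?_, min_le_left _ _,
      le_trans (min_le_right _ _) (min_le_left _ _),
      le_trans (min_le_right _ _) (min_le_right _ _)⟩
    exact lt_min (by positivity) (lt_min (by positivity) (by positivity))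
  obtain ⟨b, hbdef, hb0, hbB⟩ : ∃ b : ℝ, b = B + θ/2 ∧ 0 ≤ b ∧ B ≤ b :=
    ⟨_, rfl, by linarith, by linarith⟩
  set ψ : X → ℝ := fun z => w x + a - b * dist x z with hψ
  have hψval : ∀ z, ψ z = w x + a - b * dist x z := fun z => rfl
  clear_value ψ
  have hψub : ∀ z, ψ z ≤ w x + a := by
    intro z
    have : 0 ≤ b * dist x z := mul_nonneg hb0 dist_nonneg
    rw [hψval]; linarith
  have hregion_r : ∀ z, w z < ψ z → dist z x < r := by
    intro z hz
    rw [hψval] at hz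
    have h1 := hstar z
    -- (b - B) * dxz < a, b - B = θ/2
    have h2 : (θ/2) * dist x z < a := by
      have : (b - B) * dist x z < a := by nlinarith
      rw [hbdef] at this
      calc (θ/2) * dist x z = (B + θ/2 - B) * dist x z := by ring_nf
        _ < a := this
    have h3 : dist x z < 2*a/θ := by rw [lt_div_iff₀ hθ0]; nlinarith
    have h4 : 2*a/θ ≤ r/2 := by rw [div_le_iff₀ hθ0]; nlinarith
    rw [dist_comm]; linarith
  have hflow : ∀ z, w z < ψ z → f x - θ/4 < f z := fun z hz => hball (hregion_r z hz)
  have hla : lam * a ≤ θ/4 := by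
    have h4 : lam * a ≤ lam * (θ/(4*(lam+1))) := mul_le_mul_of_nonneg_left ha3 hlam
    have h6 : (lam*θ)/(4*(lam+1)) ≤ θ/4 := by
      rw [div_le_div_iff₀ (by positivity) (by norm_num : (0:ℝ) < 4)]
      nlinarith
    have h5 : lam * (θ/(4*(lam+1))) = (lam*θ)/(4*(lam+1)) := by ring
    linarith [h5 ▸ h4]
  have hψle : ∀ z, w z < ψ z → ψ z ≤ f z * D := by
    intro z hz
    have h1 := hψub z
    have hfz := hflow z hz
    have p1 : B + 3*θ/4 ≤ f x - θ/4 := by rw [hBdef]; linarith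
    have p2 : (B + 3*θ/4)*D ≤ (f x - θ/4)*D := mul_le_mul_of_nonneg_right p1 hD0.le
    have p3 : (f x - θ/4)*D ≤ f z * D := mul_le_mul_of_nonneg_right hfz.le hD0.le
    have p4 : a ≤ 3*θ/4*D := by nlinarith
    linarith
  have hsupers : ∀ z y, (fun q => max (w q) (ψ q)) z * (1 + lam * dist z y)
      ≤ (fun q => max (w q) (ψ q)) y + f z * dist z y := by
    intro z y
    simp only
    rcases le_or_gt (ψ z) (w z) with hc | hc
    · rw [max_eq_left hc]
      have h2 := hsup z y
      have h3 : w y ≤ max (w y) (ψ y) := le_max_left _ _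
      linarith
    · rw [max_eq_right hc.le]
      have hψy : ψ y ≤ max (w y) (ψ y) := le_max_right _ _
      have hdzy : (0:ℝ) ≤ dist z y := dist_nonneg
      have htri : dist x y ≤ dist x z + dist z y := dist_triangle x z y
      have hfz := hflow z hc
      have hψzub := hψub z
      have hlampsi : lam * ψ z ≤ lam * w x + θ/4 := by
        have h7 := mul_le_mul_of_nonneg_left hψzub hlam
        have h8 : lam * (w x + a) = lam * w x + lam * a := by ring
        linarith
      have hkey : b + lam * ψ z ≤ f z := by
        rw [hbdef, hBdef]
        linarith
      have h2 : ψ z - ψ y ≤ b * dist z y := by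
        rw [hψval, hψval]
        have h9 := mul_le_mul_of_nonneg_left htri hb0
        nlinarith
      have h4 : (b + lam * ψ z) * dist z y ≤ f z * dist z y :=
        mul_le_mul_of_nonneg_right hkey hdzy
      nlinarith
  have hbase : ∀ z, (fun q => max (w q) (ψ q)) z ≤ f z * D := by
    intro z
    simp only
    rcases le_or_gt (ψ z) (w z) with hc | hc
    · rw [max_eq_left hc]
      exact hwle z
    · rw [max_eq_right hc.le]
      exact hψle z hc
  have hle := hmax _ hsupers hbase x
  have hwx' : ψ x ≤ max (w x) (ψ x) := le_max_right _ _
  have hψx : ψ x = w x + a := by rw [hψval]; simp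
  linarith [le_max_right (w x) (ψ x), hle]

lemma winf_isSolution (hflsc : LowerSemicontinuous f) : IsSolution lam f (winf lam f D) := by
  refine ⟨winf_lsc hlam hf hD0, winf_iInf hlam hf hD0 hDle hinf, fun x => ?_⟩
  have h1 : gslope (winf lam f D) x = ENNReal.ofReal (f x - lam * winf lam f D x) := by
    refine le_antisymm (winf_slope_le hlam hf hD0 hDle hinf x) ?_
    refine cone_lemma hlam hf hD0 hDle hinf hflsc (winf_nonneg hlam hf hD0)
      (winf_supersol hlam hf hD0) (fun δ hδ => winf_small hlam hf hD0 hDle hinf hδ)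
      (fun z => winf_le_iterT hlam hf hD0 0 z) ?_ x
    intro w'' hsup'' hbase'' z
    exact le_ciInf fun n => le_iterT hlam hf hD0.le hsup'' hbase'' n z
  rw [h1, EReal.coe_ennreal_ofReal,
    max_eq_left (winf_c_nonneg hlam hf hD0 hDle hinf x), ← EReal.coe_add]
  rw [EReal.coe_eq_coe_iff]
  ring

end main
section compare
variable {lam D ρ ε : ℝ} {ℓ k : X → ℝ}
variable (hlam : 0 ≤ lam) (hℓ0 : ∀ z, 0 ≤ ℓ z) (hk0 : ∀ z, 0 ≤ k z)
  (hD0 : 0 < D) (hρ : 0 < ρ) (hε : 0 ≤ ε)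
  (hkl : ∀ y, k y ≤ ℓ y + ε) (hinfk : ⨅ x, k x = 0) (hDle : ∀ p q : X, dist p q ≤ D)
include hlam hℓ0 hk0 hD0 hρ hε hkl hinfk hDle

lemma iter_compare :
    ∀ n x, iterT lam k D n x ≤ (1 + ε/ρ) * iterT lam ℓ D n x + (ρ + ε) * D := by
  have hs0 : 0 ≤ ε/ρ := div_nonneg hε hρ.le
  have hs1 : (0:ℝ) < 1 + ε/ρ := by linarith
  have hC0 : 0 ≤ (ρ + ε) * D := mul_nonneg (by linarith) hD0.le
  have hkey : ∀ x, ρ ≤ ℓ x → k x ≤ (1 + ε/ρ) * ℓ x := by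
    intro x hx
    have h1 : (ε/ρ) * ρ ≤ (ε/ρ) * ℓ x := mul_le_mul_of_nonneg_left hx hs0
    have h2 : (ε/ρ) * ρ = ε := by field_simp
    have := hkl x
    nlinarith
  intro n
  induction n with
  | zero =>
    intro x
    rcases le_or_gt ρ (ℓ x) with hx | hx
    · have h1 : k x * D ≤ ((1 + ε/ρ) * ℓ x) * D :=
        mul_le_mul_of_nonneg_right (hkey x hx) hD0.le
      simp only [iterT]
      nlinarith
    · have h1 : k x * D ≤ (ρ + ε) * D := by
        refine mul_le_mul_of_nonneg_right ?_ hD0.le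
        have := hkl x
        linarith
      simp only [iterT]
      nlinarith [mul_nonneg (mul_nonneg hs1.le (hℓ0 x)) hD0.le]
  | succ n ih =>
    intro x
    have hkn : ∀ z, 0 ≤ iterT lam k D n z := iterT_nonneg hlam hk0 hD0.le n
    have hln : ∀ z, 0 ≤ iterT lam ℓ D n z := iterT_nonneg hlam hℓ0 hD0.le n
    rcases le_or_gt ρ (ℓ x) with hx | hx
    · simp only [iterT]
      have key : ∀ y, (Tmap lam k (iterT lam k D n) x - (ρ+ε)*D) / (1 + ε/ρ) ≤
          (iterT lam ℓ D n y + ℓ x * dist x y) / (1 + lam * dist x y) := by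
        intro y
        have hm : (0:ℝ) < 1 + lam * dist x y := denom_pos hlam x y
        have hm1 : (1:ℝ) ≤ 1 + lam * dist x y := by
          have := mul_nonneg hlam (dist_nonneg (x := x) (y := y)); linarith
        have hd0 : (0:ℝ) ≤ dist x y := dist_nonneg
        have hCm : (ρ+ε)*D ≤ (ρ+ε)*D * (1 + lam*dist x y) := by
          have := mul_le_mul_of_nonneg_left hm1 hC0
          linarith
        have hnum : iterT lam k D n y + k x * dist x y ≤
            (1 + ε/ρ) * (iterT lam ℓ D n y + ℓ x * dist x y)
              + (ρ+ε)*D * (1 + lam*dist x y) := by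
          have h1 := ih y
          have h2 : k x * dist x y ≤ ((1 + ε/ρ) * ℓ x) * dist x y :=
            mul_le_mul_of_nonneg_right (hkey x hx) hd0
          nlinarith
        have hTle := Tmap_le hlam hk0 hkn x y
        have h3 : Tmap lam k (iterT lam k D n) x * (1 + lam * dist x y) ≤
            iterT lam k D n y + k x * dist x y := (le_div_iff₀ hm).mp hTle
        rw [div_le_div_iff₀ hs1 hm]
        nlinarith
      have h4 := le_ciInf key
      rw [div_le_iff₀ hs1] at h4
      have h5 : (⨅ y, (iterT lam ℓ D n y + ℓ x * dist x y) / (1 + lam * dist x y))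
          = Tmap lam ℓ (iterT lam ℓ D n) x := rfl
      rw [h5] at h4
      linarith
    · -- small ℓ x case
      have hTl : 0 ≤ Tmap lam ℓ (iterT lam ℓ D n) x := Tmap_nonneg hlam hℓ0 hln x
      have hTk : Tmap lam k (iterT lam k D n) x ≤ (ρ + ε) * D := by
        refine le_of_forall_pos_le_add fun δ hδ => ?_
        obtain ⟨y, hy⟩ := exists_small hinfk (div_pos hδ hD0)
        have hm : (0:ℝ) < 1 + lam * dist x y := denom_pos hlam x y
        have hm1 : (1:ℝ) ≤ 1 + lam * dist x y := by
          have := mul_nonneg hlam (dist_nonneg (x := x) (y := y)); linarith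
        have h1 : Tmap lam k (iterT lam k D n) x ≤
            (iterT lam k D n y + k x * dist x y) / (1 + lam * dist x y) :=
          Tmap_le hlam hk0 hkn x y
        have h2 : (iterT lam k D n y + k x * dist x y) / (1 + lam * dist x y) ≤
            iterT lam k D n y + k x * dist x y := by
          refine div_le_self ?_ hm1
          exact add_nonneg (hkn y) (mul_nonneg (hk0 x) dist_nonneg)
        have h3 : iterT lam k D n y ≤ k y * D := iterT_le_base hlam hk0 hD0.le n y
        have h4 : k y * D < (δ/D) * D := mul_lt_mul_of_pos_right hy hD0
        have h5 : (δ/D) * D = δ := by field_simp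
        have h6 : k x * dist x y ≤ k x * D := mul_le_mul_of_nonneg_left (hDle x y) (hk0 x)
        have h7 : k x * D ≤ (ρ + ε) * D := by
          refine mul_le_mul_of_nonneg_right ?_ hD0.le
          have := hkl x; linarith
        linarith
      have : (0:ℝ) ≤ (1 + ε/ρ) * Tmap lam ℓ (iterT lam ℓ D n) x :=
        mul_nonneg hs1.le hTl
      simp only [iterT]
      linarith

end compare

end PerronAux

/-- Stability estimate: if `u`, `v` are the Perron solutions of `λ w + G[w] = ℓ` and
`λ w + G[w] = k` on a bounded metric space, then for every `ρ > 0` and `x`,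
`v x - u x ≤ (ρ + ‖k - ℓ‖_∞) diam X + ‖k - ℓ‖_∞ · u x / ρ`. -/
theorem perron_stability_estimate {X : Type*} [MetricSpace X] [Nonempty X]
    (hX : Bornology.IsBounded (Set.univ : Set X))
    (lam : ℝ) (hlam : 0 ≤ lam)
    (ℓ k : X → ℝ) (hℓ : LowerSemicontinuous ℓ) (hk : LowerSemicontinuous k)
    (hℓ0 : ∀ x, 0 ≤ ℓ x) (hk0 : ∀ x, 0 ≤ k x)
    (hinfℓ : ⨅ x, ℓ x = 0) (hinfk : ⨅ x, k x = 0)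
    (u v : X → ℝ)
    (hu : IsPerronSolution lam ℓ u) (hv : IsPerronSolution lam k v) :
    ∀ ρ : ℝ, 0 < ρ → ∀ x,
      ENNReal.ofReal (v x - u x) ≤
        (ENNReal.ofReal ρ + ⨆ y, ENNReal.ofReal |k y - ℓ y|) *
            ENNReal.ofReal (Metric.diam (Set.univ : Set X)) +
          (⨆ y, ENNReal.ofReal |k y - ℓ y|) * ENNReal.ofReal (u x) / ENNReal.ofReal ρ := by
  intro ρ hρ x
  by_cases hsub : ∀ a b : X, a = b
  · -- degenerate case: X is a subsingleton, u x = v x = 0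
    have huv : ∀ (w f : X → ℝ), IsSolution lam f w → w x = 0 := by
      intro w f hw
      have h1 : (fun y : X => w y) = fun _ : X => w x := funext fun y => by rw [hsub y x]
      have h2 : ⨅ y : X, w y = w x := by rw [h1]; exact ciInf_const
      rw [← h2, hw.2.1]
    have hux : u x = 0 := huv u ℓ hu.1
    have hvx : v x = 0 := huv v k hv.1
    have : v x - u x = 0 := by rw [hux, hvx]; ring
    simp [this]
  · push_neg at hsub
    obtain ⟨p, q, hpq⟩ := hsub
    set D := Metric.diam (Set.univ : Set X) with hD
    have hDle : ∀ a b : X, dist a b ≤ D :=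
      fun a b => Metric.dist_le_diam_of_mem hX trivial trivial
    have hD0 : 0 < D := lt_of_lt_of_le (dist_pos.mpr hpq) (hDle p q)
    set Esup := ⨆ y, ENNReal.ofReal |k y - ℓ y| with hEsup
    by_cases hE : Esup = ⊤
    · rw [hE]
      have h1 : ENNReal.ofReal ρ + (⊤:ℝ≥0∞) = ⊤ := add_top _
      have h2 : (⊤:ℝ≥0∞) * ENNReal.ofReal D = ⊤ :=
        ENNReal.top_mul (ENNReal.ofReal_pos.mpr hD0).ne'
      rw [h1, h2, top_add]
      exact le_top
    · set ε := Esup.toReal with hεdef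
      have hεoR : ENNReal.ofReal ε = Esup := ENNReal.ofReal_toReal hE
      have hε0 : 0 ≤ ε := ENNReal.toReal_nonneg
      have habs : ∀ y, |k y - ℓ y| ≤ ε := by
        intro y
        have h1 : ENNReal.ofReal |k y - ℓ y| ≤ Esup :=
          le_iSup (fun y => ENNReal.ofReal |k y - ℓ y|) y
        rw [← hεoR] at h1
        exact (ENNReal.ofReal_le_ofReal_iff hε0).mp h1
      have hkl : ∀ y, k y ≤ ℓ y + ε := fun y => by
        have := abs_le.mp (habs y); linarith [this.1, this.2]
      have hs0 : 0 ≤ ε/ρ := div_nonneg hε0 hρ.le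
      have hs1 : (0:ℝ) < 1 + ε/ρ := by linarith
      -- the main real comparison
      have hvsup : ∀ a b : X, v a * (1 + lam * dist a b) ≤ v b + k a * dist a b :=
        PerronAux.supersol_of_solution hlam hv.1
      have hvle : ∀ z, v z ≤ k z * D := PerronAux.sol_le_mul hlam hDle hD0 hv.1
      have hvn : ∀ n z, v z ≤ PerronAux.iterT lam k D n z :=
        PerronAux.le_iterT hlam hk0 hD0.le hvsup hvle
      have hcomp := PerronAux.iter_compare hlam hℓ0 hk0 hD0 hρ hε0 hkl hinfk hDle
      have hwu : ∀ z, PerronAux.winf lam ℓ D z ≤ u z :=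
        hu.2 _ (PerronAux.winf_isSolution hlam hℓ0 hD0 hDle hinfℓ hℓ)
      have hux0 : 0 ≤ u x := PerronAux.sol_nonneg hlam hDle hD0 hu.1 x
      have key : v x ≤ (1 + ε/ρ) * u x + (ρ + ε) * D := by
        have h2 : ∀ n, (v x - (ρ+ε)*D)/(1 + ε/ρ) ≤ PerronAux.iterT lam ℓ D n x := by
          intro n
          rw [div_le_iff₀ hs1]
          have h1 := (hvn n x).trans (hcomp n x)
          linarith
        have h3 : (v x - (ρ+ε)*D)/(1 + ε/ρ) ≤ PerronAux.winf lam ℓ D x := le_ciInf h2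
        rw [div_le_iff₀ hs1] at h3
        have h4 : PerronAux.winf lam ℓ D x * (1 + ε/ρ) ≤ u x * (1 + ε/ρ) :=
          mul_le_mul_of_nonneg_right (hwu x) hs1.le
        nlinarith
      have hsub2 : v x - u x ≤ (ε/ρ) * u x + (ρ + ε) * D := by nlinarith
      calc ENNReal.ofReal (v x - u x)
          ≤ ENNReal.ofReal ((ε/ρ) * u x + (ρ + ε) * D) := ENNReal.ofReal_le_ofReal hsub2
        _ = ENNReal.ofReal ((ρ + ε) * D) + ENNReal.ofReal ((ε/ρ) * u x) := by
            rw [ENNReal.ofReal_add (mul_nonneg hs0 hux0)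
              (mul_nonneg (by linarith) hD0.le), add_comm]
        _ = (ENNReal.ofReal ρ + Esup) * ENNReal.ofReal D
              + Esup * ENNReal.ofReal (u x) / ENNReal.ofReal ρ := by
            rw [ENNReal.ofReal_mul (by linarith : (0:ℝ) ≤ ρ + ε),
              ENNReal.ofReal_add hρ.le hε0, hεoR]
            congr 1
            have h5 : (ε/ρ) * u x = ε * u x / ρ := by ring
            rw [h5, ENNReal.ofReal_div_of_pos hρ, ENNReal.ofReal_mul hε0, hεoR]
end
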